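/- arXiv:2306.16432 — 11 statements merged into one kernel-verified Lean document; each statement's English description precedes it below -/
import Mathlib

section
/- Contraction estimate for the integral operator P (Lemma A.1, estimate (A.2)): For every T > 0 and every pair of continuous maps n, m : [0,T] → L¹(R) × L¹(V) with n(0) = m(0), the operator P defined by P[n](t) := n(0) + ∫_0^t F[n](s) ds satisfies sup_{t ∈ [0,T]} ‖P[n](t) - P[m](t)‖_A ≤ 2T [max(θ_R, θ_V) + θ_X (‖n‖_B + ‖m‖_B)] ‖n - m‖_B, where ‖(u,w)‖_A := ‖u‖_{L¹(R)} + ‖w‖_{L¹(V)} and ‖n‖_B := sup_{t ∈ [0,T]} ‖n(t)‖_A. -/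
open MeasureTheory Set Filter

open Function
open scoped ENNReal NNReal

set_option linter.unusedSectionVars false

section Helpers
variable {X Y : Type*} [MeasurableSpace X] [MeasurableSpace Y]

lemma PC.integrable_of_integral_eq_one {μ : Measure X} {g : X → ℝ} (h : ∫ x, g x ∂μ = 1) :
    Integrable g μ := by
  by_contra hc
  rw [integral_undef hc] at h
  norm_num at h

lemma PC.kernel_prod_integrable (μ : Measure X) (ν : Measure Y) [SFinite μ] [SFinite ν]
    (K : X → Y → ℝ) (f : Y → ℝ)
    (hKm : Measurable (Function.uncurry K)) (hK0 : ∀ x y, 0 ≤ K x y)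
    (hfm : Measurable f) (hf : Integrable f ν)
    (hKint : ∀ᵐ y ∂ν, Integrable (fun x => K x y) μ)
    (hK1 : ∀ᵐ y ∂ν, ∫ x, K x y ∂μ ≤ 1) :
    Integrable (fun p : X × Y => K p.1 p.2 * f p.2) (μ.prod ν) := by
  have hm : Measurable fun p : X × Y => K p.1 p.2 * f p.2 :=
    hKm.mul (hfm.comp measurable_snd)
  refine ⟨hm.aestronglyMeasurable, ?_⟩
  have hrw : ∀ p : X × Y, (‖K p.1 p.2 * f p.2‖₊ : ℝ≥0∞)
      = ENNReal.ofReal (K p.1 p.2 * |f p.2|) := by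
    intro p
    rw [← enorm_eq_nnnorm, ← ofReal_norm, Real.norm_eq_abs, abs_mul, abs_of_nonneg (hK0 _ _)]
  unfold HasFiniteIntegral
  calc ∫⁻ p, (‖K p.1 p.2 * f p.2‖₊ : ℝ≥0∞) ∂μ.prod ν
      = ∫⁻ p, ENNReal.ofReal (K p.1 p.2 * |f p.2|) ∂μ.prod ν := by
        exact lintegral_congr hrw
    _ = ∫⁻ y, ∫⁻ x, ENNReal.ofReal (K x y * |f y|) ∂μ ∂ν := by
        exact lintegral_prod_symm _ ((hKm.mul ((hfm.comp measurable_snd).abs)).ennreal_ofReal).aemeasurable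
    _ ≤ ∫⁻ y, ENNReal.ofReal |f y| ∂ν := by
        refine lintegral_mono_ae ?_
        filter_upwards [hKint, hK1] with y hyint hy1
        calc ∫⁻ x, ENNReal.ofReal (K x y * |f y|) ∂μ
            = ∫⁻ x, ENNReal.ofReal |f y| * ENNReal.ofReal (K x y) ∂μ := by
              refine lintegral_congr fun x => ?_
              rw [← ENNReal.ofReal_mul (abs_nonneg _), mul_comm]
          _ = ENNReal.ofReal |f y| * ∫⁻ x, ENNReal.ofReal (K x y) ∂μ := by
              exact lintegral_const_mul _ (hKm.of_uncurry_right).ennreal_ofReal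
          _ = ENNReal.ofReal |f y| * ENNReal.ofReal (∫ x, K x y ∂μ) := by
              rw [← ofReal_integral_eq_lintegral_ofReal hyint
                (Eventually.of_forall fun x => hK0 x y)]
          _ ≤ ENNReal.ofReal |f y| * 1 := by
              exact mul_le_mul_right (by simpa using ENNReal.ofReal_le_ofReal hy1) _
          _ = ENNReal.ofReal |f y| := mul_one _
    _ < ⊤ := by
        have := hf.2
        unfold HasFiniteIntegral at this
        simpa [← ofReal_norm, Real.norm_eq_abs] using this


lemma PC.kernel_op_integrable {μ : Measure X} {ν : Measure Y} [SFinite μ] [SFinite ν] {K : X → Y → ℝ} {f : Y → ℝ}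
    (hKm : Measurable (Function.uncurry K)) (hK0 : ∀ x y, 0 ≤ K x y)
    (hfm : Measurable f) (hf : Integrable f ν)
    (hKint : ∀ᵐ y ∂ν, Integrable (fun x => K x y) μ)
    (hK1 : ∀ᵐ y ∂ν, ∫ x, K x y ∂μ ≤ 1) :
    Integrable (fun x => ∫ y, K x y * f y ∂ν) μ :=
  (PC.kernel_prod_integrable μ ν K f hKm hK0 hfm hf hKint hK1).integral_prod_left

lemma PC.kernel_op_bound {μ : Measure X} {ν : Measure Y} [SFinite μ] [SFinite ν] {K : X → Y → ℝ} {f : Y → ℝ}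
    (hKm : Measurable (Function.uncurry K)) (hK0 : ∀ x y, 0 ≤ K x y)
    (hfm : Measurable f) (hf : Integrable f ν)
    (hKint : ∀ᵐ y ∂ν, Integrable (fun x => K x y) μ)
    (hK1 : ∀ᵐ y ∂ν, ∫ x, K x y ∂μ ≤ 1) :
    ∫ x, |∫ y, K x y * f y ∂ν| ∂μ ≤ ∫ y, |f y| ∂ν := by
  have hGint : Integrable (fun p : X × Y => K p.1 p.2 * |f p.2|) (μ.prod ν) :=
    PC.kernel_prod_integrable μ ν K (fun y => |f y|) hKm hK0 hfm.abs hf.abs hKint hK1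
  have hH : Integrable (fun x => ∫ y, K x y * |f y| ∂ν) μ := hGint.integral_prod_left
  have step1 : ∫ x, |∫ y, K x y * f y ∂ν| ∂μ ≤ ∫ x, ∫ y, K x y * |f y| ∂ν ∂μ := by
    refine integral_mono_of_nonneg (Eventually.of_forall fun x => abs_nonneg _) hH
      (Eventually.of_forall fun x => ?_)
    calc |∫ y, K x y * f y ∂ν| ≤ ∫ y, |K x y| * |f y| ∂ν := by
          simpa [Real.norm_eq_abs, abs_mul] using norm_integral_le_integral_norm (fun y => K x y * f y) (μ := ν)
      _ = ∫ y, K x y * |f y| ∂ν := by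
          refine integral_congr_ae (Eventually.of_forall fun y => ?_)
          simp only [abs_of_nonneg (hK0 x y)]
  have step2 : ∫ x, ∫ y, K x y * |f y| ∂ν ∂μ = ∫ y, ∫ x, K x y * |f y| ∂μ ∂ν :=
    integral_integral_swap hGint
  have step3 : ∫ y, ∫ x, K x y * |f y| ∂μ ∂ν ≤ ∫ y, |f y| ∂ν := by
    refine integral_mono_of_nonneg (Eventually.of_forall fun y => ?_) hf.abs ?_
    · exact integral_nonneg fun x => mul_nonneg (hK0 x y) (abs_nonneg _)
    · filter_upwards [hKint, hK1] with y hyint hy1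
      calc ∫ x, K x y * |f y| ∂μ = (∫ x, K x y ∂μ) * |f y| := integral_mul_const _ _
        _ ≤ 1 * |f y| := by
            exact mul_le_mul_of_nonneg_right hy1 (abs_nonneg _)
        _ = |f y| := one_mul _
  linarith [step1, step2.le, step3, step2.ge]

end Helpers

/-- inner integral bound: `|∫ v, qe r v * b v ∂ν| ≤ ∫ v, |b v| ∂ν`. -/
lemma PC.inner_bound {ν : Measure ℝ} {qe : ℝ → ℝ → ℝ} {b : ℝ → ℝ}
    (hqe0 : ∀ r v, 0 ≤ qe r v) (hqe1 : ∀ r v, qe r v ≤ 1)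
    (hb : Integrable b ν) (r : ℝ) :
    |∫ v, qe r v * b v ∂ν| ≤ ∫ v, |b v| ∂ν := by
  calc |∫ v, qe r v * b v ∂ν| ≤ ∫ v, |qe r v * b v| ∂ν := by
        refine le_trans (by simpa [Real.norm_eq_abs] using
          norm_integral_le_integral_norm (fun v => qe r v * b v) (μ := ν)) ?_
        refine le_of_eq (integral_congr_ae (Eventually.of_forall fun v => ?_))
        simp [Real.norm_eq_abs, abs_mul]
    _ ≤ ∫ v, |b v| ∂ν := by
        refine integral_mono_of_nonneg (Eventually.of_forall fun v => abs_nonneg _) hb.abs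
          (Eventually.of_forall fun v => ?_)
        simp only [abs_mul]
        exact mul_le_of_le_one_left (abs_nonneg _) (by rw [abs_of_nonneg (hqe0 r v)]; exact hqe1 r v)

lemma PC.T1 {μ ν : Measure ℝ} [SFinite ν] {qe : ℝ → ℝ → ℝ} {a b : ℝ → ℝ}
    (hqem : Measurable (Function.uncurry qe))
    (hqe0 : ∀ r v, 0 ≤ qe r v) (hqe1 : ∀ r v, qe r v ≤ 1)
    (ham : Measurable a) (ha : Integrable a μ)
    (hbm : Measurable b) (hb : Integrable b ν) :
    Integrable (fun r => a r * ∫ v, qe r v * b v ∂ν) μ ∧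
      ∫ r, |a r * ∫ v, qe r v * b v ∂ν| ∂μ ≤ (∫ r, |a r| ∂μ) * ∫ v, |b v| ∂ν := by
  have hinnm : StronglyMeasurable (fun r => ∫ v, qe r v * b v ∂ν) := by
    exact (hqem.mul (hbm.comp measurable_snd)).stronglyMeasurable.integral_prod_right'
  have hbd := PC.inner_bound (ν := ν) hqe0 hqe1 hb
  have hint : Integrable (fun r => a r * ∫ v, qe r v * b v ∂ν) μ := by
    refine Integrable.mono' (ha.abs.mul_const (∫ v, |b v| ∂ν))
      (ham.aestronglyMeasurable.mul hinnm.aestronglyMeasurable)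
      (Eventually.of_forall fun r => ?_)
    rw [Real.norm_eq_abs, abs_mul]
    exact mul_le_mul_of_nonneg_left (hbd r) (abs_nonneg _)
  refine ⟨hint, ?_⟩
  calc ∫ r, |a r * ∫ v, qe r v * b v ∂ν| ∂μ
      ≤ ∫ r, |a r| * ∫ v, |b v| ∂ν ∂μ := by
        refine integral_mono_of_nonneg (Eventually.of_forall fun r => abs_nonneg _)
          (ha.abs.mul_const _) (Eventually.of_forall fun r => ?_)
        simp only [abs_mul]
        exact mul_le_mul_of_nonneg_left (hbd r) (abs_nonneg _)
    _ = (∫ r, |a r| ∂μ) * ∫ v, |b v| ∂ν := integral_mul_const _ _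

lemma PC.contL1 {T a b : ℝ} (f : ℝ → ℝ → ℝ)
    (hint : ∀ t ∈ Icc (0:ℝ) T, IntegrableOn (f t) (Icc a b))
    (hcont : ∀ t₀ ∈ Icc (0:ℝ) T,
      Tendsto (fun t => ∫ x in Icc a b, |f t x - f t₀ x|) (nhdsWithin t₀ (Icc 0 T)) (nhds 0)) :
    ContinuousOn (fun t => ∫ x in Icc a b, |f t x|) (Icc 0 T) := by
  intro t₀ ht₀
  have h1 : Tendsto (fun t => (∫ x in Icc a b, |f t x|) - ∫ x in Icc a b, |f t₀ x|)
      (nhdsWithin t₀ (Icc 0 T)) (nhds 0) := by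
    refine squeeze_zero_norm' ?_ (hcont t₀ ht₀)
    filter_upwards [self_mem_nhdsWithin] with t ht
    have hi1 : IntegrableOn (fun x => |f t x|) (Icc a b) := (hint t ht).abs
    have hi2 : IntegrableOn (fun x => |f t₀ x|) (Icc a b) := (hint t₀ ht₀).abs
    rw [Real.norm_eq_abs, ← integral_sub hi1 hi2]
    calc |∫ x in Icc a b, (|f t x| - |f t₀ x|)|
        ≤ ∫ x in Icc a b, ‖(|f t x| - |f t₀ x|)‖ := by
          simpa [Real.norm_eq_abs] using
            norm_integral_le_integral_norm (fun x => |f t x| - |f t₀ x|)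
              (μ := volume.restrict (Icc a b))
      _ ≤ ∫ x in Icc a b, |f t x - f t₀ x| := by
          refine integral_mono_of_nonneg (Eventually.of_forall fun x => norm_nonneg _)
            ((hint t ht).sub (hint t₀ ht₀)).abs (Eventually.of_forall fun x => ?_)
          simpa [Real.norm_eq_abs] using abs_abs_sub_abs_le_abs_sub (f t x) (f t₀ x)
  have h2 := h1.add (tendsto_const_nhds (x := ∫ x in Icc a b, |f t₀ x|))
  simp only [zero_add] at h2
  unfold ContinuousWithinAt
  convert h2 using 2 with t
  ring

lemma PC.abs3 (x y z : ℝ) : |x + y - z| ≤ |x| + |y| + |z| := by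
  calc |x + y - z| ≤ |x + y| + |z| := abs_sub _ _
    _ ≤ |x| + |y| + |z| := by have := abs_add_le x y; linarith

lemma PC.abs4 (w x y z : ℝ) : |w + x + y + z| ≤ |w| + |x| + |y| + |z| := by
  have h1 := abs_add_le (w + x + y) z
  have h2 := abs_add_le (w + x) y
  have h3 := abs_add_le w x
  linarith

lemma PC.prodInt {μ ν : Measure ℝ} [SFinite μ] [SFinite ν] [IsFiniteMeasure ν]
    {F : ℝ → ℝ → ℝ} {C : ℝ}
    (hFm : Measurable fun p : ℝ × ℝ => F p.2 p.1)
    (hslice : ∀ᵐ s ∂ν, Integrable (F s) μ ∧ ∫ x, |F s x| ∂μ ≤ C) :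
    Integrable (fun p : ℝ × ℝ => F p.2 p.1) (μ.prod ν) := by
  refine ⟨hFm.aestronglyMeasurable, ?_⟩
  unfold HasFiniteIntegral
  rw [lintegral_prod_symm _ (hFm.enorm).aemeasurable]
  calc ∫⁻ s, ∫⁻ x, (‖F s x‖₊ : ℝ≥0∞) ∂μ ∂ν ≤ ∫⁻ s, ENNReal.ofReal C ∂ν := by
        refine lintegral_mono_ae ?_
        filter_upwards [hslice] with s hs
        have h1 : ∫⁻ x, (‖F s x‖₊ : ℝ≥0∞) ∂μ = ENNReal.ofReal (∫ x, |F s x| ∂μ) := by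
          rw [ofReal_integral_eq_lintegral_ofReal hs.1.abs
            (Eventually.of_forall fun x => abs_nonneg _)]
          exact lintegral_congr fun x => by
            rw [← enorm_eq_nnnorm, ← ofReal_norm, Real.norm_eq_abs]
        rw [h1]
        exact ENNReal.ofReal_le_ofReal hs.2
    _ = ENNReal.ofReal C * ν univ := by rw [lintegral_const]
    _ < ⊤ := ENNReal.mul_lt_top ENNReal.ofReal_lt_top (measure_lt_top _ _)

lemma PC.timeSwap {μ ν : Measure ℝ} [SFinite μ] [SFinite ν]
    {F : ℝ → ℝ → ℝ}
    (hprod : Integrable (fun p : ℝ × ℝ => F p.2 p.1) (μ.prod ν)) :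
    Integrable (fun s => ∫ x, |F s x| ∂μ) ν ∧
    Integrable (fun x => ∫ s, |F s x| ∂ν) μ ∧
    ∫ x, (∫ s, |F s x| ∂ν) ∂μ = ∫ s, (∫ x, |F s x| ∂μ) ∂ν := by
  have habs : Integrable (fun p : ℝ × ℝ => |F p.2 p.1|) (μ.prod ν) := hprod.abs
  refine ⟨?_, ?_, ?_⟩
  · have := hprod.integral_norm_prod_right
    simpa [Real.norm_eq_abs] using this
  · have := hprod.integral_norm_prod_left
    simpa [Real.norm_eq_abs] using this
  · exact integral_integral_swap habs
lemma PC.FS_est {μR μV : Measure ℝ} [IsFiniteMeasure μR] [IsFiniteMeasure μV]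
    {θX θR : ℝ} (hθX : 0 < θX) (hθR : 0 < θR)
    {qe KS : ℝ → ℝ → ℝ}
    (hqem : Measurable (Function.uncurry qe)) (hqe0 : ∀ r v, 0 ≤ qe r v)
    (hqe1 : ∀ r v, qe r v ≤ 1)
    (hKSm : Measurable (Function.uncurry KS)) (hKS0 : ∀ r r', 0 ≤ KS r r')
    (hKSaeInt : ∀ᵐ r' ∂μR, Integrable (fun r => KS r r') μR)
    (hKSae1 : ∀ᵐ r' ∂μR, ∫ r, KS r r' ∂μR ≤ 1)
    {a c : ℝ → ℝ} (ham : Measurable a) (ha : Integrable a μR)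
    (hcm : Measurable c) (hc : Integrable c μV) :
    Integrable (fun r => -(θX * (a r * ∫ v, qe r v * c v ∂μV))
        + θR * (∫ r', KS r r' * a r' ∂μR) - θR * a r) μR ∧
    ∫ r, |(-(θX * (a r * ∫ v, qe r v * c v ∂μV))
        + θR * (∫ r', KS r r' * a r' ∂μR) - θR * a r)| ∂μR
      ≤ θX * ((∫ r, |a r| ∂μR) * ∫ v, |c v| ∂μV) + 2 * θR * ∫ r, |a r| ∂μR := by
  obtain ⟨h1, h1b⟩ := PC.T1 (μ := μR) (ν := μV) hqem hqe0 hqe1 ham ha hcm hc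
  have h2 : Integrable (fun r => ∫ r', KS r r' * a r' ∂μR) μR :=
    PC.kernel_op_integrable hKSm hKS0 ham ha hKSaeInt hKSae1
  have h2b := PC.kernel_op_bound hKSm hKS0 ham ha hKSaeInt hKSae1
  refine ⟨((h1.const_mul θX).neg.add (h2.const_mul θR)).sub (ha.const_mul θR), ?_⟩
  have hmaj : Integrable (fun r => θX * |a r * ∫ v, qe r v * c v ∂μV|
      + θR * |∫ r', KS r r' * a r' ∂μR| + θR * |a r|) μR :=
    ((h1.abs.const_mul θX).add (h2.abs.const_mul θR)).add (ha.abs.const_mul θR)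
  calc ∫ r, |(-(θX * (a r * ∫ v, qe r v * c v ∂μV))
        + θR * (∫ r', KS r r' * a r' ∂μR) - θR * a r)| ∂μR
      ≤ ∫ r, (θX * |a r * ∫ v, qe r v * c v ∂μV|
          + θR * |∫ r', KS r r' * a r' ∂μR| + θR * |a r|) ∂μR := by
        refine integral_mono_of_nonneg (Eventually.of_forall fun r => abs_nonneg _) hmaj
          (Eventually.of_forall fun r => ?_)
        have h3 := PC.abs3 (-(θX * (a r * ∫ v, qe r v * c v ∂μV)))
          (θR * (∫ r', KS r r' * a r' ∂μR)) (θR * a r)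
        rw [abs_neg, abs_mul θX (a r * ∫ v, qe r v * c v ∂μV),
          abs_mul θR (∫ r', KS r r' * a r' ∂μR), abs_mul θR (a r),
          abs_of_pos hθX, abs_of_pos hθR] at h3
        exact h3
    _ = θX * ∫ r, |a r * ∫ v, qe r v * c v ∂μV| ∂μR
        + θR * ∫ r, |∫ r', KS r r' * a r' ∂μR| ∂μR + θR * ∫ r, |a r| ∂μR := by
        rw [integral_add (f := fun r => θX * |a r * ∫ v, qe r v * c v ∂μV|
              + θR * |∫ r', KS r r' * a r' ∂μR|) (g := fun r => θR * |a r|)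
            ((h1.abs.const_mul θX).add (h2.abs.const_mul θR)) (ha.abs.const_mul θR),
          integral_add (f := fun r => θX * |a r * ∫ v, qe r v * c v ∂μV|)
            (g := fun r => θR * |∫ r', KS r r' * a r' ∂μR|)
            (h1.abs.const_mul θX) (h2.abs.const_mul θR),
          integral_const_mul, integral_const_mul, integral_const_mul]
    _ ≤ _ := by
        have e1 := mul_le_mul_of_nonneg_left h1b hθX.le
        have e2 := mul_le_mul_of_nonneg_left h2b hθR.le
        linarith
lemma PC.FS_diff_est {μR μV : Measure ℝ} [IsFiniteMeasure μR] [IsFiniteMeasure μV]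
    {θX θR : ℝ} (hθX : 0 < θX) (hθR : 0 < θR)
    {qe KS : ℝ → ℝ → ℝ}
    (hqem : Measurable (Function.uncurry qe)) (hqe0 : ∀ r v, 0 ≤ qe r v)
    (hqe1 : ∀ r v, qe r v ≤ 1)
    (hKSm : Measurable (Function.uncurry KS)) (hKS0 : ∀ r r', 0 ≤ KS r r')
    (hKSaeInt : ∀ᵐ r' ∂μR, Integrable (fun r => KS r r') μR)
    (hKSae1 : ∀ᵐ r' ∂μR, ∫ r, KS r r' ∂μR ≤ 1)
    {a a' c c' : ℝ → ℝ}
    (ham : Measurable a) (ha : Integrable a μR)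
    (ham' : Measurable a') (ha' : Integrable a' μR)
    (hcm : Measurable c) (hc : Integrable c μV)
    (hcm' : Measurable c') (hc' : Integrable c' μV) :
    Integrable (fun r => (-(θX * (a r * ∫ v, qe r v * c v ∂μV))
        + θR * (∫ r', KS r r' * a r' ∂μR) - θR * a r)
      - (-(θX * (a' r * ∫ v, qe r v * c' v ∂μV))
        + θR * (∫ r', KS r r' * a' r' ∂μR) - θR * a' r)) μR ∧
    ∫ r, |(-(θX * (a r * ∫ v, qe r v * c v ∂μV))
        + θR * (∫ r', KS r r' * a r' ∂μR) - θR * a r)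
      - (-(θX * (a' r * ∫ v, qe r v * c' v ∂μV))
        + θR * (∫ r', KS r r' * a' r' ∂μR) - θR * a' r)| ∂μR
      ≤ θX * ((∫ r, |a r - a' r| ∂μR) * ∫ v, |c v| ∂μV)
        + θX * ((∫ r, |a' r| ∂μR) * ∫ v, |c v - c' v| ∂μV)
        + 2 * θR * ∫ r, |a r - a' r| ∂μR := by
  have hKa : ∀ᵐ r ∂μR, Integrable (fun r' => KS r r' * a r') μR :=
    (PC.kernel_prod_integrable μR μR KS a hKSm hKS0 ham ha hKSaeInt hKSae1).prod_right_ae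
  have hKa' : ∀ᵐ r ∂μR, Integrable (fun r' => KS r r' * a' r') μR :=
    (PC.kernel_prod_integrable μR μR KS a' hKSm hKS0 ham' ha' hKSaeInt hKSae1).prod_right_ae
  have hsplit : ∀ᵐ r ∂μR,
      (-(θX * (a r * ∫ v, qe r v * c v ∂μV))
        + θR * (∫ r', KS r r' * a r' ∂μR) - θR * a r)
      - (-(θX * (a' r * ∫ v, qe r v * c' v ∂μV))
        + θR * (∫ r', KS r r' * a' r' ∂μR) - θR * a' r)
      = -(θX * ((a r - a' r) * ∫ v, qe r v * c v ∂μV))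
        + -(θX * (a' r * ∫ v, qe r v * (c v - c' v) ∂μV))
        + θR * (∫ r', KS r r' * (a r' - a' r') ∂μR)
        + -(θR * (a r - a' r)) := by
    filter_upwards [hKa, hKa'] with r h1 h2
    have hqc1 : Integrable (fun v => qe r v * c v) μV := by
      refine hc.bdd_mul (hqem.of_uncurry_left).aestronglyMeasurable (c := 1) (Eventually.of_forall fun v => ?_)
      rw [Real.norm_eq_abs, abs_of_nonneg (hqe0 r v)]
      exact hqe1 r v
    have hqc2 : Integrable (fun v => qe r v * c' v) μV := by
      refine hc'.bdd_mul (hqem.of_uncurry_left).aestronglyMeasurable (c := 1) (Eventually.of_forall fun v => ?_)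
      rw [Real.norm_eq_abs, abs_of_nonneg (hqe0 r v)]
      exact hqe1 r v
    have e1 : ∫ v, qe r v * (c v - c' v) ∂μV
        = (∫ v, qe r v * c v ∂μV) - ∫ v, qe r v * c' v ∂μV := by
      rw [← integral_sub hqc1 hqc2]
      exact integral_congr_ae (Eventually.of_forall fun v => by ring)
    have e3 : ∫ r', KS r r' * (a r' - a' r') ∂μR
        = (∫ r', KS r r' * a r' ∂μR) - ∫ r', KS r r' * a' r' ∂μR := by
      rw [← integral_sub h1 h2]
      exact integral_congr_ae (Eventually.of_forall fun r' => by ring)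
    rw [e1, e3]
    ring
  obtain ⟨hE1, hE1b⟩ := PC.T1 (μ := μR) (ν := μV) hqem hqe0 hqe1 (ham.sub ham')
    (ha.sub ha') hcm hc
  obtain ⟨hE2, hE2b⟩ := PC.T1 (μ := μR) (ν := μV) hqem hqe0 hqe1 ham' ha'
    (hcm.sub hcm') (hc.sub hc')
  have hE3 : Integrable (fun r => ∫ r', KS r r' * (a r' - a' r') ∂μR) μR :=
    PC.kernel_op_integrable hKSm hKS0 (ham.sub ham') (ha.sub ha') hKSaeInt hKSae1
  have hE3b := PC.kernel_op_bound hKSm hKS0 (ham.sub ham') (ha.sub ha') hKSaeInt hKSae1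
  have hsum : Integrable (fun r => -(θX * ((a r - a' r) * ∫ v, qe r v * c v ∂μV))
        + -(θX * (a' r * ∫ v, qe r v * (c v - c' v) ∂μV))
        + θR * (∫ r', KS r r' * (a r' - a' r') ∂μR)
        + -(θR * (a r - a' r))) μR :=
    (((hE1.const_mul θX).neg.add (hE2.const_mul θX).neg).add (hE3.const_mul θR)).add
      ((ha.sub ha').const_mul θR).neg
  constructor
  · exact hsum.congr (hsplit.mono fun r h => h.symm)
  calc ∫ r, |(-(θX * (a r * ∫ v, qe r v * c v ∂μV))
        + θR * (∫ r', KS r r' * a r' ∂μR) - θR * a r)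
      - (-(θX * (a' r * ∫ v, qe r v * c' v ∂μV))
        + θR * (∫ r', KS r r' * a' r' ∂μR) - θR * a' r)| ∂μR
      = ∫ r, |(-(θX * ((a r - a' r) * ∫ v, qe r v * c v ∂μV))
        + -(θX * (a' r * ∫ v, qe r v * (c v - c' v) ∂μV))
        + θR * (∫ r', KS r r' * (a r' - a' r') ∂μR)
        + -(θR * (a r - a' r)))| ∂μR := by
        refine integral_congr_ae (hsplit.mono fun r h => ?_)
        dsimp only
        rw [h]
    _ ≤ ∫ r, (θX * |(a r - a' r) * ∫ v, qe r v * c v ∂μV|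
        + θX * |a' r * ∫ v, qe r v * (c v - c' v) ∂μV|
        + θR * |∫ r', KS r r' * (a r' - a' r') ∂μR|
        + θR * |a r - a' r|) ∂μR := by
        refine integral_mono_of_nonneg (Eventually.of_forall fun r => abs_nonneg _)
          ((((hE1.abs.const_mul θX).add (hE2.abs.const_mul θX)).add
            (hE3.abs.const_mul θR)).add ((ha.sub ha').abs.const_mul θR))
          (Eventually.of_forall fun r => ?_)
        have h4 := PC.abs4 (-(θX * ((a r - a' r) * ∫ v, qe r v * c v ∂μV)))
          (-(θX * (a' r * ∫ v, qe r v * (c v - c' v) ∂μV)))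
          (θR * (∫ r', KS r r' * (a r' - a' r') ∂μR))
          (-(θR * (a r - a' r)))
        rw [abs_neg, abs_neg, abs_neg,
          abs_mul θX ((a r - a' r) * ∫ v, qe r v * c v ∂μV),
          abs_mul θX (a' r * ∫ v, qe r v * (c v - c' v) ∂μV),
          abs_mul θR (∫ r', KS r r' * (a r' - a' r') ∂μR),
          abs_mul θR (a r - a' r), abs_of_pos hθX, abs_of_pos hθR] at h4
        exact h4
    _ = θX * ∫ r, |(a r - a' r) * ∫ v, qe r v * c v ∂μV| ∂μR
        + θX * ∫ r, |a' r * ∫ v, qe r v * (c v - c' v) ∂μV| ∂μR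
        + θR * ∫ r, |∫ r', KS r r' * (a r' - a' r') ∂μR| ∂μR
        + θR * ∫ r, |a r - a' r| ∂μR := by
        rw [integral_add (f := fun r => θX * |(a r - a' r) * ∫ v, qe r v * c v ∂μV|
              + θX * |a' r * ∫ v, qe r v * (c v - c' v) ∂μV|
              + θR * |∫ r', KS r r' * (a r' - a' r') ∂μR|)
            (g := fun r => θR * |a r - a' r|)
            (((hE1.abs.const_mul θX).add (hE2.abs.const_mul θX)).add
              (hE3.abs.const_mul θR)) ((ha.sub ha').abs.const_mul θR),
          integral_add (f := fun r => θX * |(a r - a' r) * ∫ v, qe r v * c v ∂μV|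
              + θX * |a' r * ∫ v, qe r v * (c v - c' v) ∂μV|)
            (g := fun r => θR * |∫ r', KS r r' * (a r' - a' r') ∂μR|)
            ((hE1.abs.const_mul θX).add (hE2.abs.const_mul θX)) (hE3.abs.const_mul θR),
          integral_add (f := fun r => θX * |(a r - a' r) * ∫ v, qe r v * c v ∂μV|)
            (g := fun r => θX * |a' r * ∫ v, qe r v * (c v - c' v) ∂μV|)
            (hE1.abs.const_mul θX) (hE2.abs.const_mul θX),
          integral_const_mul, integral_const_mul, integral_const_mul, integral_const_mul]
    _ ≤ _ := by
        have e1 := mul_le_mul_of_nonneg_left hE1b hθX.le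
        have e2 := mul_le_mul_of_nonneg_left hE2b hθX.le
        have e3 := mul_le_mul_of_nonneg_left hE3b hθR.le
        simp only [Pi.sub_apply] at e1 e2 e3
        linarith
lemma PC.FI_est {μR μV : Measure ℝ} [IsFiniteMeasure μR] [IsFiniteMeasure μV]
    {θX θV : ℝ} (hθX : 0 < θX) (hθV : 0 < θV)
    {KQ : ℝ → ℝ × ℝ → ℝ} {KI : ℝ → ℝ → ℝ}
    (hKQm : Measurable (Function.uncurry KQ)) (hKQ0 : ∀ v y, 0 ≤ KQ v y)
    (hKQint : ∀ᵐ y ∂(μR.prod μV), Integrable (fun v => KQ v y) μV)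
    (hKQ1 : ∀ᵐ y ∂(μR.prod μV), ∫ v, KQ v y ∂μV ≤ 1)
    (hKIm : Measurable (Function.uncurry KI)) (hKI0 : ∀ v v', 0 ≤ KI v v')
    (hKIaeInt : ∀ᵐ v' ∂μV, Integrable (fun v => KI v v') μV)
    (hKIae1 : ∀ᵐ v' ∂μV, ∫ v, KI v v' ∂μV ≤ 1)
    {a c : ℝ → ℝ} (ham : Measurable a) (ha : Integrable a μR)
    (hcm : Measurable c) (hc : Integrable c μV) :
    Integrable (fun v => θX * (∫ r, (∫ v', KQ v (r, v') * (a r * c v') ∂μV) ∂μR)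
        + θV * (∫ v', KI v v' * c v' ∂μV) - θV * c v) μV ∧
    ∫ v, |(θX * (∫ r, (∫ v', KQ v (r, v') * (a r * c v') ∂μV) ∂μR)
        + θV * (∫ v', KI v v' * c v' ∂μV) - θV * c v)| ∂μV
      ≤ θX * ((∫ r, |a r| ∂μR) * ∫ v, |c v| ∂μV) + 2 * θV * ∫ v, |c v| ∂μV := by
  have hgm : Measurable (fun y : ℝ × ℝ => a y.1 * c y.2) :=
    (ham.comp measurable_fst).mul (hcm.comp measurable_snd)
  have hgi : Integrable (fun y : ℝ × ℝ => a y.1 * c y.2) (μR.prod μV) := ha.mul_prod hc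
  have hcent := PC.kernel_prod_integrable μV (μR.prod μV) KQ (fun y => a y.1 * c y.2)
    hKQm hKQ0 hgm hgi hKQint hKQ1
  have hae : ∀ᵐ v ∂μV, Integrable (fun y : ℝ × ℝ => KQ v y * (a y.1 * c y.2)) (μR.prod μV) :=
    hcent.prod_right_ae
  have hiter : ∀ᵐ v ∂μV, (∫ r, (∫ v', KQ v (r, v') * (a r * c v') ∂μV) ∂μR)
      = ∫ y, KQ v y * (a y.1 * c y.2) ∂(μR.prod μV) :=
    hae.mono fun v hv => integral_integral hv
  have hop : Integrable (fun v => ∫ y, KQ v y * (a y.1 * c y.2) ∂(μR.prod μV)) μV :=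
    hcent.integral_prod_left
  have hopb := PC.kernel_op_bound hKQm hKQ0 hgm hgi hKQint hKQ1
  have hKIop : Integrable (fun v => ∫ v', KI v v' * c v' ∂μV) μV :=
    PC.kernel_op_integrable hKIm hKI0 hcm hc hKIaeInt hKIae1
  have hKIopb := PC.kernel_op_bound hKIm hKI0 hcm hc hKIaeInt hKIae1
  have hgabs : ∫ y, |a y.1 * c y.2| ∂(μR.prod μV) = (∫ r, |a r| ∂μR) * ∫ v, |c v| ∂μV := by
    rw [← integral_prod_mul]
    exact integral_congr_ae (Eventually.of_forall fun y => abs_mul _ _)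
  have hcongr : ∀ᵐ v ∂μV,
      θX * (∫ y, KQ v y * (a y.1 * c y.2) ∂(μR.prod μV))
        + θV * (∫ v', KI v v' * c v' ∂μV) - θV * c v
      = θX * (∫ r, (∫ v', KQ v (r, v') * (a r * c v') ∂μV) ∂μR)
        + θV * (∫ v', KI v v' * c v' ∂μV) - θV * c v := by
    filter_upwards [hiter] with v hv
    rw [hv]
  refine ⟨(((hop.const_mul θX).add (hKIop.const_mul θV)).sub (hc.const_mul θV)).congr
    hcongr, ?_⟩
  calc ∫ v, |(θX * (∫ r, (∫ v', KQ v (r, v') * (a r * c v') ∂μV) ∂μR)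
        + θV * (∫ v', KI v v' * c v' ∂μV) - θV * c v)| ∂μV
      = ∫ v, |(θX * (∫ y, KQ v y * (a y.1 * c y.2) ∂(μR.prod μV))
        + θV * (∫ v', KI v v' * c v' ∂μV) - θV * c v)| ∂μV := by
        refine integral_congr_ae (hcongr.mono fun v hv => ?_)
        dsimp only
        rw [hv]
    _ ≤ ∫ v, (θX * |∫ y, KQ v y * (a y.1 * c y.2) ∂(μR.prod μV)|
        + θV * |∫ v', KI v v' * c v' ∂μV| + θV * |c v|) ∂μV := by
        refine integral_mono_of_nonneg (Eventually.of_forall fun v => abs_nonneg _)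
          (((hop.abs.const_mul θX).add (hKIop.abs.const_mul θV)).add
            (hc.abs.const_mul θV)) (Eventually.of_forall fun v => ?_)
        have h3 := PC.abs3 (θX * (∫ y, KQ v y * (a y.1 * c y.2) ∂(μR.prod μV)))
          (θV * (∫ v', KI v v' * c v' ∂μV)) (θV * c v)
        rw [abs_mul θX (∫ y, KQ v y * (a y.1 * c y.2) ∂(μR.prod μV)),
          abs_mul θV (∫ v', KI v v' * c v' ∂μV), abs_mul θV (c v),
          abs_of_pos hθX, abs_of_pos hθV] at h3
        exact h3
    _ = θX * ∫ v, |∫ y, KQ v y * (a y.1 * c y.2) ∂(μR.prod μV)| ∂μV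
        + θV * ∫ v, |∫ v', KI v v' * c v' ∂μV| ∂μV + θV * ∫ v, |c v| ∂μV := by
        rw [integral_add (f := fun v => θX * |∫ y, KQ v y * (a y.1 * c y.2) ∂(μR.prod μV)|
              + θV * |∫ v', KI v v' * c v' ∂μV|) (g := fun v => θV * |c v|)
            ((hop.abs.const_mul θX).add (hKIop.abs.const_mul θV)) (hc.abs.const_mul θV),
          integral_add (f := fun v => θX * |∫ y, KQ v y * (a y.1 * c y.2) ∂(μR.prod μV)|)
            (g := fun v => θV * |∫ v', KI v v' * c v' ∂μV|)
            (hop.abs.const_mul θX) (hKIop.abs.const_mul θV),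
          integral_const_mul, integral_const_mul, integral_const_mul]
    _ ≤ _ := by
        have e1 : ∫ v, |∫ y, KQ v y * (a y.1 * c y.2) ∂(μR.prod μV)| ∂μV
            ≤ (∫ r, |a r| ∂μR) * ∫ v, |c v| ∂μV := by rw [← hgabs]; exact hopb
        have e2 := mul_le_mul_of_nonneg_left e1 hθX.le
        have e3 := mul_le_mul_of_nonneg_left hKIopb hθV.le
        linarith
lemma PC.FI_diff_est {μR μV : Measure ℝ} [IsFiniteMeasure μR] [IsFiniteMeasure μV]
    {θX θV : ℝ} (hθX : 0 < θX) (hθV : 0 < θV)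
    {KQ : ℝ → ℝ × ℝ → ℝ} {KI : ℝ → ℝ → ℝ}
    (hKQm : Measurable (Function.uncurry KQ)) (hKQ0 : ∀ v y, 0 ≤ KQ v y)
    (hKQint : ∀ᵐ y ∂(μR.prod μV), Integrable (fun v => KQ v y) μV)
    (hKQ1 : ∀ᵐ y ∂(μR.prod μV), ∫ v, KQ v y ∂μV ≤ 1)
    (hKIm : Measurable (Function.uncurry KI)) (hKI0 : ∀ v v', 0 ≤ KI v v')
    (hKIaeInt : ∀ᵐ v' ∂μV, Integrable (fun v => KI v v') μV)
    (hKIae1 : ∀ᵐ v' ∂μV, ∫ v, KI v v' ∂μV ≤ 1)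
    {a a' c c' : ℝ → ℝ}
    (ham : Measurable a) (ha : Integrable a μR)
    (ham' : Measurable a') (ha' : Integrable a' μR)
    (hcm : Measurable c) (hc : Integrable c μV)
    (hcm' : Measurable c') (hc' : Integrable c' μV) :
    Integrable (fun v => (θX * (∫ r, (∫ v', KQ v (r, v') * (a r * c v') ∂μV) ∂μR)
        + θV * (∫ v', KI v v' * c v' ∂μV) - θV * c v)
      - (θX * (∫ r, (∫ v', KQ v (r, v') * (a' r * c' v') ∂μV) ∂μR)
        + θV * (∫ v', KI v v' * c' v' ∂μV) - θV * c' v)) μV ∧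
    ∫ v, |(θX * (∫ r, (∫ v', KQ v (r, v') * (a r * c v') ∂μV) ∂μR)
        + θV * (∫ v', KI v v' * c v' ∂μV) - θV * c v)
      - (θX * (∫ r, (∫ v', KQ v (r, v') * (a' r * c' v') ∂μV) ∂μR)
        + θV * (∫ v', KI v v' * c' v' ∂μV) - θV * c' v)| ∂μV
      ≤ θX * ((∫ r, |a r - a' r| ∂μR) * ∫ v, |c v| ∂μV)
        + θX * ((∫ r, |a' r| ∂μR) * ∫ v, |c v - c' v| ∂μV)
        + 2 * θV * ∫ v, |c v - c' v| ∂μV := by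
  have hgm : Measurable (fun y : ℝ × ℝ => a y.1 * c y.2) :=
    (ham.comp measurable_fst).mul (hcm.comp measurable_snd)
  have hgm' : Measurable (fun y : ℝ × ℝ => a' y.1 * c' y.2) :=
    (ham'.comp measurable_fst).mul (hcm'.comp measurable_snd)
  have hgi : Integrable (fun y : ℝ × ℝ => a y.1 * c y.2) (μR.prod μV) := ha.mul_prod hc
  have hgi' : Integrable (fun y : ℝ × ℝ => a' y.1 * c' y.2) (μR.prod μV) := ha'.mul_prod hc'
  have hgdm : Measurable (fun y : ℝ × ℝ => a y.1 * c y.2 - a' y.1 * c' y.2) := hgm.sub hgm'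
  have hgdi : Integrable (fun y : ℝ × ℝ => a y.1 * c y.2 - a' y.1 * c' y.2) (μR.prod μV) :=
    hgi.sub hgi'
  have hcent := PC.kernel_prod_integrable μV (μR.prod μV) KQ (fun y => a y.1 * c y.2)
    hKQm hKQ0 hgm hgi hKQint hKQ1
  have hcent' := PC.kernel_prod_integrable μV (μR.prod μV) KQ (fun y => a' y.1 * c' y.2)
    hKQm hKQ0 hgm' hgi' hKQint hKQ1
  have hiter : ∀ᵐ v ∂μV, (∫ r, (∫ v', KQ v (r, v') * (a r * c v') ∂μV) ∂μR)
      = ∫ y, KQ v y * (a y.1 * c y.2) ∂(μR.prod μV) :=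
    hcent.prod_right_ae.mono fun v hv => integral_integral hv
  have hiter' : ∀ᵐ v ∂μV, (∫ r, (∫ v', KQ v (r, v') * (a' r * c' v') ∂μV) ∂μR)
      = ∫ y, KQ v y * (a' y.1 * c' y.2) ∂(μR.prod μV) :=
    hcent'.prod_right_ae.mono fun v hv => integral_integral hv
  have hKIc : ∀ᵐ v ∂μV, Integrable (fun v' => KI v v' * c v') μV :=
    (PC.kernel_prod_integrable μV μV KI c hKIm hKI0 hcm hc hKIaeInt hKIae1).prod_right_ae
  have hKIc' : ∀ᵐ v ∂μV, Integrable (fun v' => KI v v' * c' v') μV :=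
    (PC.kernel_prod_integrable μV μV KI c' hKIm hKI0 hcm' hc' hKIaeInt hKIae1).prod_right_ae
  have hop : Integrable
      (fun v => ∫ y, KQ v y * (a y.1 * c y.2 - a' y.1 * c' y.2) ∂(μR.prod μV)) μV :=
    PC.kernel_op_integrable hKQm hKQ0 hgdm hgdi hKQint hKQ1
  have hopb := PC.kernel_op_bound hKQm hKQ0 hgdm hgdi hKQint hKQ1
  have hKIop : Integrable (fun v => ∫ v', KI v v' * (c v' - c' v') ∂μV) μV :=
    PC.kernel_op_integrable hKIm hKI0 (hcm.sub hcm') (hc.sub hc') hKIaeInt hKIae1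
  have hKIopb := PC.kernel_op_bound hKIm hKI0 (hcm.sub hcm') (hc.sub hc') hKIaeInt hKIae1
  have hsplit : ∀ᵐ v ∂μV,
      (θX * (∫ r, (∫ v', KQ v (r, v') * (a r * c v') ∂μV) ∂μR)
        + θV * (∫ v', KI v v' * c v' ∂μV) - θV * c v)
      - (θX * (∫ r, (∫ v', KQ v (r, v') * (a' r * c' v') ∂μV) ∂μR)
        + θV * (∫ v', KI v v' * c' v' ∂μV) - θV * c' v)
      = θX * (∫ y, KQ v y * (a y.1 * c y.2 - a' y.1 * c' y.2) ∂(μR.prod μV))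
        + θV * (∫ v', KI v v' * (c v' - c' v') ∂μV)
        + -(θV * (c v - c' v)) := by
    filter_upwards [hiter, hiter', hcent.prod_right_ae, hcent'.prod_right_ae, hKIc, hKIc']
      with v h1 h2 h3 h4 h5 h6
    have eKQ : ∫ y, KQ v y * (a y.1 * c y.2 - a' y.1 * c' y.2) ∂(μR.prod μV)
        = (∫ y, KQ v y * (a y.1 * c y.2) ∂(μR.prod μV))
          - ∫ y, KQ v y * (a' y.1 * c' y.2) ∂(μR.prod μV) := by
      rw [← integral_sub h3 h4]
      exact integral_congr_ae (Eventually.of_forall fun y => by ring)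
    have eKI : ∫ v', KI v v' * (c v' - c' v') ∂μV
        = (∫ v', KI v v' * c v' ∂μV) - ∫ v', KI v v' * c' v' ∂μV := by
      rw [← integral_sub h5 h6]
      exact integral_congr_ae (Eventually.of_forall fun v' => by ring)
    rw [h1, h2, eKQ, eKI]
    ring
  have hsum : Integrable (fun v =>
      θX * (∫ y, KQ v y * (a y.1 * c y.2 - a' y.1 * c' y.2) ∂(μR.prod μV))
        + θV * (∫ v', KI v v' * (c v' - c' v') ∂μV)
        + -(θV * (c v - c' v))) μV :=
    ((hop.const_mul θX).add (hKIop.const_mul θV)).add ((hc.sub hc').const_mul θV).neg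
  constructor
  · exact hsum.congr (hsplit.mono fun v hv => hv.symm)
  have hgdbd : ∫ y, |a y.1 * c y.2 - a' y.1 * c' y.2| ∂(μR.prod μV)
      ≤ (∫ r, |a r - a' r| ∂μR) * (∫ v, |c v| ∂μV)
        + (∫ r, |a' r| ∂μR) * ∫ v, |c v - c' v| ∂μV := by
    have hi1 : Integrable (fun y : ℝ × ℝ => |a y.1 - a' y.1| * |c y.2|) (μR.prod μV) :=
      (ha.sub ha').abs.mul_prod hc.abs
    have hi2 : Integrable (fun y : ℝ × ℝ => |a' y.1| * |c y.2 - c' y.2|) (μR.prod μV) :=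
      ha'.abs.mul_prod (hc.sub hc').abs
    have hmaj : Integrable (fun y : ℝ × ℝ => |a y.1 - a' y.1| * |c y.2|
        + |a' y.1| * |c y.2 - c' y.2|) (μR.prod μV) := hi1.add hi2
    calc ∫ y, |a y.1 * c y.2 - a' y.1 * c' y.2| ∂(μR.prod μV)
        ≤ ∫ y, (|a y.1 - a' y.1| * |c y.2| + |a' y.1| * |c y.2 - c' y.2|) ∂(μR.prod μV) := by
          refine integral_mono_of_nonneg (Eventually.of_forall fun y => abs_nonneg _) hmaj
            (Eventually.of_forall fun y => ?_)
          have heq : a y.1 * c y.2 - a' y.1 * c' y.2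
              = (a y.1 - a' y.1) * c y.2 + a' y.1 * (c y.2 - c' y.2) := by ring
          dsimp only
          rw [heq]
          refine (abs_add_le _ _).trans ?_
          rw [abs_mul, abs_mul]
      _ = (∫ r, |a r - a' r| ∂μR) * (∫ v, |c v| ∂μV)
          + (∫ r, |a' r| ∂μR) * ∫ v, |c v - c' v| ∂μV := by
          rw [integral_add hi1 hi2,
            integral_prod_mul (f := fun r => |a r - a' r|) (g := fun v => |c v|),
            integral_prod_mul (f := fun r => |a' r|) (g := fun v => |c v - c' v|)]
  calc ∫ v, |(θX * (∫ r, (∫ v', KQ v (r, v') * (a r * c v') ∂μV) ∂μR)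
        + θV * (∫ v', KI v v' * c v' ∂μV) - θV * c v)
      - (θX * (∫ r, (∫ v', KQ v (r, v') * (a' r * c' v') ∂μV) ∂μR)
        + θV * (∫ v', KI v v' * c' v' ∂μV) - θV * c' v)| ∂μV
      = ∫ v, |(θX * (∫ y, KQ v y * (a y.1 * c y.2 - a' y.1 * c' y.2) ∂(μR.prod μV))
        + θV * (∫ v', KI v v' * (c v' - c' v') ∂μV)
        + -(θV * (c v - c' v)))| ∂μV := by
        refine integral_congr_ae (hsplit.mono fun v hv => ?_)
        dsimp only
        rw [hv]
    _ ≤ ∫ v, (θX * |∫ y, KQ v y * (a y.1 * c y.2 - a' y.1 * c' y.2) ∂(μR.prod μV)|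
        + θV * |∫ v', KI v v' * (c v' - c' v') ∂μV| + θV * |c v - c' v|) ∂μV := by
        refine integral_mono_of_nonneg (Eventually.of_forall fun v => abs_nonneg _)
          (((hop.abs.const_mul θX).add (hKIop.abs.const_mul θV)).add
            ((hc.sub hc').abs.const_mul θV)) (Eventually.of_forall fun v => ?_)
        have h4 := abs_add_le (θX * (∫ y, KQ v y * (a y.1 * c y.2 - a' y.1 * c' y.2) ∂(μR.prod μV)))
          (θV * (∫ v', KI v v' * (c v' - c' v') ∂μV))
        have h5 := abs_add_le (θX * (∫ y, KQ v y * (a y.1 * c y.2 - a' y.1 * c' y.2) ∂(μR.prod μV))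
            + θV * (∫ v', KI v v' * (c v' - c' v') ∂μV)) (-(θV * (c v - c' v)))
        rw [abs_neg] at h5
        rw [abs_mul θX (∫ y, KQ v y * (a y.1 * c y.2 - a' y.1 * c' y.2) ∂(μR.prod μV)),
          abs_mul θV (∫ v', KI v v' * (c v' - c' v') ∂μV),
          abs_of_pos hθX, abs_of_pos hθV] at h4
        rw [abs_mul θV (c v - c' v), abs_of_pos hθV] at h5
        dsimp only
        exact h5.trans (by linarith)
    _ = θX * ∫ v, |∫ y, KQ v y * (a y.1 * c y.2 - a' y.1 * c' y.2) ∂(μR.prod μV)| ∂μV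
        + θV * ∫ v, |∫ v', KI v v' * (c v' - c' v') ∂μV| ∂μV
        + θV * ∫ v, |c v - c' v| ∂μV := by
        rw [integral_add (f := fun v =>
              θX * |∫ y, KQ v y * (a y.1 * c y.2 - a' y.1 * c' y.2) ∂(μR.prod μV)|
              + θV * |∫ v', KI v v' * (c v' - c' v') ∂μV|) (g := fun v => θV * |c v - c' v|)
            ((hop.abs.const_mul θX).add (hKIop.abs.const_mul θV))
            ((hc.sub hc').abs.const_mul θV),
          integral_add (f := fun v =>
              θX * |∫ y, KQ v y * (a y.1 * c y.2 - a' y.1 * c' y.2) ∂(μR.prod μV)|)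
            (g := fun v => θV * |∫ v', KI v v' * (c v' - c' v') ∂μV|)
            (hop.abs.const_mul θX) (hKIop.abs.const_mul θV),
          integral_const_mul, integral_const_mul, integral_const_mul]
    _ ≤ _ := by
        have e1 := mul_le_mul_of_nonneg_left (hopb.trans hgdbd) hθX.le
        have e2 := mul_le_mul_of_nonneg_left hKIopb hθV.le
        simp only [Pi.sub_apply] at e2
        linarith

lemma PC.m2 {α : Type*} [MeasurableSpace α] {f : ℝ → ℝ → ℝ}
    (hf : Measurable (Function.uncurry f)) {g h : α → ℝ}
    (hg : Measurable g) (hh : Measurable h) : Measurable fun x => f (g x) (h x) :=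
  hf.comp (hg.prodMk hh)

lemma PC.m3 {α : Type*} [MeasurableSpace α] {f : ℝ → ℝ → ℝ → ℝ}
    (hf : Measurable fun p : ℝ × ℝ × ℝ => f p.1 p.2.1 p.2.2) {g h k : α → ℝ}
    (hg : Measurable g) (hh : Measurable h) (hk : Measurable k) :
    Measurable fun x => f (g x) (h x) (k x) :=
  hf.comp (hg.prodMk (hh.prodMk hk))


/-- Right-hand side of the IDE for `n_S`; `KS r r'` stands for `K_S(r | r')`. -/
noncomputable def mesoFS (rA rB vA vB θX θR : ℝ) (KS : ℝ → ℝ → ℝ) (q : ℝ → ℝ → ℝ)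
    (nS nI : ℝ → ℝ → ℝ) (t r : ℝ) : ℝ :=
  -(θX * nS t r * ∫ v in Icc vA vB, q r v * nI t v)
    + θR * (∫ r' in Icc rA rB, KS r r' * nS t r') - θR * nS t r

/-- Right-hand side of the IDE for `n_I`; `KI v v'` stands for `K_I(v | v')` and
`Q v r vs` stands for `Q(v | r, v*)`. -/
noncomputable def mesoFI (rA rB vA vB θX θV : ℝ) (KI : ℝ → ℝ → ℝ)
    (Q : ℝ → ℝ → ℝ → ℝ) (q : ℝ → ℝ → ℝ) (nS nI : ℝ → ℝ → ℝ) (t v : ℝ) : ℝ :=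
  θX * (∫ r in Icc rA rB, ∫ v' in Icc vA vB, q r v' * Q v r v' * nS t r * nI t v')
    + θV * (∫ v' in Icc vA vB, KI v v' * nI t v') - θV * nI t v

/-- `S`-component of the integral operator `P[n](t) = n(0) + ∫₀ᵗ F[n](s) ds`. -/
noncomputable def mesoPS (rA rB vA vB θX θR : ℝ) (KS : ℝ → ℝ → ℝ) (q : ℝ → ℝ → ℝ)
    (nS nI : ℝ → ℝ → ℝ) (t r : ℝ) : ℝ :=
  nS 0 r + ∫ s in (0:ℝ)..t, mesoFS rA rB vA vB θX θR KS q nS nI s r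

/-- `I`-component of the integral operator `P[n](t) = n(0) + ∫₀ᵗ F[n](s) ds`. -/
noncomputable def mesoPI (rA rB vA vB θX θV : ℝ) (KI : ℝ → ℝ → ℝ)
    (Q : ℝ → ℝ → ℝ → ℝ) (q : ℝ → ℝ → ℝ) (nS nI : ℝ → ℝ → ℝ) (t v : ℝ) : ℝ :=
  nI 0 v + ∫ s in (0:ℝ)..t, mesoFI rA rB vA vB θX θV KI Q q nS nI s v

/-- The `A`-norm `‖(u,w)‖_A = ‖u‖_{L¹(R)} + ‖w‖_{L¹(V)}`. -/
noncomputable def normA (rA rB vA vB : ℝ) (u w : ℝ → ℝ) : ℝ :=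
  (∫ r in Icc rA rB, |u r|) + ∫ v in Icc vA vB, |w v|

/-- The `B`-norm `‖n‖_B = sup_{t ∈ [0,T]} ‖n(t)‖_A`. -/
noncomputable def normB (rA rB vA vB T : ℝ) (nS nI : ℝ → ℝ → ℝ) : ℝ :=
  sSup ((fun t => normA rA rB vA vB (nS t) (nI t)) '' Icc 0 T)

set_option maxHeartbeats 4000000 in
/-- **Lemma A.1, estimate (A.2)**: contraction estimate for the integral operator `P`:
for `n, m` with `n(0) = m(0)`,
`sup_{t ∈ [0,T]} ‖P[n](t) - P[m](t)‖_A ≤ 2T (max(θ_R,θ_V) + θ_X (‖n‖_B + ‖m‖_B)) ‖n - m‖_B`. -/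
theorem P_contraction_bound
    (rA rB vA vB θX θR θV : ℝ)
    (hrA : 0 ≤ rA) (hrAB : rA ≤ rB) (hvA : 0 ≤ vA) (hvAB : vA ≤ vB)
    (hθX : 0 < θX) (hθR : 0 < θR) (hθV : 0 < θV)
    (KS KI : ℝ → ℝ → ℝ) (Q : ℝ → ℝ → ℝ → ℝ) (q : ℝ → ℝ → ℝ)
    (hKSm : Measurable (Function.uncurry KS)) (hKS0 : ∀ r r', 0 ≤ KS r r')
    (hKS1 : ∀ r' ∈ Icc rA rB, ∫ r in Icc rA rB, KS r r' = 1)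
    (hKIm : Measurable (Function.uncurry KI)) (hKI0 : ∀ v v', 0 ≤ KI v v')
    (hKI1 : ∀ v' ∈ Icc vA vB, ∫ v in Icc vA vB, KI v v' = 1)
    (hQm : Measurable fun p : ℝ × ℝ × ℝ => Q p.1 p.2.1 p.2.2)
    (hQ0 : ∀ v r vs, 0 ≤ Q v r vs)
    (hQ1 : ∀ r ∈ Icc rA rB, ∀ vs ∈ Icc vA vB, ∫ v in Icc vA vB, Q v r vs = 1)
    (hqc : ContinuousOn (Function.uncurry q) (Icc rA rB ×ˢ Icc vA vB))
    (hq01 : ∀ r ∈ Icc rA rB, ∀ v ∈ Icc vA vB, q r v ∈ Icc (0:ℝ) 1)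
    (T : ℝ) (hT : 0 < T)
    (nS nI : ℝ → ℝ → ℝ)
    (hSmeas : Measurable (Function.uncurry nS))
    (hImeas : Measurable (Function.uncurry nI))
    (hSint : ∀ t ∈ Icc (0:ℝ) T, IntegrableOn (nS t) (Icc rA rB))
    (hIint : ∀ t ∈ Icc (0:ℝ) T, IntegrableOn (nI t) (Icc vA vB))
    (hScont : ∀ t₀ ∈ Icc (0:ℝ) T,
      Tendsto (fun t => ∫ r in Icc rA rB, |nS t r - nS t₀ r|)
        (nhdsWithin t₀ (Icc 0 T)) (nhds 0))
    (hIcont : ∀ t₀ ∈ Icc (0:ℝ) T,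
      Tendsto (fun t => ∫ v in Icc vA vB, |nI t v - nI t₀ v|)
        (nhdsWithin t₀ (Icc 0 T)) (nhds 0))
    (mS mI : ℝ → ℝ → ℝ)
    (hSmeas' : Measurable (Function.uncurry mS))
    (hImeas' : Measurable (Function.uncurry mI))
    (hSint' : ∀ t ∈ Icc (0:ℝ) T, IntegrableOn (mS t) (Icc rA rB))
    (hIint' : ∀ t ∈ Icc (0:ℝ) T, IntegrableOn (mI t) (Icc vA vB))
    (hScont' : ∀ t₀ ∈ Icc (0:ℝ) T,
      Tendsto (fun t => ∫ r in Icc rA rB, |mS t r - mS t₀ r|)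
        (nhdsWithin t₀ (Icc 0 T)) (nhds 0))
    (hIcont' : ∀ t₀ ∈ Icc (0:ℝ) T,
      Tendsto (fun t => ∫ v in Icc vA vB, |mI t v - mI t₀ v|)
        (nhdsWithin t₀ (Icc 0 T)) (nhds 0))
    (hinitS : nS 0 = mS 0) (hinitI : nI 0 = mI 0)
    : sSup ((fun t => normA rA rB vA vB
        (fun r => mesoPS rA rB vA vB θX θR KS q nS nI t r
          - mesoPS rA rB vA vB θX θR KS q mS mI t r)
        (fun v => mesoPI rA rB vA vB θX θV KI Q q nS nI t v
          - mesoPI rA rB vA vB θX θV KI Q q mS mI t v)) '' Icc 0 T)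
      ≤ 2 * T * (max θR θV
            + θX * (normB rA rB vA vB T nS nI + normB rA rB vA vB T mS mI))
          * normB rA rB vA vB T (fun t r => nS t r - mS t r)
              (fun t v => nI t v - mI t v) := by
  have h0T : (0:ℝ) ∈ Icc (0:ℝ) T := ⟨le_refl 0, hT.le⟩
  haveI hfinR : IsFiniteMeasure (volume.restrict (Icc rA rB)) :=
    ⟨by rw [Measure.restrict_apply_univ]; exact measure_Icc_lt_top⟩
  haveI hfinV : IsFiniteMeasure (volume.restrict (Icc vA vB)) :=
    ⟨by rw [Measure.restrict_apply_univ]; exact measure_Icc_lt_top⟩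
  have hnSt : ∀ t, Measurable (nS t) := fun t => hSmeas.of_uncurry_left
  have hnIt : ∀ t, Measurable (nI t) := fun t => hImeas.of_uncurry_left
  have hmSt : ∀ t, Measurable (mS t) := fun t => hSmeas'.of_uncurry_left
  have hmIt : ∀ t, Measurable (mI t) := fun t => hImeas'.of_uncurry_left
  -- the clamped version of q
  set qe : ℝ → ℝ → ℝ := fun r v => q (max rA (min r rB)) (max vA (min v vB)) with hqedef
  have hclampR : ∀ r : ℝ, max rA (min r rB) ∈ Icc rA rB :=
    fun r => ⟨le_max_left _ _, max_le hrAB (min_le_right _ _)⟩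
  have hclampV : ∀ v : ℝ, max vA (min v vB) ∈ Icc vA vB :=
    fun v => ⟨le_max_left _ _, max_le hvAB (min_le_right _ _)⟩
  have hqec : Continuous (Function.uncurry qe) := by
    have hcl : Continuous fun p : ℝ × ℝ =>
        ((max rA (min p.1 rB), max vA (min p.2 vB)) : ℝ × ℝ) := by fun_prop
    exact hqc.comp_continuous hcl fun p => ⟨hclampR p.1, hclampV p.2⟩
  have hqem : Measurable (Function.uncurry qe) := hqec.measurable
  have hqe0 : ∀ r v, 0 ≤ qe r v := fun r v => (hq01 _ (hclampR r) _ (hclampV v)).1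
  have hqe1 : ∀ r v, qe r v ≤ 1 := fun r v => (hq01 _ (hclampR r) _ (hclampV v)).2
  have hqeq : ∀ r ∈ Icc rA rB, ∀ v ∈ Icc vA vB, qe r v = q r v := by
    intro r hr v hv
    simp only [hqedef]
    rw [min_eq_left hr.2, max_eq_right hr.1, min_eq_left hv.2, max_eq_right hv.1]
  -- norm bounds
  have hDSint : ∀ t ∈ Icc (0:ℝ) T, IntegrableOn (fun r => nS t r - mS t r) (Icc rA rB) :=
    fun t ht => (hSint t ht).sub (hSint' t ht)
  have hDIint : ∀ t ∈ Icc (0:ℝ) T, IntegrableOn (fun v => nI t v - mI t v) (Icc vA vB) :=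
    fun t ht => (hIint t ht).sub (hIint' t ht)
  have hDScont : ∀ t₀ ∈ Icc (0:ℝ) T,
      Tendsto (fun t => ∫ r in Icc rA rB, |(nS t r - mS t r) - (nS t₀ r - mS t₀ r)|)
        (nhdsWithin t₀ (Icc 0 T)) (nhds 0) := by
    intro t₀ ht₀
    have hsum := (hScont t₀ ht₀).add (hScont' t₀ ht₀)
    rw [add_zero] at hsum
    refine squeeze_zero_norm' ?_ hsum
    filter_upwards [self_mem_nhdsWithin] with t ht
    rw [Real.norm_eq_abs, abs_of_nonneg (integral_nonneg fun r => abs_nonneg _)]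
    calc ∫ r in Icc rA rB, |(nS t r - mS t r) - (nS t₀ r - mS t₀ r)|
        ≤ ∫ r in Icc rA rB, (|nS t r - nS t₀ r| + |mS t r - mS t₀ r|) := by
          refine integral_mono_of_nonneg (Eventually.of_forall fun r => abs_nonneg _)
            (((hSint t ht).sub (hSint t₀ ht₀)).abs.add
              (((hSint' t ht).sub (hSint' t₀ ht₀)).abs))
            (Eventually.of_forall fun r => ?_)
          have heq : (nS t r - mS t r) - (nS t₀ r - mS t₀ r)
              = (nS t r - nS t₀ r) - (mS t r - mS t₀ r) := by ring
          dsimp only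
          rw [heq]
          exact abs_sub _ _
      _ = _ := integral_add (f := fun r => |nS t r - nS t₀ r|)
          (g := fun r => |mS t r - mS t₀ r|)
          ((hSint t ht).sub (hSint t₀ ht₀)).abs ((hSint' t ht).sub (hSint' t₀ ht₀)).abs
  have hDIcont : ∀ t₀ ∈ Icc (0:ℝ) T,
      Tendsto (fun t => ∫ v in Icc vA vB, |(nI t v - mI t v) - (nI t₀ v - mI t₀ v)|)
        (nhdsWithin t₀ (Icc 0 T)) (nhds 0) := by
    intro t₀ ht₀
    have hsum := (hIcont t₀ ht₀).add (hIcont' t₀ ht₀)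
    rw [add_zero] at hsum
    refine squeeze_zero_norm' ?_ hsum
    filter_upwards [self_mem_nhdsWithin] with t ht
    rw [Real.norm_eq_abs, abs_of_nonneg (integral_nonneg fun v => abs_nonneg _)]
    calc ∫ v in Icc vA vB, |(nI t v - mI t v) - (nI t₀ v - mI t₀ v)|
        ≤ ∫ v in Icc vA vB, (|nI t v - nI t₀ v| + |mI t v - mI t₀ v|) := by
          refine integral_mono_of_nonneg (Eventually.of_forall fun v => abs_nonneg _)
            (((hIint t ht).sub (hIint t₀ ht₀)).abs.add
              (((hIint' t ht).sub (hIint' t₀ ht₀)).abs))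
            (Eventually.of_forall fun v => ?_)
          have heq : (nI t v - mI t v) - (nI t₀ v - mI t₀ v)
              = (nI t v - nI t₀ v) - (mI t v - mI t₀ v) := by ring
          dsimp only
          rw [heq]
          exact abs_sub _ _
      _ = _ := integral_add (f := fun v => |nI t v - nI t₀ v|)
          (g := fun v => |mI t v - mI t₀ v|)
          ((hIint t ht).sub (hIint t₀ ht₀)).abs ((hIint' t ht).sub (hIint' t₀ ht₀)).abs
  have hBn : ∀ t ∈ Icc (0:ℝ) T,
      (∫ r in Icc rA rB, |nS t r|) + (∫ v in Icc vA vB, |nI t v|)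
        ≤ normB rA rB vA vB T nS nI := by
    have hb : BddAbove ((fun t => normA rA rB vA vB (nS t) (nI t)) '' Icc 0 T) := by
      refine (isCompact_Icc.image_of_continuousOn ?_).bddAbove
      exact (PC.contL1 nS hSint hScont).add (PC.contL1 nI hIint hIcont)
    exact fun t ht => le_csSup hb (mem_image_of_mem _ ht)
  have hBm : ∀ t ∈ Icc (0:ℝ) T,
      (∫ r in Icc rA rB, |mS t r|) + (∫ v in Icc vA vB, |mI t v|)
        ≤ normB rA rB vA vB T mS mI := by
    have hb : BddAbove ((fun t => normA rA rB vA vB (mS t) (mI t)) '' Icc 0 T) := by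
      refine (isCompact_Icc.image_of_continuousOn ?_).bddAbove
      exact (PC.contL1 mS hSint' hScont').add (PC.contL1 mI hIint' hIcont')
    exact fun t ht => le_csSup hb (mem_image_of_mem _ ht)
  have hBd : ∀ t ∈ Icc (0:ℝ) T,
      (∫ r in Icc rA rB, |nS t r - mS t r|) + (∫ v in Icc vA vB, |nI t v - mI t v|)
        ≤ normB rA rB vA vB T (fun t r => nS t r - mS t r) (fun t v => nI t v - mI t v) := by
    have hb : BddAbove ((fun t => normA rA rB vA vB
        ((fun t r => nS t r - mS t r) t) ((fun t v => nI t v - mI t v) t)) '' Icc 0 T) := by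
      refine (isCompact_Icc.image_of_continuousOn ?_).bddAbove
      exact (PC.contL1 (fun t r => nS t r - mS t r) hDSint hDScont).add
        (PC.contL1 (fun t v => nI t v - mI t v) hDIint hDIcont)
    exact fun t ht => le_csSup hb (mem_image_of_mem _ ht)
  set Bn := normB rA rB vA vB T nS nI with hBndef
  set Bm := normB rA rB vA vB T mS mI with hBmdef
  set Bd := normB rA rB vA vB T (fun t r => nS t r - mS t r)
    (fun t v => nI t v - mI t v) with hBddef
  have hNS : ∀ t ∈ Icc (0:ℝ) T, (∫ r in Icc rA rB, |nS t r|) ≤ Bn := by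
    intro t ht
    have h2 : 0 ≤ ∫ v in Icc vA vB, |nI t v| := integral_nonneg fun v => abs_nonneg _
    linarith [hBn t ht]
  have hNI : ∀ t ∈ Icc (0:ℝ) T, (∫ v in Icc vA vB, |nI t v|) ≤ Bn := by
    intro t ht
    have h2 : 0 ≤ ∫ r in Icc rA rB, |nS t r| := integral_nonneg fun r => abs_nonneg _
    linarith [hBn t ht]
  have hMS : ∀ t ∈ Icc (0:ℝ) T, (∫ r in Icc rA rB, |mS t r|) ≤ Bm := by
    intro t ht
    have h2 : 0 ≤ ∫ v in Icc vA vB, |mI t v| := integral_nonneg fun v => abs_nonneg _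
    linarith [hBm t ht]
  have hMI : ∀ t ∈ Icc (0:ℝ) T, (∫ v in Icc vA vB, |mI t v|) ≤ Bm := by
    intro t ht
    have h2 : 0 ≤ ∫ r in Icc rA rB, |mS t r| := integral_nonneg fun r => abs_nonneg _
    linarith [hBm t ht]
  have hBn0 : 0 ≤ Bn := by
    have h1 : 0 ≤ ∫ r in Icc rA rB, |nS 0 r| := integral_nonneg fun r => abs_nonneg _
    have h2 : 0 ≤ ∫ v in Icc vA vB, |nI 0 v| := integral_nonneg fun v => abs_nonneg _
    linarith [hBn 0 h0T]
  have hBm0 : 0 ≤ Bm := by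
    have h1 : 0 ≤ ∫ r in Icc rA rB, |mS 0 r| := integral_nonneg fun r => abs_nonneg _
    have h2 : 0 ≤ ∫ v in Icc vA vB, |mI 0 v| := integral_nonneg fun v => abs_nonneg _
    linarith [hBm 0 h0T]
  have hBd0 : 0 ≤ Bd := by
    have h1 : 0 ≤ ∫ r in Icc rA rB, |nS 0 r - mS 0 r| := integral_nonneg fun r => abs_nonneg _
    have h2 : 0 ≤ ∫ v in Icc vA vB, |nI 0 v - mI 0 v| := integral_nonneg fun v => abs_nonneg _
    linarith [hBd 0 h0T]
  -- kernel a.e. facts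
  have hKSaeInt : ∀ᵐ r' ∂(volume.restrict (Icc rA rB)),
      Integrable (fun r => KS r r') (volume.restrict (Icc rA rB)) := by
    filter_upwards [ae_restrict_mem measurableSet_Icc] with r' hr'
    exact PC.integrable_of_integral_eq_one (hKS1 r' hr')
  have hKSae1 : ∀ᵐ r' ∂(volume.restrict (Icc rA rB)),
      ∫ r, KS r r' ∂(volume.restrict (Icc rA rB)) ≤ 1 := by
    filter_upwards [ae_restrict_mem measurableSet_Icc] with r' hr'
    exact le_of_eq (hKS1 r' hr')
  have hKIaeInt : ∀ᵐ v' ∂(volume.restrict (Icc vA vB)),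
      Integrable (fun v => KI v v') (volume.restrict (Icc vA vB)) := by
    filter_upwards [ae_restrict_mem measurableSet_Icc] with v' hv'
    exact PC.integrable_of_integral_eq_one (hKI1 v' hv')
  have hKIae1 : ∀ᵐ v' ∂(volume.restrict (Icc vA vB)),
      ∫ v, KI v v' ∂(volume.restrict (Icc vA vB)) ≤ 1 := by
    filter_upwards [ae_restrict_mem measurableSet_Icc] with v' hv'
    exact le_of_eq (hKI1 v' hv')
  -- the combined kernel KQ
  have haeBox : ∀ᵐ y ∂((volume.restrict (Icc rA rB)).prod (volume.restrict (Icc vA vB))),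
      y ∈ Icc rA rB ×ˢ Icc vA vB := by
    rw [Measure.prod_restrict]
    exact ae_restrict_mem (measurableSet_Icc.prod measurableSet_Icc)
  have hKQm : Measurable (Function.uncurry
      (fun v (y : ℝ × ℝ) => qe y.1 y.2 * Q v y.1 y.2)) :=
    (hqem.comp measurable_snd).mul hQm
  have hKQ0 : ∀ v (y : ℝ × ℝ), 0 ≤ qe y.1 y.2 * Q v y.1 y.2 :=
    fun v y => mul_nonneg (hqe0 _ _) (hQ0 _ _ _)
  have hKQint : ∀ᵐ y ∂((volume.restrict (Icc rA rB)).prod (volume.restrict (Icc vA vB))),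
      Integrable (fun v => qe y.1 y.2 * Q v y.1 y.2) (volume.restrict (Icc vA vB)) := by
    filter_upwards [haeBox] with y hy
    exact (PC.integrable_of_integral_eq_one (hQ1 y.1 hy.1 y.2 hy.2)).const_mul _
  have hKQ1 : ∀ᵐ y ∂((volume.restrict (Icc rA rB)).prod (volume.restrict (Icc vA vB))),
      ∫ v, qe y.1 y.2 * Q v y.1 y.2 ∂(volume.restrict (Icc vA vB)) ≤ 1 := by
    filter_upwards [haeBox] with y hy
    rw [integral_const_mul, hQ1 y.1 hy.1 y.2 hy.2, mul_one]
    exact hqe1 _ _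
  -- time-sliced right-hand sides with `qe` in place of `q`
  set FSn : ℝ → ℝ → ℝ := fun s r =>
    -(θX * (nS s r * ∫ v in Icc vA vB, qe r v * nI s v))
      + θR * (∫ r' in Icc rA rB, KS r r' * nS s r') - θR * nS s r with hFSndef
  set FSm : ℝ → ℝ → ℝ := fun s r =>
    -(θX * (mS s r * ∫ v in Icc vA vB, qe r v * mI s v))
      + θR * (∫ r' in Icc rA rB, KS r r' * mS s r') - θR * mS s r with hFSmdef
  set FIn : ℝ → ℝ → ℝ := fun s v =>
    θX * (∫ r in Icc rA rB, ∫ v' in Icc vA vB, qe r v' * Q v r v' * (nS s r * nI s v'))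
      + θV * (∫ v' in Icc vA vB, KI v v' * nI s v') - θV * nI s v with hFIndef
  set FIm : ℝ → ℝ → ℝ := fun s v =>
    θX * (∫ r in Icc rA rB, ∫ v' in Icc vA vB, qe r v' * Q v r v' * (mS s r * mI s v'))
      + θV * (∫ v' in Icc vA vB, KI v v' * mI s v') - θV * mI s v with hFImdef
  have hFSeqn : ∀ s, ∀ r ∈ Icc rA rB,
      mesoFS rA rB vA vB θX θR KS q nS nI s r = FSn s r := by
    intro s r hr
    unfold mesoFS
    rw [hFSndef]
    have hq' : ∫ v in Icc vA vB, q r v * nI s v = ∫ v in Icc vA vB, qe r v * nI s v := by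
      refine integral_congr_ae ?_
      filter_upwards [ae_restrict_mem measurableSet_Icc] with v hv
      rw [hqeq r hr v hv]
    rw [hq']
    ring
  have hFSeqm : ∀ s, ∀ r ∈ Icc rA rB,
      mesoFS rA rB vA vB θX θR KS q mS mI s r = FSm s r := by
    intro s r hr
    unfold mesoFS
    rw [hFSmdef]
    have hq' : ∫ v in Icc vA vB, q r v * mI s v = ∫ v in Icc vA vB, qe r v * mI s v := by
      refine integral_congr_ae ?_
      filter_upwards [ae_restrict_mem measurableSet_Icc] with v hv
      rw [hqeq r hr v hv]
    rw [hq']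
    ring
  have hFIeqn : ∀ s v, mesoFI rA rB vA vB θX θV KI Q q nS nI s v = FIn s v := by
    intro s v
    unfold mesoFI
    rw [hFIndef]
    have hq' : ∫ r in Icc rA rB, ∫ v' in Icc vA vB, q r v' * Q v r v' * nS s r * nI s v'
        = ∫ r in Icc rA rB, ∫ v' in Icc vA vB, qe r v' * Q v r v' * (nS s r * nI s v') := by
      refine integral_congr_ae ?_
      filter_upwards [ae_restrict_mem measurableSet_Icc] with r hr
      refine integral_congr_ae ?_
      filter_upwards [ae_restrict_mem measurableSet_Icc] with v' hv'
      rw [hqeq r hr v' hv']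
      ring
    rw [hq']
  have hFIeqm : ∀ s v, mesoFI rA rB vA vB θX θV KI Q q mS mI s v = FIm s v := by
    intro s v
    unfold mesoFI
    rw [hFImdef]
    have hq' : ∫ r in Icc rA rB, ∫ v' in Icc vA vB, q r v' * Q v r v' * mS s r * mI s v'
        = ∫ r in Icc rA rB, ∫ v' in Icc vA vB, qe r v' * Q v r v' * (mS s r * mI s v') := by
      refine integral_congr_ae ?_
      filter_upwards [ae_restrict_mem measurableSet_Icc] with r hr
      refine integral_congr_ae ?_
      filter_upwards [ae_restrict_mem measurableSet_Icc] with v' hv'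
      rw [hqeq r hr v' hv']
      ring
    rw [hq']
  -- per-time-slice integrability and bounds
  have hFSnC : ∀ s ∈ Icc (0:ℝ) T, Integrable (FSn s) (volume.restrict (Icc rA rB)) ∧
      ∫ r in Icc rA rB, |FSn s r| ≤ θX * (Bn * Bn) + 2 * θR * Bn := by
    intro s hs
    obtain ⟨h1, h2⟩ := PC.FS_est hθX hθR hqem hqe0 hqe1 hKSm hKS0 hKSaeInt hKSae1
      (hnSt s) (hSint s hs) (hnIt s) (hIint s hs)
    refine ⟨h1, h2.trans ?_⟩
    have e1 : (∫ r in Icc rA rB, |nS s r|) * (∫ v in Icc vA vB, |nI s v|) ≤ Bn * Bn :=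
      mul_le_mul (hNS s hs) (hNI s hs) (integral_nonneg fun v => abs_nonneg _) hBn0
    have e2 := mul_le_mul_of_nonneg_left e1 hθX.le
    have e3 := hNS s hs
    nlinarith [hθR.le]
  have hFSmC : ∀ s ∈ Icc (0:ℝ) T, Integrable (FSm s) (volume.restrict (Icc rA rB)) ∧
      ∫ r in Icc rA rB, |FSm s r| ≤ θX * (Bm * Bm) + 2 * θR * Bm := by
    intro s hs
    obtain ⟨h1, h2⟩ := PC.FS_est hθX hθR hqem hqe0 hqe1 hKSm hKS0 hKSaeInt hKSae1
      (hmSt s) (hSint' s hs) (hmIt s) (hIint' s hs)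
    refine ⟨h1, h2.trans ?_⟩
    have e1 : (∫ r in Icc rA rB, |mS s r|) * (∫ v in Icc vA vB, |mI s v|) ≤ Bm * Bm :=
      mul_le_mul (hMS s hs) (hMI s hs) (integral_nonneg fun v => abs_nonneg _) hBm0
    have e2 := mul_le_mul_of_nonneg_left e1 hθX.le
    have e3 := hMS s hs
    nlinarith [hθR.le]
  have hFInC : ∀ s ∈ Icc (0:ℝ) T, Integrable (FIn s) (volume.restrict (Icc vA vB)) ∧
      ∫ v in Icc vA vB, |FIn s v| ≤ θX * (Bn * Bn) + 2 * θV * Bn := by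
    intro s hs
    obtain ⟨h1, h2⟩ := PC.FI_est (KQ := fun v (y : ℝ × ℝ) => qe y.1 y.2 * Q v y.1 y.2)
      hθX hθV hKQm hKQ0 hKQint hKQ1 hKIm hKI0 hKIaeInt hKIae1
      (hnSt s) (hSint s hs) (hnIt s) (hIint s hs)
    refine ⟨h1, h2.trans ?_⟩
    have e1 : (∫ r in Icc rA rB, |nS s r|) * (∫ v in Icc vA vB, |nI s v|) ≤ Bn * Bn :=
      mul_le_mul (hNS s hs) (hNI s hs) (integral_nonneg fun v => abs_nonneg _) hBn0
    have e2 := mul_le_mul_of_nonneg_left e1 hθX.le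
    have e3 := hNI s hs
    nlinarith [hθV.le]
  have hFImC : ∀ s ∈ Icc (0:ℝ) T, Integrable (FIm s) (volume.restrict (Icc vA vB)) ∧
      ∫ v in Icc vA vB, |FIm s v| ≤ θX * (Bm * Bm) + 2 * θV * Bm := by
    intro s hs
    obtain ⟨h1, h2⟩ := PC.FI_est (KQ := fun v (y : ℝ × ℝ) => qe y.1 y.2 * Q v y.1 y.2)
      hθX hθV hKQm hKQ0 hKQint hKQ1 hKIm hKI0 hKIaeInt hKIae1
      (hmSt s) (hSint' s hs) (hmIt s) (hIint' s hs)
    refine ⟨h1, h2.trans ?_⟩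
    have e1 : (∫ r in Icc rA rB, |mS s r|) * (∫ v in Icc vA vB, |mI s v|) ≤ Bm * Bm :=
      mul_le_mul (hMS s hs) (hMI s hs) (integral_nonneg fun v => abs_nonneg _) hBm0
    have e2 := mul_le_mul_of_nonneg_left e1 hθX.le
    have e3 := hMI s hs
    nlinarith [hθV.le]
  -- joint per-slice bound for the differences
  have hjoint : ∀ s ∈ Icc (0:ℝ) T,
      Integrable (fun r => FSn s r - FSm s r) (volume.restrict (Icc rA rB)) ∧
      Integrable (fun v => FIn s v - FIm s v) (volume.restrict (Icc vA vB)) ∧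
      (∫ r in Icc rA rB, |FSn s r - FSm s r|) + (∫ v in Icc vA vB, |FIn s v - FIm s v|)
        ≤ 2 * (max θR θV + θX * (Bn + Bm)) * Bd := by
    intro s hs
    obtain ⟨hS1, hS2⟩ := PC.FS_diff_est hθX hθR hqem hqe0 hqe1 hKSm hKS0 hKSaeInt hKSae1
      (hnSt s) (hSint s hs) (hmSt s) (hSint' s hs)
      (hnIt s) (hIint s hs) (hmIt s) (hIint' s hs)
    obtain ⟨hI1, hI2⟩ := PC.FI_diff_est (KQ := fun v (y : ℝ × ℝ) => qe y.1 y.2 * Q v y.1 y.2)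
      hθX hθV hKQm hKQ0 hKQint hKQ1 hKIm hKI0 hKIaeInt hKIae1
      (hnSt s) (hSint s hs) (hmSt s) (hSint' s hs)
      (hnIt s) (hIint s hs) (hmIt s) (hIint' s hs)
    refine ⟨hS1, hI1, ?_⟩
    have hDS0 : 0 ≤ ∫ r in Icc rA rB, |nS s r - mS s r| := integral_nonneg fun r => abs_nonneg _
    have hDI0 : 0 ≤ ∫ v in Icc vA vB, |nI s v - mI s v| := integral_nonneg fun v => abs_nonneg _
    have hMS0 : 0 ≤ ∫ r in Icc rA rB, |mS s r| := integral_nonneg fun r => abs_nonneg _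
    have hNI0 : 0 ≤ ∫ v in Icc vA vB, |nI s v| := integral_nonneg fun v => abs_nonneg _
    have hDsum := hBd s hs
    have hDSle : (∫ r in Icc rA rB, |nS s r - mS s r|) ≤ Bd := by linarith
    have hDIle : (∫ v in Icc vA vB, |nI s v - mI s v|) ≤ Bd := by linarith
    have e1 : (∫ r in Icc rA rB, |nS s r - mS s r|) * (∫ v in Icc vA vB, |nI s v|)
        ≤ Bd * Bn := mul_le_mul hDSle (hNI s hs) hNI0 hBd0
    have e2 : (∫ r in Icc rA rB, |mS s r|) * (∫ v in Icc vA vB, |nI s v - mI s v|)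
        ≤ Bm * Bd := mul_le_mul (hMS s hs) hDIle hDI0 hBm0
    have e3 : θR * (∫ r in Icc rA rB, |nS s r - mS s r|)
          + θV * (∫ v in Icc vA vB, |nI s v - mI s v|) ≤ max θR θV * Bd := by
      have f1 : θR * (∫ r in Icc rA rB, |nS s r - mS s r|)
          ≤ max θR θV * (∫ r in Icc rA rB, |nS s r - mS s r|) :=
        mul_le_mul_of_nonneg_right (le_max_left _ _) hDS0
      have f2 : θV * (∫ v in Icc vA vB, |nI s v - mI s v|)
          ≤ max θR θV * (∫ v in Icc vA vB, |nI s v - mI s v|) :=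
        mul_le_mul_of_nonneg_right (le_max_right _ _) hDI0
      have f3 : max θR θV * ((∫ r in Icc rA rB, |nS s r - mS s r|)
          + ∫ v in Icc vA vB, |nI s v - mI s v|) ≤ max θR θV * Bd :=
        mul_le_mul_of_nonneg_left hDsum (le_trans hθR.le (le_max_left _ _))
      nlinarith
    have e4 := mul_le_mul_of_nonneg_left e1 hθX.le
    have e5 := mul_le_mul_of_nonneg_left e2 hθX.le
    linarith
  -- joint measurability in (time, space)
  have hFSnM : Measurable fun p : ℝ × ℝ => FSn p.2 p.1 := by
    have m1 : Measurable fun p : ℝ × ℝ => nS p.2 p.1 :=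
      PC.m2 hSmeas measurable_snd measurable_fst
    have inner : Measurable fun z : (ℝ × ℝ) × ℝ => qe z.1.1 z.2 * nI z.1.2 z.2 :=
      (PC.m2 hqem (measurable_fst.comp measurable_fst) measurable_snd).mul
        (PC.m2 hImeas (measurable_snd.comp measurable_fst) measurable_snd)
    have m2 : Measurable fun p : ℝ × ℝ => ∫ v in Icc vA vB, qe p.1 v * nI p.2 v :=
      (inner.stronglyMeasurable.integral_prod_right').measurable
    have innerK : Measurable fun z : (ℝ × ℝ) × ℝ => KS z.1.1 z.2 * nS z.1.2 z.2 :=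
      (PC.m2 hKSm (measurable_fst.comp measurable_fst) measurable_snd).mul
        (PC.m2 hSmeas (measurable_snd.comp measurable_fst) measurable_snd)
    have m3 : Measurable fun p : ℝ × ℝ => ∫ r' in Icc rA rB, KS p.1 r' * nS p.2 r' :=
      (innerK.stronglyMeasurable.integral_prod_right').measurable
    exact (((m1.mul m2).const_mul θX).neg.add (m3.const_mul θR)).sub (m1.const_mul θR)
  have hFSmM : Measurable fun p : ℝ × ℝ => FSm p.2 p.1 := by
    have m1 : Measurable fun p : ℝ × ℝ => mS p.2 p.1 :=
      PC.m2 hSmeas' measurable_snd measurable_fst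
    have inner : Measurable fun z : (ℝ × ℝ) × ℝ => qe z.1.1 z.2 * mI z.1.2 z.2 :=
      (PC.m2 hqem (measurable_fst.comp measurable_fst) measurable_snd).mul
        (PC.m2 hImeas' (measurable_snd.comp measurable_fst) measurable_snd)
    have m2 : Measurable fun p : ℝ × ℝ => ∫ v in Icc vA vB, qe p.1 v * mI p.2 v :=
      (inner.stronglyMeasurable.integral_prod_right').measurable
    have innerK : Measurable fun z : (ℝ × ℝ) × ℝ => KS z.1.1 z.2 * mS z.1.2 z.2 :=
      (PC.m2 hKSm (measurable_fst.comp measurable_fst) measurable_snd).mul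
        (PC.m2 hSmeas' (measurable_snd.comp measurable_fst) measurable_snd)
    have m3 : Measurable fun p : ℝ × ℝ => ∫ r' in Icc rA rB, KS p.1 r' * mS p.2 r' :=
      (innerK.stronglyMeasurable.integral_prod_right').measurable
    exact (((m1.mul m2).const_mul θX).neg.add (m3.const_mul θR)).sub (m1.const_mul θR)
  have hFInM : Measurable fun p : ℝ × ℝ => FIn p.2 p.1 := by
    have m1 : Measurable fun p : ℝ × ℝ => nI p.2 p.1 :=
      PC.m2 hImeas measurable_snd measurable_fst
    have innermost : Measurable fun w : ((ℝ × ℝ) × ℝ) × ℝ =>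
        qe w.1.2 w.2 * Q w.1.1.1 w.1.2 w.2 * (nS w.1.1.2 w.1.2 * nI w.1.1.2 w.2) :=
      ((PC.m2 hqem (measurable_snd.comp measurable_fst) measurable_snd).mul
        (PC.m3 hQm (measurable_fst.comp (measurable_fst.comp measurable_fst))
          (measurable_snd.comp measurable_fst) measurable_snd)).mul
      ((PC.m2 hSmeas (measurable_snd.comp (measurable_fst.comp measurable_fst))
          (measurable_snd.comp measurable_fst)).mul
        (PC.m2 hImeas (measurable_snd.comp (measurable_fst.comp measurable_fst))
          measurable_snd))
    have mid : Measurable fun w : (ℝ × ℝ) × ℝ =>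
        ∫ v' in Icc vA vB, qe w.2 v' * Q w.1.1 w.2 v' * (nS w.1.2 w.2 * nI w.1.2 v') :=
      (innermost.stronglyMeasurable.integral_prod_right').measurable
    have m2 : Measurable fun p : ℝ × ℝ =>
        ∫ r in Icc rA rB, ∫ v' in Icc vA vB,
          qe r v' * Q p.1 r v' * (nS p.2 r * nI p.2 v') :=
      (mid.stronglyMeasurable.integral_prod_right').measurable
    have innerK : Measurable fun z : (ℝ × ℝ) × ℝ => KI z.1.1 z.2 * nI z.1.2 z.2 :=
      (PC.m2 hKIm (measurable_fst.comp measurable_fst) measurable_snd).mul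
        (PC.m2 hImeas (measurable_snd.comp measurable_fst) measurable_snd)
    have m3 : Measurable fun p : ℝ × ℝ => ∫ v' in Icc vA vB, KI p.1 v' * nI p.2 v' :=
      (innerK.stronglyMeasurable.integral_prod_right').measurable
    exact ((m2.const_mul θX).add (m3.const_mul θV)).sub (m1.const_mul θV)
  have hFImM : Measurable fun p : ℝ × ℝ => FIm p.2 p.1 := by
    have m1 : Measurable fun p : ℝ × ℝ => mI p.2 p.1 :=
      PC.m2 hImeas' measurable_snd measurable_fst
    have innermost : Measurable fun w : ((ℝ × ℝ) × ℝ) × ℝ =>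
        qe w.1.2 w.2 * Q w.1.1.1 w.1.2 w.2 * (mS w.1.1.2 w.1.2 * mI w.1.1.2 w.2) :=
      ((PC.m2 hqem (measurable_snd.comp measurable_fst) measurable_snd).mul
        (PC.m3 hQm (measurable_fst.comp (measurable_fst.comp measurable_fst))
          (measurable_snd.comp measurable_fst) measurable_snd)).mul
      ((PC.m2 hSmeas' (measurable_snd.comp (measurable_fst.comp measurable_fst))
          (measurable_snd.comp measurable_fst)).mul
        (PC.m2 hImeas' (measurable_snd.comp (measurable_fst.comp measurable_fst))
          measurable_snd))
    have mid : Measurable fun w : (ℝ × ℝ) × ℝ =>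
        ∫ v' in Icc vA vB, qe w.2 v' * Q w.1.1 w.2 v' * (mS w.1.2 w.2 * mI w.1.2 v') :=
      (innermost.stronglyMeasurable.integral_prod_right').measurable
    have m2 : Measurable fun p : ℝ × ℝ =>
        ∫ r in Icc rA rB, ∫ v' in Icc vA vB,
          qe r v' * Q p.1 r v' * (mS p.2 r * mI p.2 v') :=
      (mid.stronglyMeasurable.integral_prod_right').measurable
    have innerK : Measurable fun z : (ℝ × ℝ) × ℝ => KI z.1.1 z.2 * mI z.1.2 z.2 :=
      (PC.m2 hKIm (measurable_fst.comp measurable_fst) measurable_snd).mul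
        (PC.m2 hImeas' (measurable_snd.comp measurable_fst) measurable_snd)
    have m3 : Measurable fun p : ℝ × ℝ => ∫ v' in Icc vA vB, KI p.1 v' * mI p.2 v' :=
      (innerK.stronglyMeasurable.integral_prod_right').measurable
    exact ((m2.const_mul θX).add (m3.const_mul θV)).sub (m1.const_mul θV)
  -- main per-time bound
  have hC1 : 0 ≤ max θR θV + θX * (Bn + Bm) :=
    add_nonneg (le_trans hθR.le (le_max_left _ _))
      (mul_nonneg hθX.le (add_nonneg hBn0 hBm0))
  have hCtot0 : 0 ≤ 2 * (max θR θV + θX * (Bn + Bm)) * Bd :=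
    mul_nonneg (mul_nonneg (by norm_num) hC1) hBd0
  have hmain : ∀ t ∈ Icc (0:ℝ) T,
      normA rA rB vA vB
        (fun r => mesoPS rA rB vA vB θX θR KS q nS nI t r
          - mesoPS rA rB vA vB θX θR KS q mS mI t r)
        (fun v => mesoPI rA rB vA vB θX θV KI Q q nS nI t v
          - mesoPI rA rB vA vB θX θV KI Q q mS mI t v)
      ≤ 2 * T * (max θR θV + θX * (Bn + Bm)) * Bd := by
    intro t ht
    obtain ⟨h0t, htT⟩ := ht
    haveI : IsFiniteMeasure (volume.restrict (Ioc (0:ℝ) t)) :=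
      ⟨by rw [Measure.restrict_apply_univ]; exact measure_Ioc_lt_top⟩
    have haes : ∀ᵐ s ∂(volume.restrict (Ioc (0:ℝ) t)), s ∈ Icc (0:ℝ) T := by
      filter_upwards [ae_restrict_mem measurableSet_Ioc] with s hs
      exact ⟨hs.1.le, hs.2.trans htT⟩
    have hprodFSn : Integrable (fun p : ℝ × ℝ => FSn p.2 p.1)
        ((volume.restrict (Icc rA rB)).prod (volume.restrict (Ioc 0 t))) := by
      refine PC.prodInt (C := θX * (Bn * Bn) + 2 * θR * Bn) hFSnM ?_
      filter_upwards [haes] with s hs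
      exact hFSnC s hs
    have hprodFSm : Integrable (fun p : ℝ × ℝ => FSm p.2 p.1)
        ((volume.restrict (Icc rA rB)).prod (volume.restrict (Ioc 0 t))) := by
      refine PC.prodInt (C := θX * (Bm * Bm) + 2 * θR * Bm) hFSmM ?_
      filter_upwards [haes] with s hs
      exact hFSmC s hs
    have hprodFIn : Integrable (fun p : ℝ × ℝ => FIn p.2 p.1)
        ((volume.restrict (Icc vA vB)).prod (volume.restrict (Ioc 0 t))) := by
      refine PC.prodInt (C := θX * (Bn * Bn) + 2 * θV * Bn) hFInM ?_
      filter_upwards [haes] with s hs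
      exact hFInC s hs
    have hprodFIm : Integrable (fun p : ℝ × ℝ => FIm p.2 p.1)
        ((volume.restrict (Icc vA vB)).prod (volume.restrict (Ioc 0 t))) := by
      refine PC.prodInt (C := θX * (Bm * Bm) + 2 * θV * Bm) hFImM ?_
      filter_upwards [haes] with s hs
      exact hFImC s hs
    have hprodPhi : Integrable (fun p : ℝ × ℝ => FSn p.2 p.1 - FSm p.2 p.1)
        ((volume.restrict (Icc rA rB)).prod (volume.restrict (Ioc 0 t))) :=
      hprodFSn.sub hprodFSm
    have hprodPsi : Integrable (fun p : ℝ × ℝ => FIn p.2 p.1 - FIm p.2 p.1)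
        ((volume.restrict (Icc vA vB)).prod (volume.restrict (Ioc 0 t))) :=
      hprodFIn.sub hprodFIm
    obtain ⟨hsw1S, hsw2S, hsweqS⟩ :=
      PC.timeSwap (F := fun s r => FSn s r - FSm s r) hprodPhi
    obtain ⟨hsw1I, hsw2I, hsweqI⟩ :=
      PC.timeSwap (F := fun s v => FIn s v - FIm s v) hprodPsi
    have haeRn : ∀ᵐ r ∂(volume.restrict (Icc rA rB)),
        Integrable (fun s => FSn s r) (volume.restrict (Ioc 0 t)) :=
      hprodFSn.prod_right_ae
    have haeRm : ∀ᵐ r ∂(volume.restrict (Icc rA rB)),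
        Integrable (fun s => FSm s r) (volume.restrict (Ioc 0 t)) :=
      hprodFSm.prod_right_ae
    have haeVn : ∀ᵐ v ∂(volume.restrict (Icc vA vB)),
        Integrable (fun s => FIn s v) (volume.restrict (Ioc 0 t)) :=
      hprodFIn.prod_right_ae
    have haeVm : ∀ᵐ v ∂(volume.restrict (Icc vA vB)),
        Integrable (fun s => FIm s v) (volume.restrict (Ioc 0 t)) :=
      hprodFIm.prod_right_ae
    have hScomp : (∫ r in Icc rA rB, |mesoPS rA rB vA vB θX θR KS q nS nI t r
          - mesoPS rA rB vA vB θX θR KS q mS mI t r|)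
        ≤ ∫ s, (∫ r in Icc rA rB, |FSn s r - FSm s r|) ∂(volume.restrict (Ioc 0 t)) := by
      refine le_trans (integral_mono_of_nonneg
        (Eventually.of_forall fun r => abs_nonneg _) hsw2S ?_) (le_of_eq hsweqS)
      filter_upwards [ae_restrict_mem measurableSet_Icc, haeRn, haeRm] with r hr hn hm
      have e0 : mesoPS rA rB vA vB θX θR KS q nS nI t r
          - mesoPS rA rB vA vB θX θR KS q mS mI t r
          = (∫ s in (0:ℝ)..t, mesoFS rA rB vA vB θX θR KS q nS nI s r)
            - ∫ s in (0:ℝ)..t, mesoFS rA rB vA vB θX θR KS q mS mI s r := by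
        unfold mesoPS
        rw [hinitS]
        ring
      have e1 : (fun s => mesoFS rA rB vA vB θX θR KS q nS nI s r) = fun s => FSn s r :=
        funext fun s => hFSeqn s r hr
      have e2 : (fun s => mesoFS rA rB vA vB θX θR KS q mS mI s r) = fun s => FSm s r :=
        funext fun s => hFSeqm s r hr
      rw [e0, e1, e2]
      have hIIn : IntervalIntegrable (fun s => FSn s r) volume 0 t :=
        (intervalIntegrable_iff_integrableOn_Ioc_of_le h0t).mpr hn
      have hIIm : IntervalIntegrable (fun s => FSm s r) volume 0 t :=
        (intervalIntegrable_iff_integrableOn_Ioc_of_le h0t).mpr hm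
      rw [← intervalIntegral.integral_sub hIIn hIIm, intervalIntegral.integral_of_le h0t]
      simpa [Real.norm_eq_abs] using norm_integral_le_integral_norm
        (μ := volume.restrict (Ioc 0 t)) (fun s => FSn s r - FSm s r)
    have hIcomp : (∫ v in Icc vA vB, |mesoPI rA rB vA vB θX θV KI Q q nS nI t v
          - mesoPI rA rB vA vB θX θV KI Q q mS mI t v|)
        ≤ ∫ s, (∫ v in Icc vA vB, |FIn s v - FIm s v|) ∂(volume.restrict (Ioc 0 t)) := by
      refine le_trans (integral_mono_of_nonneg
        (Eventually.of_forall fun v => abs_nonneg _) hsw2I ?_) (le_of_eq hsweqI)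
      filter_upwards [haeVn, haeVm] with v hn hm
      have e0 : mesoPI rA rB vA vB θX θV KI Q q nS nI t v
          - mesoPI rA rB vA vB θX θV KI Q q mS mI t v
          = (∫ s in (0:ℝ)..t, mesoFI rA rB vA vB θX θV KI Q q nS nI s v)
            - ∫ s in (0:ℝ)..t, mesoFI rA rB vA vB θX θV KI Q q mS mI s v := by
        unfold mesoPI
        rw [hinitI]
        ring
      have e1 : (fun s => mesoFI rA rB vA vB θX θV KI Q q nS nI s v) = fun s => FIn s v :=
        funext fun s => hFIeqn s v
      have e2 : (fun s => mesoFI rA rB vA vB θX θV KI Q q mS mI s v) = fun s => FIm s v :=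
        funext fun s => hFIeqm s v
      rw [e0, e1, e2]
      have hIIn : IntervalIntegrable (fun s => FIn s v) volume 0 t :=
        (intervalIntegrable_iff_integrableOn_Ioc_of_le h0t).mpr hn
      have hIIm : IntervalIntegrable (fun s => FIm s v) volume 0 t :=
        (intervalIntegrable_iff_integrableOn_Ioc_of_le h0t).mpr hm
      rw [← intervalIntegral.integral_sub hIIn hIIm, intervalIntegral.integral_of_le h0t]
      simpa [Real.norm_eq_abs] using norm_integral_le_integral_norm
        (μ := volume.restrict (Ioc 0 t)) (fun s => FIn s v - FIm s v)
    have hadd : (∫ s, (∫ r in Icc rA rB, |FSn s r - FSm s r|) ∂(volume.restrict (Ioc 0 t)))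
        + (∫ s, (∫ v in Icc vA vB, |FIn s v - FIm s v|) ∂(volume.restrict (Ioc 0 t)))
        = ∫ s, ((∫ r in Icc rA rB, |FSn s r - FSm s r|)
            + ∫ v in Icc vA vB, |FIn s v - FIm s v|) ∂(volume.restrict (Ioc 0 t)) :=
      (integral_add hsw1S hsw1I).symm
    have hsum : (∫ s, (∫ r in Icc rA rB, |FSn s r - FSm s r|) ∂(volume.restrict (Ioc 0 t)))
        + (∫ s, (∫ v in Icc vA vB, |FIn s v - FIm s v|) ∂(volume.restrict (Ioc 0 t)))
        ≤ (2 * (max θR θV + θX * (Bn + Bm)) * Bd) * t := by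
      rw [hadd]
      calc ∫ s, ((∫ r in Icc rA rB, |FSn s r - FSm s r|)
            + ∫ v in Icc vA vB, |FIn s v - FIm s v|) ∂(volume.restrict (Ioc 0 t))
          ≤ ∫ _s, (2 * (max θR θV + θX * (Bn + Bm)) * Bd) ∂(volume.restrict (Ioc 0 t)) := by
            refine integral_mono_of_nonneg ?_ (integrable_const _) ?_
            · exact Eventually.of_forall fun s => add_nonneg
                (integral_nonneg fun r => abs_nonneg _)
                (integral_nonneg fun v => abs_nonneg _)
            · filter_upwards [haes] with s hs
              exact (hjoint s hs).2.2
        _ = (2 * (max θR θV + θX * (Bn + Bm)) * Bd) * t := by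
            rw [integral_const, measureReal_def, Measure.restrict_apply_univ, Real.volume_Ioc,
              smul_eq_mul, sub_zero, ENNReal.toReal_ofReal h0t]
            ring
    unfold normA
    refine le_trans (add_le_add hScomp hIcomp) (hsum.trans ?_)
    calc (2 * (max θR θV + θX * (Bn + Bm)) * Bd) * t
        ≤ (2 * (max θR θV + θX * (Bn + Bm)) * Bd) * T :=
          mul_le_mul_of_nonneg_left htT hCtot0
      _ = 2 * T * (max θR θV + θX * (Bn + Bm)) * Bd := by ring
  refine Real.sSup_le ?_ ?_
  · rintro x ⟨t, ht, rfl⟩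
    exact hmain t ht
  · exact mul_nonneg (mul_nonneg (mul_nonneg (by norm_num) hT.le) hC1) hBd0
end

section
/- A priori estimates for the macroscopic model (Theorem 3.2 and Appendix B): Any solution (N_S, N_I, M_S, M_I) of the macroscopic ODE system coupled with the moment constraints on ψ_S, ψ_I, and subject to the initial conditions N_S(0) = N_{S,0} ∈ (0,1), N_I(0) = 1 - N_{S,0}, M_S(0) ∈ [0, r_max], M_I(0) ∈ [0, v_max], satisfies, for all t ≥ 0: 0 ≤ N_S(t) ≤ 1, 0 ≤ N_I(t) ≤ 1, 0 ≤ M_S(t) ≤ r_max, 0 ≤ M_I(t) ≤ v_max, and N_S(t) + N_I(t) = 1. -/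
open MeasureTheory Set Filter

/-- Grönwall-type positivity: if `f` solves `f' = f * g` on `[0,∞)` with `g` locally
bounded and `f 0 ≥ 0`, then `f ≥ 0` on `[0,∞)`. -/
lemma gronwall_nonneg_aux (f g : ℝ → ℝ)
    (hf : ∀ t ∈ Ici (0:ℝ), HasDerivWithinAt f (f t * g t) (Ici 0) t)
    (hgb : ∀ a b : ℝ, 0 ≤ a → ∃ C, ∀ t ∈ Icc a b, |g t| ≤ C)
    (h0 : 0 ≤ f 0) : ∀ t ∈ Ici (0:ℝ), 0 ≤ f t := by
  have hfc : ContinuousOn f (Ici 0) := fun t ht => (hf t ht).continuousWithinAt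
  intro t ht
  by_contra hneg
  push_neg at hneg
  have ht0 : (0:ℝ) ≤ t := ht
  have hfc' : ContinuousOn f (Icc 0 t) := hfc.mono Icc_subset_Ici_self
  set Z : Set ℝ := Icc 0 t ∩ f ⁻¹' {0} with hZdef
  have hZne : Z.Nonempty := by
    have h0mem : (0:ℝ) ∈ Icc (f t) (f 0) := ⟨hneg.le, h0⟩
    obtain ⟨s, hs, hfs⟩ := intermediate_value_Icc' ht0 hfc' h0mem
    exact ⟨s, hs, by simpa using hfs⟩
  have hZc : IsClosed Z :=
    hfc'.preimage_isClosed_of_isClosed isClosed_Icc isClosed_singleton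
  have hZcomp : IsCompact Z :=
    isCompact_Icc.of_isClosed_subset hZc inter_subset_left
  obtain ⟨⟨hτ0, hτt⟩, hfτ⟩ := hZcomp.sSup_mem hZne
  set τ := sSup Z
  have hfτ0 : f τ = 0 := hfτ
  obtain ⟨C, hC⟩ := hgb τ t hτ0
  have key := norm_le_gronwallBound_of_norm_deriv_right_le
      (f := f) (f' := fun x => f x * g x) (δ := 0) (K := C) (ε := 0) (a := τ) (b := t)
      (hfc.mono (fun x hx => le_trans hτ0 hx.1))
      (fun x hx => (hf x (le_trans hτ0 hx.1)).mono (Ici_subset_Ici.2 (le_trans hτ0 hx.1)))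
      (by simp [hfτ0])
      (fun x hx => by
        have hgx : |g x| ≤ C := hC x ⟨hx.1, hx.2.le⟩
        have : ‖f x * g x‖ = |f x| * |g x| := abs_mul _ _
        rw [this, add_zero]
        calc |f x| * |g x| ≤ |f x| * C :=
              mul_le_mul_of_nonneg_left hgx (abs_nonneg _)
          _ = C * ‖f x‖ := by rw [mul_comm]; rfl)
  have := key t ⟨hτt, le_refl t⟩
  rw [gronwallBound_ε0_δ0] at this
  have : f t = 0 := by
    have h1 : |f t| ≤ 0 := this
    have := abs_nonneg (f t)
    have : |f t| = 0 := le_antisymm h1 this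
    exact abs_eq_zero.mp this
  linarith

/-- **Theorem 3.2 and Appendix B**: a priori estimates for the macroscopic model.
Any solution `(N_S, N_I, M_S, M_I)` of the macroscopic ODE system coupled with the
moment constraints on `ψ_S, ψ_I` satisfies `0 ≤ N_S ≤ 1`, `0 ≤ N_I ≤ 1`,
`0 ≤ M_S ≤ r_max`, `0 ≤ M_I ≤ v_max` and `N_S + N_I = 1` for all `t ≥ 0`. -/
theorem macroscopic_apriori_estimates
    (rmax vmax : ℝ) (hrmax : 0 < rmax) (hvmax : 0 < vmax)
    (q : ℝ → ℝ → ℝ) (Qbar : ℝ → ℝ → ℝ)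
    (hqc : ContinuousOn (Function.uncurry q) (Icc 0 rmax ×ˢ Icc 0 vmax))
    (hq01 : ∀ r ∈ Icc (0:ℝ) rmax, ∀ v ∈ Icc (0:ℝ) vmax, q r v ∈ Icc (0:ℝ) 1)
    (hQbm : Measurable (Function.uncurry Qbar))
    (hQb : ∀ r ∈ Icc (0:ℝ) rmax, ∀ v ∈ Icc (0:ℝ) vmax, Qbar r v ∈ Icc (0:ℝ) vmax)
    (ψS ψI : ℝ → ℝ → ℝ)
    (hψSm : ∀ t ∈ Ici (0:ℝ), Measurable (ψS t))
    (hψS0 : ∀ t ∈ Ici (0:ℝ), ∀ r, 0 ≤ ψS t r)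
    (hψSint : ∀ t ∈ Ici (0:ℝ), IntegrableOn (ψS t) (Icc 0 rmax))
    (hψIm : ∀ t ∈ Ici (0:ℝ), Measurable (ψI t))
    (hψI0 : ∀ t ∈ Ici (0:ℝ), ∀ v, 0 ≤ ψI t v)
    (hψIint : ∀ t ∈ Ici (0:ℝ), IntegrableOn (ψI t) (Icc 0 vmax))
    (NS NI MS MI : ℝ → ℝ) (NS0 : ℝ)
    (hNS0 : NS0 ∈ Ioo (0:ℝ) 1) (hNSinit : NS 0 = NS0) (hNIinit : NI 0 = 1 - NS0)
    (hMSinit : MS 0 ∈ Icc (0:ℝ) rmax) (hMIinit : MI 0 ∈ Icc (0:ℝ) vmax)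
    (hmomS1 : ∀ t ∈ Ici (0:ℝ), ∫ r in Icc (0:ℝ) rmax, ψS t r = 1)
    (hmomS2 : ∀ t ∈ Ici (0:ℝ), ∫ r in Icc (0:ℝ) rmax, r * ψS t r = MS t)
    (hmomI1 : ∀ t ∈ Ici (0:ℝ), ∫ v in Icc (0:ℝ) vmax, ψI t v = 1)
    (hmomI2 : ∀ t ∈ Ici (0:ℝ), ∫ v in Icc (0:ℝ) vmax, v * ψI t v = MI t)
    (hdNS : ∀ t ∈ Ici (0:ℝ), HasDerivWithinAt NS
      (-(NS t * NI t *
        ∫ r in Icc (0:ℝ) rmax, ∫ v in Icc (0:ℝ) vmax, q r v * ψS t r * ψI t v)) (Ici 0) t)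
    (hdNI : ∀ t ∈ Ici (0:ℝ), HasDerivWithinAt NI
      (NS t * NI t *
        ∫ r in Icc (0:ℝ) rmax, ∫ v in Icc (0:ℝ) vmax, q r v * ψS t r * ψI t v) (Ici 0) t)
    (hdMS : ∀ t ∈ Ici (0:ℝ), HasDerivWithinAt MS
      (NI t * ∫ v in Icc (0:ℝ) vmax,
        (∫ r in Icc (0:ℝ) rmax, (MS t - r) * q r v * ψS t r) * ψI t v) (Ici 0) t)
    (hdMI : ∀ t ∈ Ici (0:ℝ), HasDerivWithinAt MI
      (NS t * ∫ r in Icc (0:ℝ) rmax, ∫ v in Icc (0:ℝ) vmax,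
        (Qbar r v - MI t) * q r v * ψS t r * ψI t v) (Ici 0) t) :
    ∀ t ∈ Ici (0:ℝ), NS t ∈ Icc (0:ℝ) 1 ∧ NI t ∈ Icc (0:ℝ) 1 ∧
      MS t ∈ Icc (0:ℝ) rmax ∧ MI t ∈ Icc (0:ℝ) vmax ∧ NS t + NI t = 1 := by
  set Kf : ℝ → ℝ :=
    fun t => ∫ r in Icc (0:ℝ) rmax, ∫ v in Icc (0:ℝ) vmax, q r v * ψS t r * ψI t v with hKf
  -- The interaction kernel is bounded between 0 and 1.
  have hK : ∀ t ∈ Ici (0:ℝ), |Kf t| ≤ 1 := by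
    intro t ht
    have hInn_nonneg : ∀ r ∈ Icc (0:ℝ) rmax,
        0 ≤ ∫ v in Icc (0:ℝ) vmax, q r v * ψS t r * ψI t v := by
      intro r hr
      refine setIntegral_nonneg measurableSet_Icc fun v hv => ?_
      exact mul_nonneg (mul_nonneg (hq01 r hr v hv).1 (hψS0 t ht r)) (hψI0 t ht v)
    have hInn_le : ∀ r ∈ Icc (0:ℝ) rmax,
        (∫ v in Icc (0:ℝ) vmax, q r v * ψS t r * ψI t v) ≤ ψS t r := by
      intro r hr
      have hle : (∫ v in Icc (0:ℝ) vmax, q r v * ψS t r * ψI t v)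
          ≤ ∫ v in Icc (0:ℝ) vmax, ψS t r * ψI t v := by
        refine integral_mono_of_nonneg ?_ ((hψIint t ht).const_mul _) ?_
        · refine (ae_restrict_iff' measurableSet_Icc).2 (ae_of_all _ fun v hv => ?_)
          exact mul_nonneg (mul_nonneg (hq01 r hr v hv).1 (hψS0 t ht r)) (hψI0 t ht v)
        · refine (ae_restrict_iff' measurableSet_Icc).2 (ae_of_all _ fun v hv => ?_)
          have h1 := (hq01 r hr v hv).2
          have h2 := (hq01 r hr v hv).1
          have h3 := hψS0 t ht r
          have h4 := hψI0 t ht v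
          show q r v * ψS t r * ψI t v ≤ ψS t r * ψI t v
          nlinarith [mul_le_mul_of_nonneg_right (mul_le_mul_of_nonneg_right h1 h3) h4, mul_nonneg h3 h4]
      calc (∫ v in Icc (0:ℝ) vmax, q r v * ψS t r * ψI t v)
          ≤ ∫ v in Icc (0:ℝ) vmax, ψS t r * ψI t v := hle
        _ = ψS t r * ∫ v in Icc (0:ℝ) vmax, ψI t v := integral_const_mul _ _
        _ = ψS t r := by rw [hmomI1 t ht, mul_one]
    have hK0 : 0 ≤ Kf t := setIntegral_nonneg measurableSet_Icc hInn_nonneg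
    have hK1 : Kf t ≤ 1 := by
      have : Kf t ≤ ∫ r in Icc (0:ℝ) rmax, ψS t r := by
        refine integral_mono_of_nonneg ?_ (hψSint t ht) ?_
        · exact (ae_restrict_iff' measurableSet_Icc).2 (ae_of_all _ hInn_nonneg)
        · exact (ae_restrict_iff' measurableSet_Icc).2 (ae_of_all _ hInn_le)
      rwa [hmomS1 t ht] at this
    rw [abs_le]; exact ⟨by linarith, hK1⟩
  -- Continuity of NS and NI on Ici 0
  have hNSc : ContinuousOn NS (Ici 0) := fun s hs => (hdNS s hs).continuousWithinAt
  have hNIc : ContinuousOn NI (Ici 0) := fun s hs => (hdNI s hs).continuousWithinAt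
  -- NS + NI is constant equal to 1
  have hsum : ∀ t ∈ Ici (0:ℝ), NS t + NI t = 1 := by
    intro t ht
    have hcont : ContinuousOn (fun s => NS s + NI s) (Icc 0 t) :=
      (hNSc.mono Icc_subset_Ici_self).add (hNIc.mono Icc_subset_Ici_self)
    have hderiv : ∀ x ∈ Ico (0:ℝ) t,
        HasDerivWithinAt (fun s => NS s + NI s) 0 (Ici x) x := by
      intro x hx
      have h := ((hdNS x hx.1).add (hdNI x hx.1)).mono (Ici_subset_Ici.2 hx.1)
      convert h using 1
      · rfl
      · rfl
      · rfl
      · ring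
    have := constant_of_has_deriv_right_zero hcont hderiv t ⟨ht, le_refl t⟩
    rw [this, hNSinit, hNIinit]; ring
  -- local boundedness helper
  have hbd : ∀ (F : ℝ → ℝ), ContinuousOn F (Ici 0) →
      ∀ a b : ℝ, 0 ≤ a → ∃ C, ∀ s ∈ Icc a b, |F s * Kf s| ≤ C := by
    intro F hFc a b ha
    obtain ⟨C, hC⟩ := isCompact_Icc.exists_bound_of_continuousOn
      (hFc.mono (fun x hx => le_trans ha hx.1))
    refine ⟨C, fun s hs => ?_⟩
    have hs0 : s ∈ Ici (0:ℝ) := le_trans ha hs.1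
    have h1 : |F s| ≤ C := hC s hs
    have h2 : |Kf s| ≤ 1 := hK s hs0
    calc |F s * Kf s| = |F s| * |Kf s| := abs_mul _ _
      _ ≤ C * 1 := mul_le_mul h1 h2 (abs_nonneg _) (le_trans (abs_nonneg _) h1)
      _ = C := mul_one C
  -- NS ≥ 0
  have hNSnn : ∀ t ∈ Ici (0:ℝ), 0 ≤ NS t := by
    refine gronwall_nonneg_aux NS (fun s => -(NI s * Kf s)) ?_ ?_ ?_
    · intro s hs
      have h := hdNS s hs
      convert h using 1
      ring
    · intro a b ha
      obtain ⟨C, hC⟩ := hbd NI hNIc a b ha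
      exact ⟨C, fun s hs => by rw [abs_neg]; exact hC s hs⟩
    · rw [hNSinit]; exact hNS0.1.le
  -- NI ≥ 0
  have hNInn : ∀ t ∈ Ici (0:ℝ), 0 ≤ NI t := by
    refine gronwall_nonneg_aux NI (fun s => NS s * Kf s) ?_ ?_ ?_
    · intro s hs
      have h := hdNI s hs
      convert h using 1
      ring
    · intro a b ha
      exact hbd NS hNSc a b ha
    · rw [hNIinit]; linarith [hNS0.2]
  -- moment bounds for MS
  intro t ht
  have hMS : MS t ∈ Icc (0:ℝ) rmax := by
    constructor
    · rw [← hmomS2 t ht]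
      exact setIntegral_nonneg measurableSet_Icc
        fun r hr => mul_nonneg hr.1 (hψS0 t ht r)
    · rw [← hmomS2 t ht]
      have : (∫ r in Icc (0:ℝ) rmax, r * ψS t r)
          ≤ ∫ r in Icc (0:ℝ) rmax, rmax * ψS t r := by
        refine integral_mono_of_nonneg ?_ ((hψSint t ht).const_mul _) ?_
        · exact (ae_restrict_iff' measurableSet_Icc).2 (ae_of_all _
            fun r hr => mul_nonneg hr.1 (hψS0 t ht r))
        · exact (ae_restrict_iff' measurableSet_Icc).2 (ae_of_all _
            fun r hr => mul_le_mul_of_nonneg_right hr.2 (hψS0 t ht r))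
      rw [integral_const_mul, hmomS1 t ht, mul_one] at this
      exact this
  have hMI : MI t ∈ Icc (0:ℝ) vmax := by
    constructor
    · rw [← hmomI2 t ht]
      exact setIntegral_nonneg measurableSet_Icc
        fun v hv => mul_nonneg hv.1 (hψI0 t ht v)
    · rw [← hmomI2 t ht]
      have : (∫ v in Icc (0:ℝ) vmax, v * ψI t v)
          ≤ ∫ v in Icc (0:ℝ) vmax, vmax * ψI t v := by
        refine integral_mono_of_nonneg ?_ ((hψIint t ht).const_mul _) ?_
        · exact (ae_restrict_iff' measurableSet_Icc).2 (ae_of_all _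
            fun v hv => mul_nonneg hv.1 (hψI0 t ht v))
        · exact (ae_restrict_iff' measurableSet_Icc).2 (ae_of_all _
            fun v hv => mul_le_mul_of_nonneg_right hv.2 (hψI0 t ht v))
      rw [integral_const_mul, hmomI1 t ht, mul_one] at this
      exact this
  have h1 := hNSnn t ht
  have h2 := hNInn t ht
  have h3 := hsum t ht
  exact ⟨⟨h1, by linarith⟩, ⟨h2, by linarith⟩, hMS, hMI, h3⟩
end

section
/- Characterisation of invariant probability measures of mean-preserving kernels with positive interior variance (Lemma 3.3): Let K be a Markov kernel from [0,1] to [0,1] such that for every r' ∈ [0,1] the probability measure K(r') has mean r' (i.e. ∫_{[0,1]} r dK(r')(r) = r') and for every r' in the open interval (0,1) the variance of K(r') is strictly positive (i.e. ∫_{[0,1]} r² dK(r')(r) - (r')² > 0). If μ is a probability measure on [0,1] that is invariant under K, i.e. μ(E) = ∫_{[0,1]} K(r')(E) dμ(r') for every Borel set E ⊆ [0,1], and μ has mean M := ∫_{[0,1]} r dμ(r), then μ = (1 - M)·δ_0 + M·δ_1, where δ_0 and δ_1 are the Dirac measures at 0 and 1. -/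
open MeasureTheory ProbabilityTheory

private abbrev I' := Set.Icc (0:ℝ) 1

private lemma integrable_of_bdd (ν : Measure I') [IsFiniteMeasure ν] (f : I' → ℝ) (C : ℝ)
    (hf : Measurable f) (hb : ∀ x, |f x| ≤ C) : Integrable f ν :=
  ⟨hf.aestronglyMeasurable, HasFiniteIntegral.of_bounded (C := C)
    (Filter.Eventually.of_forall fun x => by simpa using hb x)⟩

private lemma sq_integrable (ν : Measure I') [IsFiniteMeasure ν] :
    Integrable (fun x : I' => (x:ℝ)^2) ν :=
  integrable_of_bdd ν _ 1 (measurable_subtype_coe.pow_const 2)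
    (fun x => by rw [abs_of_nonneg (by positivity)]; nlinarith [x.2.1, x.2.2])

private lemma sq_lintegral (ν : Measure I') [IsProbabilityMeasure ν] :
    ∫⁻ x, ENNReal.ofReal ((x:ℝ)^2) ∂ν = ENNReal.ofReal (∫ x, (x:ℝ)^2 ∂ν) := by
  rw [ofReal_integral_eq_lintegral_ofReal (sq_integrable ν)
    (Filter.Eventually.of_forall fun x => by positivity)]

private lemma var_nonneg (ν : Measure I') [IsProbabilityMeasure ν] (c : ℝ)
    (hmean : ∫ x, (x:ℝ) ∂ν = c) : 0 ≤ (∫ x, (x:ℝ)^2 ∂ν) - c^2 := by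
  have int1 : Integrable (fun x : I' => (x:ℝ)^2) ν := sq_integrable ν
  have int2 : Integrable (fun x : I' => (2*c) * (x:ℝ)) ν :=
    (integrable_of_bdd ν _ 1 measurable_subtype_coe
      (fun x => by rw [abs_of_nonneg x.2.1]; exact x.2.2)).const_mul _
  have e1 : (fun x : I' => ((x:ℝ) - c)^2)
      = fun x : I' => ((x:ℝ)^2 - (2*c) * (x:ℝ)) + c^2 := by funext x; ring
  have int3 : Integrable (fun x : I' => (x:ℝ)^2 - (2*c) * (x:ℝ)) ν := int1.sub int2
  have key : ∫ x, ((x:ℝ) - c)^2 ∂ν = (∫ x, (x:ℝ)^2 ∂ν) - c^2 := by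
    rw [e1]
    rw [integral_add int3 (integrable_const _)]
    rw [integral_sub int1 int2, integral_const_mul, hmean, integral_const]
    simp; ring
  rw [← key]
  exact integral_nonneg fun x => by positivity

/-- **Lemma 3.3**: characterisation of invariant probability measures of a Markov kernel
on `[0,1]` which is mean-preserving and has strictly positive variance at interior points:
any invariant probability measure with mean `M` equals `(1-M)·δ₀ + M·δ₁`. -/
theorem invariant_measure_of_mean_preserving_kernel
    (K : Kernel (Set.Icc (0:ℝ) 1) (Set.Icc (0:ℝ) 1)) [IsMarkovKernel K]
    (hmean : ∀ r' : Set.Icc (0:ℝ) 1, ∫ x, (x : ℝ) ∂(K r') = (r' : ℝ))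
    (hvar : ∀ r' : Set.Icc (0:ℝ) 1, (r' : ℝ) ∈ Set.Ioo (0:ℝ) 1 →
      0 < (∫ x, ((x : ℝ)) ^ 2 ∂(K r')) - ((r' : ℝ)) ^ 2)
    (μ : Measure (Set.Icc (0:ℝ) 1)) [IsProbabilityMeasure μ]
    (hinv : ∀ E : Set (Set.Icc (0:ℝ) 1), MeasurableSet E → μ E = ∫⁻ r', K r' E ∂μ)
    (M : ℝ) (hM : M = ∫ x, (x : ℝ) ∂μ) :
    μ = ENNReal.ofReal (1 - M) • Measure.dirac (⟨0, by norm_num⟩ : Set.Icc (0:ℝ) 1)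
      + ENNReal.ofReal M • Measure.dirac (⟨1, by norm_num⟩ : Set.Icc (0:ℝ) 1) := by
  classical
  -- μ is invariant: μ = μ.bind K
  have hbind : μ = μ.bind K :=
    Measure.ext fun E hE => by
      rw [Measure.bind_apply hE (Kernel.measurable K).aemeasurable]; exact hinv E hE
  -- the conditional second moment
  set h : I' → ℝ := fun r' => ∫ x, (x:ℝ)^2 ∂(K r') with hh
  have hsm : StronglyMeasurable h :=
    StronglyMeasurable.integral_kernel_prod_right (f := fun _ y : I' => (y:ℝ)^2)
      (((measurable_subtype_coe.comp measurable_snd).pow_const 2).stronglyMeasurable)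
  have hnn : ∀ r', 0 ≤ h r' := fun r' => integral_nonneg fun x => by positivity
  have hbd : ∀ r', |h r'| ≤ 1 := by
    intro r'
    rw [abs_of_nonneg (hnn r')]
    calc h r' ≤ ∫ _x, (1:ℝ) ∂(K r') :=
          integral_mono (sq_integrable _) (integrable_const _)
            (fun x => by nlinarith [x.2.1, x.2.2])
      _ = 1 := by simp
  have hint : Integrable h μ :=
    ⟨hsm.aestronglyMeasurable, HasFiniteIntegral.of_bounded (C := 1)
      (Filter.Eventually.of_forall fun x => by simpa using hbd x)⟩
  -- second-moment invariance:  ∫ x² dμ = ∫ h dμ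
  have hlint : ∫⁻ x, ENNReal.ofReal ((x:ℝ)^2) ∂μ
      = ∫⁻ r', ∫⁻ x, ENNReal.ofReal ((x:ℝ)^2) ∂(K r') ∂μ := by
    conv_lhs => rw [hbind]
    exact Measure.lintegral_bind (Kernel.measurable K).aemeasurable
      ((measurable_subtype_coe.pow_const 2).ennreal_ofReal).aemeasurable
  have hmom : ∫ x, (x:ℝ)^2 ∂μ = ∫ r', h r' ∂μ := by
    have h1 : ENNReal.ofReal (∫ x, (x:ℝ)^2 ∂μ) = ENNReal.ofReal (∫ r', h r' ∂μ) := by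
      rw [← sq_lintegral μ, hlint, ofReal_integral_eq_lintegral_ofReal hint
        (Filter.Eventually.of_forall hnn)]
      refine lintegral_congr fun r' => ?_
      exact sq_lintegral (K r')
    have h2 : 0 ≤ ∫ x, (x:ℝ)^2 ∂μ := integral_nonneg fun x => by positivity
    have h3 : 0 ≤ ∫ r', h r' ∂μ := integral_nonneg hnn
    exact (ENNReal.ofReal_eq_ofReal_iff h2 h3).mp h1
  -- the variance function g
  set g : I' → ℝ := fun r' => h r' - (r':ℝ)^2 with hg
  have hgnn : ∀ r', 0 ≤ g r' := fun r' => var_nonneg (K r') (r':ℝ) (hmean r')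
  have hgint : Integrable g μ := hint.sub (sq_integrable μ)
  have hgzero : ∫ r', g r' ∂μ = 0 := by
    rw [hg]
    rw [integral_sub hint (sq_integrable μ), hmom, sub_self]
  have hgae : g =ᵐ[μ] 0 := (integral_eq_zero_iff_of_nonneg hgnn hgint).mp hgzero
  -- μ is supported on {0, 1}
  set p0 : I' := ⟨0, by norm_num⟩
  set p1 : I' := ⟨1, by norm_num⟩
  have hae : ∀ᵐ r' ∂μ, r' ∈ ({p0, p1} : Set I') := by
    filter_upwards [hgae] with r' hr'
    by_contra hmem
    have h0 : r' ≠ p0 := fun e => hmem (by simp [e])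
    have h1 : r' ≠ p1 := fun e => hmem (by simp [e])
    have hx0 : (r':ℝ) ≠ 0 := fun h => h0 (Subtype.ext h)
    have hx1 : (r':ℝ) ≠ 1 := fun h => h1 (Subtype.ext h)
    have hio : (r':ℝ) ∈ Set.Ioo (0:ℝ) 1 :=
      ⟨lt_of_le_of_ne r'.2.1 (Ne.symm hx0), lt_of_le_of_ne r'.2.2 hx1⟩
    have hv : 0 < g r' := hvar r' hio
    simp only [Pi.zero_apply] at hr'
    exact absurd hr' (ne_of_gt hv)
  have hsupp : μ ({p0, p1} : Set I')ᶜ = 0 := mem_ae_iff.mp hae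
  -- conclude
  have hM0 : 0 ≤ M := hM ▸ integral_nonneg fun x => x.2.1
  have hne : p0 ≠ p1 := fun h => by simpa [p0, p1] using congrArg Subtype.val h
  have hs0 : MeasurableSet ({p0} : Set I') := measurableSet_singleton p0
  have hs1 : MeasurableSet ({p1} : Set I') := measurableSet_singleton p1
  have hMb : M = (μ {p1}).toReal := by
    rw [hM, integral_congr_ae (g := Set.indicator {p1} (fun _ => (1:ℝ)))
      (hae.mono fun x hx => by
        rcases hx with hx | hx
        · subst hx
          rw [Set.indicator_of_notMem (by simpa using hne)]
        · rw [Set.mem_singleton_iff.mp hx, Set.indicator_of_mem (Set.mem_singleton p1)])]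
    rw [integral_indicator_const _ hs1]
    simp; rfl
  have hb : μ {p1} = ENNReal.ofReal M := by
    rw [hMb, ENNReal.ofReal_toReal (measure_ne_top μ _)]
  have h1 : μ ({p0} ∪ {p1} : Set I') = 1 := by
    have h2 := measure_add_measure_compl (μ := μ) (hs0.union hs1)
    rw [show ({p0, p1} : Set I') = {p0} ∪ {p1} from rfl] at hsupp
    rw [hsupp, add_zero] at h2
    simpa using h2
  have hsum : μ {p0} + μ {p1} = 1 := by
    rw [← measure_union (Set.disjoint_singleton.mpr hne) hs1]; exact h1
  have ha : μ {p0} = ENNReal.ofReal (1 - M) := by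
    rw [ENNReal.ofReal_sub _ hM0, ENNReal.ofReal_one, ← hb]
    exact (ENNReal.sub_eq_of_eq_add (measure_ne_top μ _) (by rw [← hsum])).symm
  ext E hE
  have hdecomp : μ E = μ (E ∩ {p0}) + μ (E ∩ {p1}) := by
    have h2 : μ (E ∩ ({p0} ∪ {p1})ᶜ) = 0 :=
      measure_mono_null Set.inter_subset_right (by
        rw [show ({p0, p1} : Set I') = {p0} ∪ {p1} from rfl] at hsupp; exact hsupp)
    calc μ E = μ (E ∩ ({p0} ∪ {p1})) + μ (E ∩ ({p0} ∪ {p1})ᶜ) :=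
          (measure_inter_add_diff E (hs0.union hs1)).symm
      _ = μ ((E ∩ {p0}) ∪ (E ∩ {p1})) := by rw [h2, add_zero, Set.inter_union_distrib_left]
      _ = μ (E ∩ {p0}) + μ (E ∩ {p1}) := by
          rw [measure_union ((Set.disjoint_singleton.mpr hne).mono
            Set.inter_subset_right Set.inter_subset_right) (hE.inter hs1)]
  have e0 : μ (E ∩ {p0}) = if p0 ∈ E then μ {p0} else 0 := by
    split_ifs with h
    · rw [Set.inter_eq_right.mpr (Set.singleton_subset_iff.mpr h)]
    · rw [Set.inter_singleton_eq_empty.mpr h, measure_empty]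
  have e1 : μ (E ∩ {p1}) = if p1 ∈ E then μ {p1} else 0 := by
    split_ifs with h
    · rw [Set.inter_eq_right.mpr (Set.singleton_subset_iff.mpr h)]
    · rw [Set.inter_singleton_eq_empty.mpr h, measure_empty]
  rw [hdecomp, e0, e1, ← ha, ← hb, Measure.add_apply, Measure.smul_apply, Measure.smul_apply,
    smul_eq_mul, smul_eq_mul, Measure.dirac_apply' _ hE, Measure.dirac_apply' _ hE,
    Set.indicator_apply, Set.indicator_apply]
  split_ifs <;> simp
end

section
/- Long-time behaviour when 0 < q(1,1) < q(0,1) ≤ 1 (Proposition 3.4): Assume 0 < b < a ≤ 1. Then the solution of the macroscopic Dirac ODE system satisfies: N_S(t) → 0, N_I(t) → 1, M_S(t) → 1 as t → ∞, and M_I(t) → (1 - N_{S,0}) M_{I,0} + N_{S,0} (A (1 - M_{S,0}) + B M_{S,0}) as t → ∞. -/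
open Set Filter

/-- Monotonicity from a nonnegative right derivative on `Ici 0`. -/
private lemma mono_aux {f f' : ℝ → ℝ}
    (hf : ∀ t ∈ Ici (0:ℝ), HasDerivWithinAt f (f' t) (Ici 0) t)
    (h0 : ∀ t ∈ Ici (0:ℝ), 0 ≤ f' t) : MonotoneOn f (Ici 0) := by
  refine monotoneOn_of_hasDerivWithinAt_nonneg (convex_Ici 0)
    (fun t ht => (hf t ht).continuousWithinAt)
    (fun t ht => (hf t (interior_subset ht)).mono interior_subset)
    (fun t ht => h0 t (interior_subset ht))

/-- `f t ≥ f 0 * exp (-(k t))` from `f' + k f ≥ 0`. -/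
private lemma ge_exp_aux {f f' : ℝ → ℝ} {k : ℝ}
    (hf : ∀ t ∈ Ici (0:ℝ), HasDerivWithinAt f (f' t) (Ici 0) t)
    (h : ∀ t ∈ Ici (0:ℝ), 0 ≤ f' t + k * f t) :
    ∀ t ∈ Ici (0:ℝ), f 0 * Real.exp (-(k * t)) ≤ f t := by
  have hg : ∀ t ∈ Ici (0:ℝ), HasDerivWithinAt (fun s => f s * Real.exp (k * s))
      ((f' t + k * f t) * Real.exp (k * t)) (Ici 0) t := by
    intro t ht
    have hlin : HasDerivAt (fun s : ℝ => k * s) k t := by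
      simpa using (hasDerivAt_id t).const_mul k
    have := (hf t ht).mul hlin.exp.hasDerivWithinAt
    exact this.congr_deriv (by ring)
  have hmono : MonotoneOn (fun s => f s * Real.exp (k * s)) (Ici 0) :=
    mono_aux hg (fun t ht => mul_nonneg (h t ht) (Real.exp_pos _).le)
  intro t ht
  have h1 : f 0 * Real.exp (k * 0) ≤ f t * Real.exp (k * t) :=
    hmono (self_mem_Ici) ht ht
  have h2 := mul_le_mul_of_nonneg_right h1 (Real.exp_pos (-(k * t))).le
  rw [mul_assoc, mul_assoc, ← Real.exp_add, ← Real.exp_add] at h2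
  simpa using h2
  
/-- `f t ≤ f 0 * exp (-(k t))` from `f' + k f ≤ 0`. -/
private lemma le_exp_aux {f f' : ℝ → ℝ} {k : ℝ}
    (hf : ∀ t ∈ Ici (0:ℝ), HasDerivWithinAt f (f' t) (Ici 0) t)
    (h : ∀ t ∈ Ici (0:ℝ), f' t + k * f t ≤ 0) :
    ∀ t ∈ Ici (0:ℝ), f t ≤ f 0 * Real.exp (-(k * t)) := by
  have := ge_exp_aux (f := fun s => -f s) (f' := fun s => -f' s) (k := k)
    (fun t ht => (hf t ht).neg) (fun t ht => by have := h t ht; simp; linarith)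
  intro t ht
  have h1 := this t ht
  simp only [neg_mul] at h1
  linarith

/-- Barrier lemma: if `f 0 ≥ m` and `f' > 0` wherever `f < m` (for positive times),
then `f ≥ m` on `Ici 0`. -/
private lemma barrier_aux {f f' : ℝ → ℝ} {m : ℝ}
    (hf : ∀ t ∈ Ici (0:ℝ), HasDerivWithinAt f (f' t) (Ici 0) t)
    (h0 : m ≤ f 0)
    (hpos : ∀ t, 0 < t → f t < m → 0 < f' t) :
    ∀ t ∈ Ici (0:ℝ), m ≤ f t := by
  intro t1 ht1
  by_contra hcon
  push_neg at hcon
  have ht1pos : 0 < t1 := by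
    rcases eq_or_lt_of_le (mem_Ici.mp ht1) with h | h
    · exfalso; rw [← h] at hcon; linarith
    · exact h
  set S := {x | x ∈ Icc (0:ℝ) t1 ∧ m ≤ f x} with hSdef
  have hS0 : (0:ℝ) ∈ S := ⟨⟨le_rfl, ht1⟩, h0⟩
  have hScl : IsClosed S := by
    have hco : ContinuousOn f (Icc 0 t1) := fun x hx =>
      ((hf x hx.1).continuousWithinAt).mono Icc_subset_Ici_self
    have : S = Icc (0:ℝ) t1 ∩ f ⁻¹' Ici m := by
      ext x; simp [hSdef, and_comm]
    rw [this]
    exact hco.preimage_isClosed_of_isClosed isClosed_Icc isClosed_Ici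
  have hbdd : BddAbove S := ⟨t1, fun x hx => hx.1.2⟩
  set s := sSup S with hs
  have hsS : s ∈ S := hScl.csSup_mem ⟨0, hS0⟩ hbdd
  have hs0 : 0 ≤ s := hsS.1.1
  have hs_lt : s < t1 := by
    rcases eq_or_lt_of_le hsS.1.2 with h | h
    · exfalso; rw [h] at hsS; linarith [hsS.2]
    · exact h
  have hlt : ∀ x, s < x → x ≤ t1 → f x < m := by
    intro x hsx hx1
    by_contra hge
    push_neg at hge
    have : x ∈ S := ⟨⟨le_trans hs0 hsx.le, hx1⟩, hge⟩
    exact absurd (le_csSup hbdd this) (not_le.2 hsx)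
  have hmono : StrictMonoOn f (Icc s t1) := by
    refine strictMonoOn_of_hasDerivWithinAt_pos (f' := f') (convex_Icc s t1)
      (fun x hx => ((hf x (le_trans hs0 hx.1)).continuousWithinAt).mono
        (fun y hy => le_trans hs0 hy.1))
      (fun x hx => ?_) (fun x hx => ?_)
    · rw [interior_Icc] at hx
      exact (hf x (le_trans hs0 hx.1.le)).mono
        (by rw [interior_Icc]; intro y hy; exact le_trans hs0 hy.1.le)
    · rw [interior_Icc] at hx
      exact hpos x (lt_of_le_of_lt hs0 hx.1) (hlt x hx.1 hx.2.le)
  have : f s < f t1 := hmono (left_mem_Icc.2 hs_lt.le) (right_mem_Icc.2 hs_lt.le) hs_lt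
  linarith [hsS.2]

set_option maxHeartbeats 1000000 in
/-- **Proposition 3.4** (long-time behaviour when `0 < q(1,1) < q(0,1) ≤ 1`).
Here `a = q(0,1)`, `b = q(1,1)`, `A = Q̄(0,1)`, `B = Q̄(1,1)`. -/
theorem longtime_prop1
    (a b A B NS0 MS0 MI0 : ℝ)
    (ha0 : 0 ≤ a) (ha1 : a ≤ 1) (hb0 : 0 ≤ b) (hb1 : b ≤ 1)
    (hA0 : 0 < A) (hA1 : A ≤ 1) (hB0 : 0 < B) (hB1 : B ≤ 1)
    (NS NI MS MI : ℝ → ℝ)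
    (hNSinit : NS 0 = NS0) (hNS0 : NS0 ∈ Ioo (0:ℝ) 1)
    (hNIinit : NI 0 = 1 - NS0)
    (hMSinit : MS 0 = MS0) (hMS0 : MS0 ∈ Ioo (0:ℝ) 1)
    (hMIinit : MI 0 = MI0) (hMI0 : MI0 ∈ Ioo (0:ℝ) 1)
    (hdNS : ∀ t ∈ Ici (0:ℝ), HasDerivWithinAt NS
      (-(NS t * NI t * MI t * (a * (1 - MS t) + b * MS t))) (Ici 0) t)
    (hdNI : ∀ t ∈ Ici (0:ℝ), HasDerivWithinAt NI
      (NS t * NI t * MI t * (a * (1 - MS t) + b * MS t)) (Ici 0) t)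
    (hdMS : ∀ t ∈ Ici (0:ℝ), HasDerivWithinAt MS
      (NI t * MI t * (a - b) * (1 - MS t) * MS t) (Ici 0) t)
    (hdMI : ∀ t ∈ Ici (0:ℝ), HasDerivWithinAt MI
      (NS t * MI t * (A * a * (1 - MS t) + B * b * MS t
        - MI t * (a * (1 - MS t) + b * MS t))) (Ici 0) t)
    (hbnd : ∀ t ∈ Ici (0:ℝ), NS t ∈ Icc (0:ℝ) 1 ∧ NI t ∈ Icc (0:ℝ) 1 ∧
      MS t ∈ Icc (0:ℝ) 1 ∧ MI t ∈ Icc (0:ℝ) 1 ∧ NS t + NI t = 1)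
    (hbpos : 0 < b) (hba : b < a) :
    Tendsto NS atTop (nhds 0) ∧ Tendsto NI atTop (nhds 1) ∧
    Tendsto MS atTop (nhds 1) ∧
    Tendsto MI atTop (nhds ((1 - NS0) * MI0 + NS0 * (A * (1 - MS0) + B * MS0))) := by
  -- constants
  set c : ℝ := min A B with hcdef
  set m : ℝ := min c MI0 with hmdef
  have hc0 : 0 < c := lt_min hA0 hB0
  have hm0 : 0 < m := lt_min hc0 hMI0.1
  set ε : ℝ := (1 - NS0) * m * b with hεdef
  set δ : ℝ := (1 - NS0) * m * (a - b) * MS0 with hδdef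
  have hε0 : 0 < ε := by
    apply mul_pos (mul_pos _ hm0) hbpos; linarith [hNS0.2]
  have hδ0 : 0 < δ := by
    apply mul_pos (mul_pos (mul_pos _ hm0) _) hMS0.1 <;> linarith [hNS0.2]
  -- basic bounds at a point
  have hP : ∀ t ∈ Ici (0:ℝ), 0 ≤ a * (1 - MS t) + b * MS t ∧
      b ≤ a * (1 - MS t) + b * MS t ∧ a * (1 - MS t) + b * MS t ≤ 1 := by
    intro t ht
    obtain ⟨_, _, ⟨hms0, hms1⟩, _, _⟩ := hbnd t ht
    refine ⟨by nlinarith, by nlinarith, by nlinarith⟩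
  -- NI is monotone
  have hNImono : MonotoneOn NI (Ici 0) := by
    apply mono_aux hdNI
    intro t ht
    obtain ⟨⟨h1, _⟩, ⟨h2, _⟩, _, ⟨h3, _⟩, _⟩ := hbnd t ht
    exact mul_nonneg (mul_nonneg (mul_nonneg h1 h2) h3) (hP t ht).1
  have hNIlb : ∀ t ∈ Ici (0:ℝ), 1 - NS0 ≤ NI t := by
    intro t ht
    have := hNImono self_mem_Ici ht ht
    rwa [hNIinit] at this
  -- MS is monotone
  have hMSmono : MonotoneOn MS (Ici 0) := by
    apply mono_aux hdMS
    intro t ht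
    obtain ⟨_, ⟨h2, _⟩, ⟨h3, h4⟩, ⟨h5, _⟩, _⟩ := hbnd t ht
    have : (0:ℝ) ≤ a - b := by linarith
    apply mul_nonneg (mul_nonneg (mul_nonneg (mul_nonneg h2 h5) this) (by linarith)) h3
  have hMSlb : ∀ t ∈ Ici (0:ℝ), MS0 ≤ MS t := by
    intro t ht
    have := hMSmono self_mem_Ici ht ht
    rwa [hMSinit] at this
  -- positivity of NS
  have hNSpos : ∀ t ∈ Ici (0:ℝ), 0 < NS t := by
    have hcond : ∀ t ∈ Ici (0:ℝ), 0 ≤ -(NS t * NI t * MI t * (a * (1 - MS t) + b * MS t))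
        + 1 * NS t := by
      intro t ht
      obtain ⟨⟨h1, _⟩, ⟨h2, h2'⟩, _, ⟨h3, h3'⟩, _⟩ := hbnd t ht
      obtain ⟨hp0, _, hp1⟩ := hP t ht
      have hprod : NI t * MI t * (a * (1 - MS t) + b * MS t) ≤ 1 :=
        mul_le_one₀ (mul_le_one₀ h2' h3 h3') hp0 hp1
      nlinarith [mul_le_mul_of_nonneg_left hprod h1]
    have key := ge_exp_aux (k := 1) hdNS hcond
    intro t ht
    have := key t ht
    have h2 : 0 < NS 0 * Real.exp (-(1 * t)) := by
      rw [hNSinit]; exact mul_pos hNS0.1 (Real.exp_pos _)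
    linarith
  -- positivity of MI
  have hMIpos : ∀ t ∈ Ici (0:ℝ), 0 < MI t := by
    have hcond : ∀ t ∈ Ici (0:ℝ), 0 ≤ NS t * MI t * (A * a * (1 - MS t) + B * b * MS t
        - MI t * (a * (1 - MS t) + b * MS t)) + 1 * MI t := by
      intro t ht
      obtain ⟨⟨h1, h1'⟩, _, ⟨hms0, hms1⟩, ⟨h3, h3'⟩, _⟩ := hbnd t ht
      obtain ⟨hp0, _, hp1⟩ := hP t ht
      have hq0 : 0 ≤ A * a * (1 - MS t) + B * b * MS t :=
        add_nonneg (mul_nonneg (mul_nonneg hA0.le ha0) (by linarith))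
          (mul_nonneg (mul_nonneg hB0.le hb0) hms0)
      have hprod : NS t * (a * (1 - MS t) + b * MS t) ≤ 1 :=
        mul_le_one₀ h1' hp0 hp1
      have e1 : MI t * (NS t * (a * (1 - MS t) + b * MS t)) ≤ 1 :=
        mul_le_one₀ h3' (mul_nonneg h1 hp0) hprod
      have e2 : MI t * (MI t * (NS t * (a * (1 - MS t) + b * MS t))) ≤ MI t * 1 :=
        mul_le_mul_of_nonneg_left e1 h3
      nlinarith [mul_nonneg (mul_nonneg h1 h3) hq0, e2]
    have key := ge_exp_aux (k := 1) hdMI hcond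
    intro t ht
    have := key t ht
    have h2 : 0 < MI 0 * Real.exp (-(1 * t)) := by
      rw [hMIinit]; exact mul_pos hMI0.1 (Real.exp_pos _)
    linarith
  -- MI stays above m
  have hMIm : ∀ t ∈ Ici (0:ℝ), m ≤ MI t := by
    apply barrier_aux hdMI
    · rw [hMIinit]; exact min_le_right _ _
    · intro t htpos hMIlt
      have ht : t ∈ Ici (0:ℝ) := htpos.le
      obtain ⟨⟨h1, h1'⟩, _, ⟨hms0, hms1⟩, ⟨h3, h3'⟩, _⟩ := hbnd t ht
      obtain ⟨hp0, hpb, hp1⟩ := hP t ht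
      have hcA : c ≤ A := min_le_left _ _
      have hcB : c ≤ B := min_le_right _ _
      have hqc : c * (a * (1 - MS t) + b * MS t) ≤ A * a * (1 - MS t) + B * b * MS t := by
        nlinarith [mul_nonneg ha0 (by linarith : (0:ℝ) ≤ 1 - MS t), mul_nonneg hb0 hms0]
      have hmc : m ≤ c := min_le_left _ _
      have hlt : MI t * (a * (1 - MS t) + b * MS t) <
          c * (a * (1 - MS t) + b * MS t) := by
        apply mul_lt_mul_of_pos_right (lt_of_lt_of_le hMIlt hmc)
        linarith
      exact mul_pos (mul_pos (hNSpos t ht) (hMIpos t ht)) (by linarith)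
  -- exponential decay of NS
  have hNSub : ∀ t ∈ Ici (0:ℝ), NS t ≤ NS0 * Real.exp (-(ε * t)) := by
    have hcond : ∀ t ∈ Ici (0:ℝ), -(NS t * NI t * MI t * (a * (1 - MS t) + b * MS t))
        + ε * NS t ≤ 0 := by
      intro t ht
      obtain ⟨⟨h1, _⟩, ⟨h2, h2'⟩, _, ⟨h3, h3'⟩, _⟩ := hbnd t ht
      obtain ⟨hp0, hpb, _⟩ := hP t ht
      have hni := hNIlb t ht
      have hmi := hMIm t ht
      have e1 : (1 - NS0) * m ≤ NI t * MI t :=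
        mul_le_mul hni hmi hm0.le h2
      have e2 : (1 - NS0) * m * b ≤ NI t * MI t * (a * (1 - MS t) + b * MS t) :=
        mul_le_mul e1 hpb hb0 (mul_nonneg h2 h3)
      nlinarith [mul_le_mul_of_nonneg_left e2 h1]
    have key := le_exp_aux (k := ε) hdNS hcond
    intro t ht
    have := key t ht
    rwa [hNSinit] at this
  -- exponential decay of 1 - MS
  have hMSub : ∀ t ∈ Ici (0:ℝ), 1 - MS t ≤ (1 - MS0) * Real.exp (-(δ * t)) := by
    have hcond : ∀ t ∈ Ici (0:ℝ), -(NI t * MI t * (a - b) * (1 - MS t) * MS t)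
        + δ * (1 - MS t) ≤ 0 := by
      intro t ht
      obtain ⟨_, ⟨h2, h2'⟩, ⟨hms0, hms1⟩, ⟨h3, h3'⟩, _⟩ := hbnd t ht
      have hni := hNIlb t ht
      have hmi := hMIm t ht
      have e1 : (1 - NS0) * m ≤ NI t * MI t :=
        mul_le_mul hni hmi hm0.le h2
      have e2 : (1 - NS0) * m * (a - b) ≤ NI t * MI t * (a - b) :=
        mul_le_mul_of_nonneg_right e1 (by linarith)
      have e3 : (1 - NS0) * m * (a - b) * MS0 ≤ NI t * MI t * (a - b) * MS t :=
        mul_le_mul e2 (hMSlb t ht) hMS0.1.le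
          (mul_nonneg (mul_nonneg h2 h3) (by linarith))
      nlinarith [mul_le_mul_of_nonneg_right e3 (by linarith : (0:ℝ) ≤ 1 - MS t)]
    have key := le_exp_aux (f := fun s => 1 - MS s)
      (f' := fun s => -(NI s * MI s * (a - b) * (1 - MS s) * MS s)) (k := δ)
      (fun t ht => (hdMS t ht).const_sub 1) hcond
    intro t ht
    have := key t ht
    rwa [hMSinit] at this
  -- limit of NS
  have hexp : Tendsto (fun t : ℝ => Real.exp (-(ε * t))) atTop (nhds 0) :=
    Real.tendsto_exp_atBot.comp
      (tendsto_neg_atTop_atBot.comp (Tendsto.const_mul_atTop hε0 tendsto_id))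
  have hNSlim : Tendsto NS atTop (nhds 0) := by
    apply tendsto_of_tendsto_of_tendsto_of_le_of_le' (tendsto_const_nhds (x := (0:ℝ)))
      (by simpa using hexp.const_mul NS0)
    · filter_upwards [eventually_ge_atTop (0:ℝ)] with t ht
      exact (hbnd t ht).1.1
    · filter_upwards [eventually_ge_atTop (0:ℝ)] with t ht
      exact hNSub t ht
  -- limit of NI
  have hNIlim : Tendsto NI atTop (nhds 1) := by
    have h1 : Tendsto (fun t => 1 - NS t) atTop (nhds (1 - 0)) :=
      tendsto_const_nhds.sub hNSlim
    rw [sub_zero] at h1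
    apply h1.congr'
    filter_upwards [eventually_ge_atTop (0:ℝ)] with t ht
    have := (hbnd t ht).2.2.2.2
    linarith
  -- limit of MS
  have hexpδ : Tendsto (fun t : ℝ => Real.exp (-(δ * t))) atTop (nhds 0) :=
    Real.tendsto_exp_atBot.comp
      (tendsto_neg_atTop_atBot.comp (Tendsto.const_mul_atTop hδ0 tendsto_id))
  have hMSlim : Tendsto MS atTop (nhds 1) := by
    have hlow : Tendsto (fun t => 1 - (1 - MS0) * Real.exp (-(δ * t))) atTop
        (nhds (1 - (1 - MS0) * 0)) :=
      tendsto_const_nhds.sub (hexpδ.const_mul (1 - MS0))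
    rw [mul_zero, sub_zero] at hlow
    apply tendsto_of_tendsto_of_tendsto_of_le_of_le' hlow
      (tendsto_const_nhds (x := (1:ℝ)))
    · filter_upwards [eventually_ge_atTop (0:ℝ)] with t ht
      linarith [hMSub t ht]
    · filter_upwards [eventually_ge_atTop (0:ℝ)] with t ht
      exact (hbnd t ht).2.2.1.2
  -- conserved quantity
  set W : ℝ → ℝ := fun s => NI s * MI s + NS s * (A * (1 - MS s) + B * MS s) with hWdef
  have hW : ∀ x ∈ Ici (0:ℝ), HasDerivWithinAt W 0 (Ici 0) x := by
    intro t ht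
    have hr : HasDerivWithinAt (fun s => A * (1 - MS s) + B * MS s)
        (A * -(NI t * MI t * (a - b) * (1 - MS t) * MS t)
          + B * (NI t * MI t * (a - b) * (1 - MS t) * MS t)) (Ici 0) t :=
      (((hdMS t ht).const_sub 1).const_mul A).add ((hdMS t ht).const_mul B)
    have hcomb := ((hdNI t ht).mul (hdMI t ht)).add ((hdNS t ht).mul hr)
    exact hcomb.congr_deriv (by ring)
  have hWconst : ∀ t ∈ Ici (0:ℝ), W t = W 0 := by
    intro t ht
    have hcont : ContinuousOn W (Icc 0 t) := fun x hx =>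
      ((hW x hx.1).continuousWithinAt).mono Icc_subset_Ici_self
    exact constant_of_has_deriv_right_zero hcont
      (fun x hx => (hW x hx.1).mono (Ici_subset_Ici.2 hx.1)) t ⟨ht, le_rfl⟩
  -- limit of MI
  have hrlim : Tendsto (fun t => A * (1 - MS t) + B * MS t) atTop
      (nhds (A * (1 - 1) + B * 1)) :=
    ((tendsto_const_nhds.sub hMSlim).const_mul A).add (hMSlim.const_mul B)
  have hfin : Tendsto (fun t => (W 0 - NS t * (A * (1 - MS t) + B * MS t)) / NI t) atTop
      (nhds ((W 0 - 0 * (A * (1 - 1) + B * 1)) / 1)) :=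
    (tendsto_const_nhds.sub (hNSlim.mul hrlim)).div hNIlim one_ne_zero
  have hval : (W 0 - 0 * (A * (1 - 1) + B * 1)) / 1
      = (1 - NS0) * MI0 + NS0 * (A * (1 - MS0) + B * MS0) := by
    simp only [hWdef, hNIinit, hMIinit, hNSinit, hMSinit]
    ring
  rw [hval] at hfin
  have hMIlim : Tendsto MI atTop
      (nhds ((1 - NS0) * MI0 + NS0 * (A * (1 - MS0) + B * MS0))) := by
    apply hfin.congr'
    filter_upwards [eventually_ge_atTop (0:ℝ)] with t ht
    have hni : (0:ℝ) < NI t := lt_of_lt_of_le (by linarith [hNS0.2]) (hNIlb t ht)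
    have hw := hWconst t ht
    simp only [hWdef] at hw ⊢
    field_simp
    linarith [hw]
  exact ⟨hNSlim, hNIlim, hMSlim, hMIlim⟩
end

section
/- Long-time behaviour when q(1,1) = 0 and 0 < q(0,1) ≤ 1 (Proposition 3.5): Assume b = 0 and 0 < a ≤ 1. Then the solution of the macroscopic Dirac ODE system satisfies: N_S(t) → N_{S,0} M_{S,0}, N_I(t) → 1 - N_{S,0} M_{S,0}, M_S(t) → 1 as t → ∞, and M_I(t) → A - (A - M_{I,0})(1 - N_{S,0}) / (1 - N_{S,0} M_{S,0}) as t → ∞. -/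
open Set Filter

lemma aux_le_init (f f' : ℝ → ℝ)
    (hd : ∀ t ∈ Ici (0:ℝ), HasDerivWithinAt f (f' t) (Ici 0) t)
    (hle : ∀ t ∈ Ici (0:ℝ), f' t ≤ 0) : ∀ t ∈ Ici (0:ℝ), f t ≤ f 0 := by
  intro t ht
  have hcont0 : ContinuousOn f (Ici 0) := fun x hx => (hd x hx).continuousWithinAt
  have hcont : ContinuousOn f (Icc 0 t) := hcont0.mono Icc_subset_Ici_self
  have := image_le_of_deriv_right_le_deriv_boundary (f := f) (f' := f')
    (B := fun _ => f 0) (B' := fun _ => 0) hcont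
    (fun x hx => (hd x hx.1).mono (Ici_subset_Ici.2 hx.1)) (le_refl (f 0))
    continuousOn_const
    (fun x _ => hasDerivWithinAt_const x _ (f 0))
    (fun x hx => hle x hx.1)
  exact this ⟨ht, le_rfl⟩

lemma aux_const (f f' : ℝ → ℝ)
    (hd : ∀ t ∈ Ici (0:ℝ), HasDerivWithinAt f (f' t) (Ici 0) t)
    (h0 : ∀ t ∈ Ici (0:ℝ), f' t = 0) : ∀ t ∈ Ici (0:ℝ), f t = f 0 := by
  intro t ht
  have hcont0 : ContinuousOn f (Ici 0) := fun x hx => (hd x hx).continuousWithinAt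
  have hcont : ContinuousOn f (Icc 0 t) := hcont0.mono Icc_subset_Ici_self
  exact constant_of_has_deriv_right_zero hcont
    (fun x hx => h0 x hx.1 ▸ (hd x hx.1).mono (Ici_subset_Ici.2 hx.1)) t ⟨ht, le_rfl⟩



/-- **Proposition 3.5** (long-time behaviour when `q(1,1) = 0` and `0 < q(0,1) ≤ 1`).
Here `a = q(0,1)`, `b = q(1,1)`, `A = Q̄(0,1)`, `B = Q̄(1,1)`. -/
theorem longtime_prop2
    (a b A B NS0 MS0 MI0 : ℝ)
    (ha0 : 0 ≤ a) (ha1 : a ≤ 1) (hb0 : 0 ≤ b) (hb1 : b ≤ 1)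
    (hA0 : 0 < A) (hA1 : A ≤ 1) (hB0 : 0 < B) (hB1 : B ≤ 1)
    (NS NI MS MI : ℝ → ℝ)
    (hNSinit : NS 0 = NS0) (hNS0 : NS0 ∈ Ioo (0:ℝ) 1)
    (hNIinit : NI 0 = 1 - NS0)
    (hMSinit : MS 0 = MS0) (hMS0 : MS0 ∈ Ioo (0:ℝ) 1)
    (hMIinit : MI 0 = MI0) (hMI0 : MI0 ∈ Ioo (0:ℝ) 1)
    (hdNS : ∀ t ∈ Ici (0:ℝ), HasDerivWithinAt NS
      (-(NS t * NI t * MI t * (a * (1 - MS t) + b * MS t))) (Ici 0) t)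
    (hdNI : ∀ t ∈ Ici (0:ℝ), HasDerivWithinAt NI
      (NS t * NI t * MI t * (a * (1 - MS t) + b * MS t)) (Ici 0) t)
    (hdMS : ∀ t ∈ Ici (0:ℝ), HasDerivWithinAt MS
      (NI t * MI t * (a - b) * (1 - MS t) * MS t) (Ici 0) t)
    (hdMI : ∀ t ∈ Ici (0:ℝ), HasDerivWithinAt MI
      (NS t * MI t * (A * a * (1 - MS t) + B * b * MS t
        - MI t * (a * (1 - MS t) + b * MS t))) (Ici 0) t)
    (hbnd : ∀ t ∈ Ici (0:ℝ), NS t ∈ Icc (0:ℝ) 1 ∧ NI t ∈ Icc (0:ℝ) 1 ∧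
      MS t ∈ Icc (0:ℝ) 1 ∧ MI t ∈ Icc (0:ℝ) 1 ∧ NS t + NI t = 1)
    (hb : b = 0) (hapos : 0 < a)
    : Tendsto NS atTop (nhds (NS0 * MS0)) ∧ Tendsto NI atTop (nhds (1 - NS0 * MS0)) ∧
    Tendsto MS atTop (nhds 1) ∧
    Tendsto MI atTop (nhds (A - (A - MI0) * (1 - NS0) / (1 - NS0 * MS0))) := by
  subst hb
  obtain ⟨hNS0a, hNS0b⟩ := hNS0
  obtain ⟨hMS0a, hMS0b⟩ := hMS0
  obtain ⟨hMI0a, hMI0b⟩ := hMI0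
  -- Step 1 : MS is nondecreasing from MS0
  have hMSge : ∀ t ∈ Ici (0:ℝ), MS0 ≤ MS t := by
    intro t ht
    have key := aux_le_init (fun t => -MS t)
      (fun t => -(NI t * MI t * (a - 0) * (1 - MS t) * MS t))
      (fun t ht => (hdMS t ht).neg)
      (fun t ht => by
        obtain ⟨_, hNI, hMS, hMI, _⟩ := hbnd t ht
        have h1 : (0:ℝ) ≤ NI t * MI t * (a - 0) * (1 - MS t) * MS t :=
          mul_nonneg (mul_nonneg (mul_nonneg (mul_nonneg hNI.1 hMI.1)
            (by linarith)) (by linarith [hMS.2])) hMS.1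
        simpa using h1) t ht
    simp only [hMSinit] at key
    linarith [key]
  -- Step 2 : NS * MS is conserved
  have hProd : ∀ t ∈ Ici (0:ℝ), NS t * MS t = NS0 * MS0 := by
    intro t ht
    have key := aux_const (fun t => NS t * MS t)
      (fun t => -(NS t * NI t * MI t * (a * (1 - MS t) + 0 * MS t)) * MS t
        + NS t * (NI t * MI t * (a - 0) * (1 - MS t) * MS t))
      (fun t ht => (hdNS t ht).mul (hdMS t ht))
      (fun t ht => by ring) t ht
    simp only [hNSinit, hMSinit] at key
    exact key
  -- Step 3 : NS t ≤ NS0, hence NI t ≥ 1 - NS0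
  have hNSle : ∀ t ∈ Ici (0:ℝ), NS t ≤ NS0 := by
    intro t ht
    obtain ⟨hNS, _, _, _, _⟩ := hbnd t ht
    have h1 : NS t * MS0 ≤ NS t * MS t := mul_le_mul_of_nonneg_left (hMSge t ht) hNS.1
    rw [hProd t ht] at h1
    have := (mul_le_mul_iff_of_pos_right hMS0a).1 h1
    linarith
  have hNIge : ∀ t ∈ Ici (0:ℝ), 1 - NS0 ≤ NI t := by
    intro t ht
    obtain ⟨_, _, _, _, hsum⟩ := hbnd t ht
    have := hNSle t ht
    linarith
  -- Step 4 : (A - MI) * NI is conserved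
  have hInv2 : ∀ t ∈ Ici (0:ℝ), (A - MI t) * NI t = (A - MI0) * (1 - NS0) := by
    intro t ht
    have key := aux_const (fun t => (A - MI t) * NI t)
      (fun t => (0 - NS t * MI t * (A * a * (1 - MS t) + B * 0 * MS t
          - MI t * (a * (1 - MS t) + 0 * MS t))) * NI t
        + (A - MI t) * (NS t * NI t * MI t * (a * (1 - MS t) + 0 * MS t)))
      (fun t ht => ((hasDerivWithinAt_const t _ A).sub (hdMI t ht)).mul (hdNI t ht))
      (fun t ht => by ring) t ht
    simp only [hMIinit, hNIinit] at key
    exact key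
  -- Step 5 : MI bounded below by m = min MI0 A
  set m : ℝ := min MI0 A with hm
  have hmpos : 0 < m := lt_min hMI0a hA0
  have hMIge : ∀ t ∈ Ici (0:ℝ), m ≤ MI t := by
    intro t ht
    have hNIt : 1 - NS0 ≤ NI t := hNIge t ht
    have hNIpos : 0 < NI t := by linarith
    have hinv := hInv2 t ht
    have hne : NI t ≠ 0 := ne_of_gt hNIpos
    have hMIeq : A - MI t = (A - MI0) * (1 - NS0) / NI t := (eq_div_iff hne).2 hinv
    rcases le_or_gt MI0 A with hcase | hcase
    · have hc : 0 ≤ (A - MI0) * (1 - NS0) := mul_nonneg (by linarith) (by linarith)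
      have hdiv : (A - MI0) * (1 - NS0) / NI t ≤ (A - MI0) * (1 - NS0) / (1 - NS0) :=
        div_le_div_of_nonneg_left hc (by linarith) hNIt
      have heq : (A - MI0) * (1 - NS0) / (1 - NS0) = A - MI0 := by
        rw [mul_div_assoc, div_self (by linarith : (1:ℝ) - NS0 ≠ 0), mul_one]
      have hmin : m ≤ MI0 := min_le_left _ _
      linarith [hdiv, heq, hMIeq]
    · have hc : (A - MI0) * (1 - NS0) ≤ 0 :=
        mul_nonpos_of_nonpos_of_nonneg (by linarith) (by linarith)
      have hdiv : (A - MI0) * (1 - NS0) / NI t ≤ 0 := div_nonpos_of_nonpos_of_nonneg hc hNIpos.le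
      have hmin : m ≤ A := min_le_right _ _
      linarith [hMIeq, hdiv]
  -- Step 6 : Gronwall bound  (1 - MS t) * exp (ε t) ≤ 1 - MS0
  set ε : ℝ := a * (1 - NS0) * m * MS0 with hε
  have hεpos : 0 < ε := by
    apply mul_pos (mul_pos (mul_pos hapos (by linarith)) hmpos) hMS0a
  have hGron : ∀ t ∈ Ici (0:ℝ), (1 - MS t) * Real.exp (ε * t) ≤ 1 - MS0 := by
    have key := aux_le_init (fun t => (1 - MS t) * Real.exp (ε * t))
      (fun t => (0 - NI t * MI t * (a - 0) * (1 - MS t) * MS t) * Real.exp (ε * t)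
        + (1 - MS t) * (Real.exp (ε * t) * ε))
      (fun t ht => by
        have hexp : HasDerivAt (fun t => Real.exp (ε * t)) (Real.exp (ε * t) * ε) t := by
          simpa using (HasDerivAt.exp ((hasDerivAt_id t).const_mul ε))
        exact ((hasDerivWithinAt_const t _ (1:ℝ)).sub (hdMS t ht)).mul hexp.hasDerivWithinAt)
      (fun t ht => by
        obtain ⟨_, hNI, hMS, hMI, _⟩ := hbnd t ht
        have hNIt : 1 - NS0 ≤ NI t := hNIge t ht
        have hMIt : m ≤ MI t := hMIge t ht
        have hMSt : MS0 ≤ MS t := hMSge t ht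
        have hkey : ε * (1 - MS t) ≤ NI t * MI t * (a - 0) * (1 - MS t) * MS t := by
          have h1 : (1 - NS0) * m ≤ NI t * MI t :=
            mul_le_mul hNIt hMIt hmpos.le (by linarith)
          have h2 : (1 - NS0) * m * MS0 ≤ NI t * MI t * MS t :=
            mul_le_mul h1 hMSt hMS0a.le (by nlinarith)
          have h3 : 0 ≤ a * (1 - MS t) := mul_nonneg ha0 (by linarith [hMS.2])
          have := mul_le_mul_of_nonneg_left h2 h3
          nlinarith [this]
        have hexppos : 0 < Real.exp (ε * t) := Real.exp_pos _
        have h5 := mul_le_mul_of_nonneg_right hkey hexppos.le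
        have h6 : (0 - NI t * MI t * (a - 0) * (1 - MS t) * MS t) * Real.exp (ε * t)
            + (1 - MS t) * (Real.exp (ε * t) * ε) ≤ 0 := by nlinarith [h5]
        exact h6)
    intro t ht
    have := key t ht
    simp only [hMSinit, mul_zero, Real.exp_zero, mul_one] at this
    linarith [this]
  -- Step 7 : MS → 1
  have hexp0 : Tendsto (fun t : ℝ => Real.exp (-(ε * t))) atTop (nhds 0) := by
    have h1 : Tendsto (fun t : ℝ => ε * t) atTop atTop :=
      Tendsto.const_mul_atTop hεpos tendsto_id
    have h2 : Tendsto (fun t : ℝ => -(ε * t)) atTop atBot := tendsto_neg_atBot_iff.2 h1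
    exact Real.tendsto_exp_atBot.comp h2
  have hMSlow : ∀ t ∈ Ici (0:ℝ), 1 - (1 - MS0) * Real.exp (-(ε * t)) ≤ MS t := by
    intro t ht
    have hG := hGron t ht
    have hexppos : 0 < Real.exp (ε * t) := Real.exp_pos _
    have h1 : 1 - MS t ≤ (1 - MS0) * Real.exp (-(ε * t)) := by
      rw [Real.exp_neg, ← div_eq_mul_inv, le_div_iff₀ hexppos]
      linarith [hG]
    linarith
  have hMStend : Tendsto MS atTop (nhds 1) := by
    have hlow : Tendsto (fun t : ℝ => 1 - (1 - MS0) * Real.exp (-(ε * t))) atTop (nhds 1) := by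
      have h0 : Tendsto (fun t : ℝ => 1 - (1 - MS0) * Real.exp (-(ε * t))) atTop
          (nhds (1 - (1 - MS0) * 0)) :=
        Tendsto.sub tendsto_const_nhds (Tendsto.mul tendsto_const_nhds hexp0)
      simpa using h0
    apply tendsto_of_tendsto_of_tendsto_of_le_of_le' hlow tendsto_const_nhds
    · filter_upwards [eventually_ge_atTop (0:ℝ)] with t ht
      exact hMSlow t ht
    · filter_upwards [eventually_ge_atTop (0:ℝ)] with t ht
      exact (hbnd t ht).2.2.1.2
  -- Step 8 : NS → NS0 * MS0
  have hMSne : ∀ t ∈ Ici (0:ℝ), MS t ≠ 0 := fun t ht =>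
    (lt_of_lt_of_le hMS0a (hMSge t ht)).ne'
  have hNSeq : (fun t => NS0 * MS0 / MS t) =ᶠ[atTop] NS := by
    filter_upwards [eventually_ge_atTop (0:ℝ)] with t ht
    rw [div_eq_iff (hMSne t ht)]
    exact (hProd t ht).symm
  have hNStend : Tendsto NS atTop (nhds (NS0 * MS0)) := by
    have h1 : Tendsto (fun t => NS0 * MS0 / MS t) atTop (nhds (NS0 * MS0 / 1)) :=
      tendsto_const_nhds.div hMStend one_ne_zero
    rw [div_one] at h1
    exact h1.congr' hNSeq
  -- Step 9 : NI → 1 - NS0 * MS0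
  have hNIeq : (fun t => 1 - NS t) =ᶠ[atTop] NI := by
    filter_upwards [eventually_ge_atTop (0:ℝ)] with t ht
    have := (hbnd t ht).2.2.2.2
    linarith
  have hNItend : Tendsto NI atTop (nhds (1 - NS0 * MS0)) :=
    (tendsto_const_nhds.sub hNStend).congr' hNIeq
  -- Step 10 : MI → A - (A - MI0)(1 - NS0)/(1 - NS0 MS0)
  have hlim_ne : (1 : ℝ) - NS0 * MS0 ≠ 0 := by
    have : NS0 * MS0 < 1 := by nlinarith
    linarith
  have hMIeq : (fun t => A - (A - MI0) * (1 - NS0) / NI t) =ᶠ[atTop] MI := by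
    filter_upwards [eventually_ge_atTop (0:ℝ)] with t ht
    have hNIpos : 0 < NI t := by linarith [hNIge t ht]
    have h4 : A - MI t = (A - MI0) * (1 - NS0) / NI t :=
      (eq_div_iff (ne_of_gt hNIpos)).2 (hInv2 t ht)
    linarith [h4]
  have hMItend : Tendsto MI atTop (nhds (A - (A - MI0) * (1 - NS0) / (1 - NS0 * MS0))) := by
    have h1 : Tendsto (fun t => A - (A - MI0) * (1 - NS0) / NI t) atTop
        (nhds (A - (A - MI0) * (1 - NS0) / (1 - NS0 * MS0))) :=
      tendsto_const_nhds.sub (tendsto_const_nhds.div hNItend hlim_ne)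
    exact h1.congr' hMIeq
  exact ⟨hNStend, hNItend, hMStend, hMItend⟩
end

section
/- Long-time behaviour when q(0,1) = q(1,1) = q* > 0 (Proposition 3.6): Assume a = b = q* with 0 < q* ≤ 1. Then the solution of the macroscopic Dirac ODE system satisfies: M_S(t) = M_{S,0} for all t ≥ 0, N_S(t) → 0 and N_I(t) → 1 as t → ∞, and M_I(t) → (1 - N_{S,0}) M_{I,0} + N_{S,0} (A (1 - M_{S,0}) + B M_{S,0}) as t → ∞. -/
open Set Filter

theorem myAntitoneOn (f f' : ℝ → ℝ)
    (hf : ∀ t ∈ Ici (0:ℝ), HasDerivWithinAt f (f' t) (Ici 0) t)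
    (h : ∀ t ∈ Ici (0:ℝ), f' t ≤ 0) :
    AntitoneOn f (Ici 0) := by
  apply antitoneOn_of_deriv_nonpos (convex_Ici 0)
      (fun t ht => (hf t ht).continuousWithinAt)
  · intro t ht
    rw [interior_Ici] at ht
    exact ((hf t (mem_Ici.2 (mem_Ioi.1 ht).le)).hasDerivAt (Ici_mem_nhds ht)).differentiableAt.differentiableWithinAt
  · intro t ht
    rw [interior_Ici] at ht
    rw [((hf t (mem_Ici.2 (mem_Ioi.1 ht).le)).hasDerivAt (Ici_mem_nhds ht)).deriv]
    exact h t (mem_Ici.2 (mem_Ioi.1 ht).le)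

theorem myConstOn (f f' : ℝ → ℝ)
    (hf : ∀ t ∈ Ici (0:ℝ), HasDerivWithinAt f (f' t) (Ici 0) t)
    (h : ∀ t ∈ Ici (0:ℝ), f' t = 0) :
    ∀ t ∈ Ici (0:ℝ), f t = f 0 := by
  intro t ht
  have h1 := myAntitoneOn f f' hf (fun t ht => (h t ht).le) (self_mem_Ici) ht ht
  have h2 := myAntitoneOn (fun s => -f s) (fun s => -(f' s))
      (fun t ht => (hf t ht).neg) (fun t ht => by simp [h t ht]) (self_mem_Ici) ht ht
  simp only [neg_le_neg_iff] at h2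
  linarith

/-- **Proposition 3.6** (long-time behaviour when `q(0,1) = q(1,1) = q* > 0`).
Here `a = q(0,1)`, `b = q(1,1)`, `A = Q̄(0,1)`, `B = Q̄(1,1)`. -/
theorem longtime_prop3
    (a b A B NS0 MS0 MI0 : ℝ)
    (ha0 : 0 ≤ a) (ha1 : a ≤ 1) (hb0 : 0 ≤ b) (hb1 : b ≤ 1)
    (hA0 : 0 < A) (hA1 : A ≤ 1) (hB0 : 0 < B) (hB1 : B ≤ 1)
    (NS NI MS MI : ℝ → ℝ)
    (hNSinit : NS 0 = NS0) (hNS0 : NS0 ∈ Ioo (0:ℝ) 1)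
    (hNIinit : NI 0 = 1 - NS0)
    (hMSinit : MS 0 = MS0) (hMS0 : MS0 ∈ Ioo (0:ℝ) 1)
    (hMIinit : MI 0 = MI0) (hMI0 : MI0 ∈ Ioo (0:ℝ) 1)
    (hdNS : ∀ t ∈ Ici (0:ℝ), HasDerivWithinAt NS
      (-(NS t * NI t * MI t * (a * (1 - MS t) + b * MS t))) (Ici 0) t)
    (hdNI : ∀ t ∈ Ici (0:ℝ), HasDerivWithinAt NI
      (NS t * NI t * MI t * (a * (1 - MS t) + b * MS t)) (Ici 0) t)
    (hdMS : ∀ t ∈ Ici (0:ℝ), HasDerivWithinAt MS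
      (NI t * MI t * (a - b) * (1 - MS t) * MS t) (Ici 0) t)
    (hdMI : ∀ t ∈ Ici (0:ℝ), HasDerivWithinAt MI
      (NS t * MI t * (A * a * (1 - MS t) + B * b * MS t
        - MI t * (a * (1 - MS t) + b * MS t))) (Ici 0) t)
    (hbnd : ∀ t ∈ Ici (0:ℝ), NS t ∈ Icc (0:ℝ) 1 ∧ NI t ∈ Icc (0:ℝ) 1 ∧
      MS t ∈ Icc (0:ℝ) 1 ∧ MI t ∈ Icc (0:ℝ) 1 ∧ NS t + NI t = 1)
    (hab : a = b) (hapos : 0 < a)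
    : (∀ t ∈ Ici (0:ℝ), MS t = MS0) ∧
    Tendsto NS atTop (nhds 0) ∧ Tendsto NI atTop (nhds 1) ∧
    Tendsto MI atTop (nhds ((1 - NS0) * MI0 + NS0 * (A * (1 - MS0) + B * MS0))) := by
  obtain rfl : b = a := hab.symm
  obtain ⟨hNS0pos, hNS0lt⟩ := hNS0
  obtain ⟨hMS0pos, hMS0lt⟩ := hMS0
  obtain ⟨hMI0pos, hMI0lt⟩ := hMI0
  -- MS is constant
  have hMSc : ∀ t ∈ Ici (0:ℝ), MS t = MS0 := by
    intro t ht
    rw [← hMSinit]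
    exact myConstOn MS (fun s => NI s * MI s * (b - b) * (1 - MS s) * MS s) hdMS
      (fun s hs => by ring) t ht
  have hNIeq : ∀ t ∈ Ici (0:ℝ), NI t = 1 - NS t := fun t ht => by
    have := (hbnd t ht).2.2.2.2; linarith
  set C : ℝ := A * (1 - MS0) + B * MS0 with hC
  clear_value C
  have hCpos : 0 < C := by nlinarith
  have hCle : C ≤ 1 := by nlinarith
  -- NS is antitone
  have hNSanti : AntitoneOn NS (Ici 0) := by
    apply myAntitoneOn NS
      (fun s => -(NS s * NI s * MI s * (b * (1 - MS s) + b * MS s))) hdNS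
    intro s hs
    obtain ⟨hNSb, hNIb, hMSb, hMIb, _⟩ := hbnd s hs
    have h4 : 0 ≤ b * (1 - MS s) + b * MS s := by nlinarith [hMSb.1, hMSb.2]
    have := mul_nonneg (mul_nonneg (mul_nonneg hNSb.1 hNIb.1) hMIb.1) h4
    linarith
  have hNSle : ∀ t ∈ Ici (0:ℝ), NS t ≤ NS0 := fun t ht => by
    rw [← hNSinit]; exact hNSanti self_mem_Ici ht ht
  -- conserved quantity F = MI + NS * (C - MI)
  have hF : ∀ t ∈ Ici (0:ℝ), MI t + NS t * (C - MI t) = MI0 + NS0 * (C - MI0) := by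
    intro t ht
    have key := myConstOn (fun s => MI s + NS s * (C - MI s))
      (fun s => (NS s * MI s * (A * b * (1 - MS s) + B * b * MS s
        - MI s * (b * (1 - MS s) + b * MS s)))
        + (-(NS s * NI s * MI s * (b * (1 - MS s) + b * MS s)) * (C - MI s)
          + NS s * (0 - (NS s * MI s * (A * b * (1 - MS s) + B * b * MS s
            - MI s * (b * (1 - MS s) + b * MS s))))))
      (fun s hs => (hdMI s hs).add ((hdNS s hs).mul
        ((hasDerivWithinAt_const s _ C).sub (hdMI s hs))))
      (fun s hs => by simp only [hMSc s hs, hNIeq s hs, hC]; ring) t ht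
    simpa only [hMIinit, hNSinit] using key
  -- MI lower bound
  have hMIlb : ∀ t ∈ Ici (0:ℝ), MI0 * (1 - NS0) ≤ MI t := by
    intro t ht
    obtain ⟨hNSb, _, _, hMIb, _⟩ := hbnd t ht
    have h1 := hF t ht
    have h2 := hNSle t ht
    nlinarith [mul_nonneg hMIb.1 hNSb.1, mul_nonneg hCpos.le (sub_nonneg.2 h2)]
  set m0 : ℝ := MI0 * (1 - NS0) with hm0
  clear_value m0
  have hm0pos : 0 < m0 := by rw [hm0]; nlinarith
  set k : ℝ := b * ((1 - NS0) * m0) with hk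
  clear_value k
  have hkpos : 0 < k := by rw [hk]; exact mul_pos hapos (mul_pos (by linarith) hm0pos)
  -- Gronwall-type bound
  have hg : AntitoneOn (fun s => NS s * Real.exp (k * s)) (Ici 0) := by
    apply myAntitoneOn _
      (fun s => -(NS s * NI s * MI s * (b * (1 - MS s) + b * MS s)) * Real.exp (k * s)
        + NS s * (Real.exp (k * s) * (k * 1)))
    · intro s hs
      exact (hdNS s hs).mul (((hasDerivAt_id s).const_mul k).exp.hasDerivWithinAt)
    · intro s hs
      obtain ⟨hNSb, hNIb, hMSb, hMIb, hsum⟩ := hbnd s hs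
      have hNI' : 1 - NS0 ≤ NI s := by
        have := hNSle s hs; have := hNIeq s hs; linarith
      have hMI' := hMIlb s hs
      have heq : -(NS s * NI s * MI s * (b * (1 - MS s) + b * MS s)) * Real.exp (k * s)
          + NS s * (Real.exp (k * s) * (k * 1))
          = Real.exp (k * s) * (NS s * (k - b * (NI s * MI s))) := by ring
      rw [heq]
      have h5 : k ≤ b * (NI s * MI s) := by
        rw [hk]
        have hmm : (1 - NS0) * m0 ≤ NI s * MI s :=
          mul_le_mul hNI' hMI' hm0pos.le hNIb.1
        nlinarith
      have h6 : NS s * (k - b * (NI s * MI s)) ≤ 0 :=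
        mul_nonpos_of_nonneg_of_nonpos hNSb.1 (by linarith)
      exact mul_nonpos_of_nonneg_of_nonpos (Real.exp_pos _).le h6
  have hNSbound : ∀ t ∈ Ici (0:ℝ), NS t ≤ NS0 * Real.exp (-(k * t)) := by
    intro t ht
    have hh := hg self_mem_Ici ht ht
    simp only [mul_zero, Real.exp_zero, mul_one, hNSinit] at hh
    have hexp := Real.exp_pos (k * t)
    rw [Real.exp_neg, mul_comm NS0, inv_mul_eq_div, le_div_iff₀ hexp]
    exact hh
  -- Tendsto NS
  have hub : Tendsto (fun t => NS0 * Real.exp (-(k * t))) atTop (nhds 0) := by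
    have h1 : Tendsto (fun t : ℝ => k * t) atTop atTop :=
      Tendsto.const_mul_atTop hkpos tendsto_id
    have h2 : Tendsto (fun t : ℝ => Real.exp (-(k * t))) atTop (nhds 0) :=
      Real.tendsto_exp_neg_atTop_nhds_zero.comp h1
    simpa using h2.const_mul NS0
  have hNStend : Tendsto NS atTop (nhds 0) := by
    apply tendsto_of_tendsto_of_tendsto_of_le_of_le' tendsto_const_nhds hub
    · exact (eventually_ge_atTop 0).mono fun t ht => (hbnd t ht).1.1
    · exact (eventually_ge_atTop 0).mono fun t ht => hNSbound t ht
  -- Tendsto NI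
  have hNItend : Tendsto NI atTop (nhds 1) := by
    have h1 : Tendsto (fun t => 1 - NS t) atTop (nhds 1) := by
      simpa using tendsto_const_nhds.sub hNStend
    exact h1.congr' ((eventually_ge_atTop 0).mono fun t ht => (hNIeq t ht).symm)
  -- Tendsto MI
  have hMItend : Tendsto MI atTop (nhds (MI0 + NS0 * (C - MI0))) := by
    apply tendsto_of_tendsto_of_tendsto_of_le_of_le'
      (g := fun t => (MI0 + NS0 * (C - MI0)) - NS t)
      (h := fun t => (MI0 + NS0 * (C - MI0)) + NS t)
    · simpa using (tendsto_const_nhds (x := MI0 + NS0 * (C - MI0))).sub hNStend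
    · simpa using (tendsto_const_nhds (x := MI0 + NS0 * (C - MI0))).add hNStend
    · refine (eventually_ge_atTop 0).mono fun t ht => ?_
      obtain ⟨hNSb, _, _, hMIb, _⟩ := hbnd t ht
      have h1 := hF t ht
      have hx : NS t * (C - MI t) ≤ NS t := by
        have h2 := mul_le_mul_of_nonneg_left
          (show C - MI t ≤ 1 by linarith [hCle, hMIb.1]) hNSb.1
        rw [mul_one] at h2
        exact h2
      linarith
    · refine (eventually_ge_atTop 0).mono fun t ht => ?_
      obtain ⟨hNSb, _, _, hMIb, _⟩ := hbnd t ht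
      have h1 := hF t ht
      have hy : -NS t ≤ NS t * (C - MI t) := by
        have h2 := mul_le_mul_of_nonneg_left
          (show (-1 : ℝ) ≤ C - MI t by linarith [hCpos, hMIb.2]) hNSb.1
        rw [mul_neg_one] at h2
        exact h2
      linarith
  refine ⟨hMSc, hNStend, hNItend, ?_⟩
  have : MI0 + NS0 * (C - MI0) = (1 - NS0) * MI0 + NS0 * C := by ring
  rw [← this]
  exact hMItend
end

section
/- Power-law first integral when 0 < q(1,1) < q(0,1) ≤ 1 (equation (3.13) in the proof of Proposition 3.4): Assume 0 < b < a ≤ 1 and set p := a/(a - b). Then the solution of the macroscopic Dirac ODE system satisfies, for all t ≥ 0: 0 < M_S(t) < 1 and N_S(t) · M_S(t)^p · (1 - M_S(t))^{1-p} = N_{S,0} · M_{S,0}^p · (1 - M_{S,0})^{1-p}. -/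
open Set Filter

/-- Power-law first integral when `0 < q(1,1) < q(0,1) ≤ 1` (equation (3.13) in the
proof of Proposition 3.4), with `p = a/(a-b)` and real powers. -/
theorem powerlaw_first_integral
    (a b A B NS0 MS0 MI0 : ℝ)
    (ha0 : 0 ≤ a) (ha1 : a ≤ 1) (hb0 : 0 ≤ b) (hb1 : b ≤ 1)
    (hA0 : 0 < A) (hA1 : A ≤ 1) (hB0 : 0 < B) (hB1 : B ≤ 1)
    (NS NI MS MI : ℝ → ℝ)
    (hNSinit : NS 0 = NS0) (hNS0 : NS0 ∈ Ioo (0:ℝ) 1)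
    (hNIinit : NI 0 = 1 - NS0)
    (hMSinit : MS 0 = MS0) (hMS0 : MS0 ∈ Ioo (0:ℝ) 1)
    (hMIinit : MI 0 = MI0) (hMI0 : MI0 ∈ Ioo (0:ℝ) 1)
    (hdNS : ∀ t ∈ Ici (0:ℝ), HasDerivWithinAt NS
      (-(NS t * NI t * MI t * (a * (1 - MS t) + b * MS t))) (Ici 0) t)
    (hdNI : ∀ t ∈ Ici (0:ℝ), HasDerivWithinAt NI
      (NS t * NI t * MI t * (a * (1 - MS t) + b * MS t)) (Ici 0) t)
    (hdMS : ∀ t ∈ Ici (0:ℝ), HasDerivWithinAt MS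
      (NI t * MI t * (a - b) * (1 - MS t) * MS t) (Ici 0) t)
    (hdMI : ∀ t ∈ Ici (0:ℝ), HasDerivWithinAt MI
      (NS t * MI t * (A * a * (1 - MS t) + B * b * MS t
        - MI t * (a * (1 - MS t) + b * MS t))) (Ici 0) t)
    (hbnd : ∀ t ∈ Ici (0:ℝ), NS t ∈ Icc (0:ℝ) 1 ∧ NI t ∈ Icc (0:ℝ) 1 ∧
      MS t ∈ Icc (0:ℝ) 1 ∧ MI t ∈ Icc (0:ℝ) 1 ∧ NS t + NI t = 1)
    (hbpos : 0 < b) (hba : b < a)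
    : ∀ t ∈ Ici (0:ℝ), MS t ∈ Ioo (0:ℝ) 1 ∧
      NS t * MS t ^ (a / (a - b)) * (1 - MS t) ^ (1 - a / (a - b))
        = NS0 * MS0 ^ (a / (a - b)) * (1 - MS0) ^ (1 - a / (a - b)) := by
  have hab : (0:ℝ) < a - b := sub_pos.2 hba
  have ha : 0 < a := hbpos.trans hba
  set p : ℝ := a / (a - b) with hp
  have hpab : p * (a - b) = a := div_mul_cancel₀ a hab.ne'
  have hint : interior (Ici (0:ℝ)) = Ioi 0 := interior_Ici
  have hNScont : ContinuousOn NS (Ici 0) := fun t ht => (hdNS t ht).continuousWithinAt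
  have hMScont : ContinuousOn MS (Ici 0) := fun t ht => (hdMS t ht).continuousWithinAt
  -- MS is monotone nondecreasing
  have hMSmono : MonotoneOn MS (Ici 0) := by
    apply monotoneOn_of_hasDerivWithinAt_nonneg (convex_Ici 0) hMScont
      (f' := fun t => NI t * MI t * (a - b) * (1 - MS t) * MS t)
    · intro t ht
      rw [hint] at ht ⊢
      exact (hdMS t (mem_Ici.2 (mem_Ioi.1 ht).le)).mono Ioi_subset_Ici_self
    · intro t ht
      rw [hint] at ht
      obtain ⟨hNSb, hNIb, hMSb, hMIb, _⟩ := hbnd t (mem_Ici.2 (mem_Ioi.1 ht).le)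
      have h1 : 0 ≤ 1 - MS t := by linarith [hMSb.2]
      exact mul_nonneg (mul_nonneg (mul_nonneg (mul_nonneg hNIb.1 hMIb.1) hab.le) h1) hMSb.1
  have hMSpos : ∀ t ∈ Ici (0:ℝ), 0 < MS t := by
    intro t ht
    have := hMSmono (self_mem_Ici) ht ht
    rw [hMSinit] at this
    linarith [hMS0.1]
  -- NS is positive: NS t * exp(a t) is monotone
  have hNSpos : ∀ t ∈ Ici (0:ℝ), 0 < NS t := by
    intro t ht
    have hg : MonotoneOn (fun t => NS t * Real.exp (a * t)) (Ici 0) := by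
      apply monotoneOn_of_hasDerivWithinAt_nonneg (convex_Ici 0)
        (hNScont.mul (Real.continuous_exp.comp (continuous_const.mul continuous_id)).continuousOn)
        (f' := fun t => Real.exp (a * t) *
          (NS t * (a - NI t * MI t * (a * (1 - MS t) + b * MS t))))
      · intro s hs
        rw [hint] at hs ⊢
        have hexp : HasDerivAt (fun s : ℝ => Real.exp (a * s)) (Real.exp (a * s) * a) s := by
          have h1 : HasDerivAt (fun s : ℝ => a * s) a s := by
            simpa using (hasDerivAt_id s).const_mul a
          exact h1.exp
        have := ((hdNS s (mem_Ici.2 (mem_Ioi.1 hs).le)).mono Ioi_subset_Ici_self).mul hexp.hasDerivWithinAt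
        convert this using 1
        · rfl
        · rfl
        · rfl
        ring
      · intro s hs
        rw [hint] at hs
        obtain ⟨hNSb, hNIb, hMSb, hMIb, _⟩ := hbnd s (mem_Ici.2 (mem_Ioi.1 hs).le)
        have hE0 : 0 ≤ a * (1 - MS s) + b * MS s := by nlinarith [hMSb.1, hMSb.2]
        have hE1 : a * (1 - MS s) + b * MS s ≤ a := by nlinarith [hMSb.1]
        have hx1 : NI s * MI s ≤ 1 := mul_le_one₀ hNIb.2 hMIb.1 hMIb.2
        have hx0 : 0 ≤ NI s * MI s := mul_nonneg hNIb.1 hMIb.1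
        have : NI s * MI s * (a * (1 - MS s) + b * MS s) ≤ a * (1 - MS s) + b * MS s :=
          mul_le_of_le_one_left hE0 hx1
        have h2 : 0 ≤ a - NI s * MI s * (a * (1 - MS s) + b * MS s) := by linarith
        exact mul_nonneg (Real.exp_pos _).le (mul_nonneg hNSb.1 h2)
    have := hg (self_mem_Ici) ht ht
    simp only [mul_zero, Real.exp_zero, mul_one, hNSinit] at this
    nlinarith [Real.exp_pos (a * t), hNS0.1]
  -- 1 - MS is positive: (1 - MS t) * exp((a-b) t) is monotone
  have hMSlt1 : ∀ t ∈ Ici (0:ℝ), MS t < 1 := by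
    intro t ht
    have hg : MonotoneOn (fun t => (1 - MS t) * Real.exp ((a - b) * t)) (Ici 0) := by
      apply monotoneOn_of_hasDerivWithinAt_nonneg (convex_Ici 0)
        ((continuousOn_const.sub hMScont).mul
          (Real.continuous_exp.comp (continuous_const.mul continuous_id)).continuousOn)
        (f' := fun t => Real.exp ((a - b) * t) *
          ((a - b) * (1 - MS t) * (1 - NI t * MI t * MS t)))
      · intro s hs
        rw [hint] at hs ⊢
        have hexp : HasDerivAt (fun s : ℝ => Real.exp ((a - b) * s))
            (Real.exp ((a - b) * s) * (a - b)) s := by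
          have h1 : HasDerivAt (fun s : ℝ => (a - b) * s) (a - b) s := by
            simpa using (hasDerivAt_id s).const_mul (a - b)
          exact h1.exp
        have := ((hasDerivWithinAt_const s (Ioi 0) (1:ℝ)).sub
          ((hdMS s (mem_Ici.2 (mem_Ioi.1 hs).le)).mono Ioi_subset_Ici_self)).mul hexp.hasDerivWithinAt
        convert this using 1
        · rfl
        · rfl
        · rfl
        simp only [Pi.sub_apply]
        ring
      · intro s hs
        rw [hint] at hs
        obtain ⟨hNSb, hNIb, hMSb, hMIb, _⟩ := hbnd s (mem_Ici.2 (mem_Ioi.1 hs).le)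
        have h1 : 0 ≤ 1 - MS s := by linarith [hMSb.2]
        have hx1 : NI s * MI s * MS s ≤ 1 :=
          mul_le_one₀ (mul_le_one₀ hNIb.2 hMIb.1 hMIb.2) hMSb.1 hMSb.2
        exact mul_nonneg (Real.exp_pos _).le
          (mul_nonneg (mul_nonneg hab.le h1) (by linarith))
    have := hg (self_mem_Ici) ht ht
    simp only [mul_zero, Real.exp_zero, mul_one, hMSinit] at this
    nlinarith [Real.exp_pos ((a - b) * t), hMS0.2]
  -- the first integral
  intro t ht
  refine ⟨⟨hMSpos t ht, hMSlt1 t ht⟩, ?_⟩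
  have hconst := constant_of_has_deriv_right_zero
    (f := fun s => NS s * MS s ^ p * (1 - MS s) ^ (1 - p)) (a := 0) (b := t)
    (by
      apply ContinuousOn.mul
      · apply ContinuousOn.mul (hNScont.mono (Icc_subset_Ici_self))
        exact ((hMScont.mono (Icc_subset_Ici_self)).rpow_const
          (fun s hs => Or.inl (hMSpos s hs.1).ne'))
      · exact ((continuousOn_const.sub (hMScont.mono (Icc_subset_Ici_self))).rpow_const
          (fun s hs => Or.inl (by linarith [hMSlt1 s hs.1] : 1 - MS s ≠ 0)))
      )
    (by
      intro x hx
      have hx0 : x ∈ Ici (0:ℝ) := hx.1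
      have hsub : Ici x ⊆ Ici (0:ℝ) := Ici_subset_Ici.2 hx.1
      have hm : 0 < MS x := hMSpos x hx0
      have hs1 : 0 < 1 - MS x := by linarith [hMSlt1 x hx0]
      have hNS' := (hdNS x hx0).mono hsub
      have hMS' := (hdMS x hx0).mono hsub
      have h1 : HasDerivWithinAt (fun s => MS s ^ p)
          (NI x * MI x * (a - b) * (1 - MS x) * MS x * p * MS x ^ (p - 1)) (Ici x) x :=
        hMS'.rpow_const (Or.inl hm.ne')
      have h2 : HasDerivWithinAt (fun s => (1 - MS s) ^ (1 - p))
          ((0 - NI x * MI x * (a - b) * (1 - MS x) * MS x) * (1 - p) *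
            (1 - MS x) ^ (1 - p - 1)) (Ici x) x :=
        ((hasDerivWithinAt_const x (Ici x) (1:ℝ)).sub hMS').rpow_const (Or.inl hs1.ne')
      have hD := (hNS'.mul h1).mul h2
      have hMrw : MS x ^ p = MS x ^ (p - 1) * MS x := by
        rw [← Real.rpow_add_one hm.ne' (p - 1)]; ring_nf
      have hSrw : (1 - MS x) ^ (1 - p) = (1 - MS x) ^ (1 - p - 1) * (1 - MS x) := by
        rw [← Real.rpow_add_one hs1.ne' (1 - p - 1)]; ring_nf
      convert hD using 1
      · rfl
      · rfl
      simp only [Pi.mul_apply]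
      rw [hMrw, hSrw]
      linear_combination (-(NI x * MI x * NS x * MS x * (1 - MS x) *
        MS x ^ (p - 1) * (1 - MS x) ^ (1 - p - 1))) * hpab
      )
  have := hconst t ⟨ht, le_refl t⟩
  simp only [hNSinit, hMSinit] at this
  exact this
end

section
/- Conservation of the product N_S M_S when q(1,1) = 0 (equation (3.18) in the proof of Proposition 3.5): Assume b = 0 and 0 < a ≤ 1. Then the solution of the macroscopic Dirac ODE system satisfies N_S(t) · M_S(t) = N_{S,0} · M_{S,0} for all t ≥ 0. -/
open Set Filter

/-- Conservation of the product `N_S M_S` when `q(1,1) = 0` (equation (3.18) in the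
proof of Proposition 3.5). -/
theorem conservation_NSMS
    (a b A B NS0 MS0 MI0 : ℝ)
    (ha0 : 0 ≤ a) (ha1 : a ≤ 1) (hb0 : 0 ≤ b) (hb1 : b ≤ 1)
    (hA0 : 0 < A) (hA1 : A ≤ 1) (hB0 : 0 < B) (hB1 : B ≤ 1)
    (NS NI MS MI : ℝ → ℝ)
    (hNSinit : NS 0 = NS0) (hNS0 : NS0 ∈ Ioo (0:ℝ) 1)
    (hNIinit : NI 0 = 1 - NS0)
    (hMSinit : MS 0 = MS0) (hMS0 : MS0 ∈ Ioo (0:ℝ) 1)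
    (hMIinit : MI 0 = MI0) (hMI0 : MI0 ∈ Ioo (0:ℝ) 1)
    (hdNS : ∀ t ∈ Ici (0:ℝ), HasDerivWithinAt NS
      (-(NS t * NI t * MI t * (a * (1 - MS t) + b * MS t))) (Ici 0) t)
    (hdNI : ∀ t ∈ Ici (0:ℝ), HasDerivWithinAt NI
      (NS t * NI t * MI t * (a * (1 - MS t) + b * MS t)) (Ici 0) t)
    (hdMS : ∀ t ∈ Ici (0:ℝ), HasDerivWithinAt MS
      (NI t * MI t * (a - b) * (1 - MS t) * MS t) (Ici 0) t)
    (hdMI : ∀ t ∈ Ici (0:ℝ), HasDerivWithinAt MI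
      (NS t * MI t * (A * a * (1 - MS t) + B * b * MS t
        - MI t * (a * (1 - MS t) + b * MS t))) (Ici 0) t)
    (hbnd : ∀ t ∈ Ici (0:ℝ), NS t ∈ Icc (0:ℝ) 1 ∧ NI t ∈ Icc (0:ℝ) 1 ∧
      MS t ∈ Icc (0:ℝ) 1 ∧ MI t ∈ Icc (0:ℝ) 1 ∧ NS t + NI t = 1)
    (hb : b = 0) (hapos : 0 < a)
    : ∀ t ∈ Ici (0:ℝ), NS t * MS t = NS0 * MS0 := by
  subst hb
  have hP : ∀ t ∈ Ici (0:ℝ), HasDerivWithinAt (fun s => NS s * MS s) 0 (Ici 0) t := by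
    intro t ht
    have : HasDerivWithinAt (fun s => NS s * MS s) _ (Ici 0) t := (hdNS t ht).mul (hdMS t ht)
    convert this using 1
    ring
  intro t ht
  have hcont : ContinuousOn (fun s => NS s * MS s) (Icc 0 t) :=
    fun x hx => ((hP x (Icc_subset_Ici_self hx)).continuousWithinAt).mono
      (Icc_subset_Ici_self)
  have := constant_of_has_deriv_right_zero hcont
    (fun x hx => (hP x (Ico_subset_Ici_self hx)).mono (Ici_subset_Ici.2 hx.1)) t
    (by exact ⟨ht, le_refl t⟩)
  simpa [hNSinit, hMSinit] using this
end

section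
/- Conserved quantity relating M_I and M_S when q(1,1) = 0 (intermediate claim in the proof of Proposition 3.5): Assume b = 0 and 0 < a ≤ 1. Then the solution of the macroscopic Dirac ODE system satisfies, for all t ≥ 0: M_S(t) > 0, the sign of (A - M_I(t)) equals the sign of (A - M_{I,0}), and (A - M_I(t)) · (M_S(t) - M_{S,0} N_{S,0}) = (A - M_{I,0}) · (1 - N_{S,0}) · M_S(t). -/
open Set Filter

/-- A function with right-derivative zero on `Ici 0` is constant there. -/
lemma const_of_deriv_zero_Ici (f : ℝ → ℝ)
    (hf : ∀ s ∈ Ici (0:ℝ), HasDerivWithinAt f 0 (Ici 0) s)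
    {t : ℝ} (ht : 0 ≤ t) : f t = f 0 := by
  have hcont : ContinuousOn f (Icc 0 t) := fun s hs =>
    ((hf s hs.1).continuousWithinAt).mono Icc_subset_Ici_self
  exact constant_of_has_deriv_right_zero hcont
    (fun y hy => (hf y hy.1).mono (Ici_subset_Ici.mpr hy.1)) t ⟨ht, le_rfl⟩

/-- Conserved quantity relating `M_I` and `M_S` when `q(1,1) = 0` (intermediate claim
in the proof of Proposition 3.5). -/
theorem conserved_MI_MS
    (a b A B NS0 MS0 MI0 : ℝ)
    (ha0 : 0 ≤ a) (ha1 : a ≤ 1) (hb0 : 0 ≤ b) (hb1 : b ≤ 1)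
    (hA0 : 0 < A) (hA1 : A ≤ 1) (hB0 : 0 < B) (hB1 : B ≤ 1)
    (NS NI MS MI : ℝ → ℝ)
    (hNSinit : NS 0 = NS0) (hNS0 : NS0 ∈ Ioo (0:ℝ) 1)
    (hNIinit : NI 0 = 1 - NS0)
    (hMSinit : MS 0 = MS0) (hMS0 : MS0 ∈ Ioo (0:ℝ) 1)
    (hMIinit : MI 0 = MI0) (hMI0 : MI0 ∈ Ioo (0:ℝ) 1)
    (hdNS : ∀ t ∈ Ici (0:ℝ), HasDerivWithinAt NS
      (-(NS t * NI t * MI t * (a * (1 - MS t) + b * MS t))) (Ici 0) t)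
    (hdNI : ∀ t ∈ Ici (0:ℝ), HasDerivWithinAt NI
      (NS t * NI t * MI t * (a * (1 - MS t) + b * MS t)) (Ici 0) t)
    (hdMS : ∀ t ∈ Ici (0:ℝ), HasDerivWithinAt MS
      (NI t * MI t * (a - b) * (1 - MS t) * MS t) (Ici 0) t)
    (hdMI : ∀ t ∈ Ici (0:ℝ), HasDerivWithinAt MI
      (NS t * MI t * (A * a * (1 - MS t) + B * b * MS t
        - MI t * (a * (1 - MS t) + b * MS t))) (Ici 0) t)
    (hbnd : ∀ t ∈ Ici (0:ℝ), NS t ∈ Icc (0:ℝ) 1 ∧ NI t ∈ Icc (0:ℝ) 1 ∧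
      MS t ∈ Icc (0:ℝ) 1 ∧ MI t ∈ Icc (0:ℝ) 1 ∧ NS t + NI t = 1)
    (hb : b = 0) (hapos : 0 < a)
    : ∀ t ∈ Ici (0:ℝ), 0 < MS t ∧
      Real.sign (A - MI t) = Real.sign (A - MI0) ∧
      (A - MI t) * (MS t - MS0 * NS0) = (A - MI0) * (1 - NS0) * MS t := by
  subst hb
  -- MS * NS is conserved
  have hg : ∀ s ∈ Ici (0:ℝ), HasDerivWithinAt (fun s => MS s * NS s) 0 (Ici 0) s := by
    intro s hs
    have := (hdMS s hs).mul (hdNS s hs)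
    refine this.congr_deriv ?_
    ring
  -- (A - MI) * NI is conserved
  have hh : ∀ s ∈ Ici (0:ℝ), HasDerivWithinAt (fun s => (A - MI s) * NI s) 0 (Ici 0) s := by
    intro s hs
    have := ((hasDerivWithinAt_const s (Ici (0:ℝ)) A).sub (hdMI s hs)).mul (hdNI s hs)
    refine this.congr_deriv ?_
    simp only [Pi.sub_apply]
    ring
  -- NI is monotone (nondecreasing)
  have hmono : MonotoneOn NI (Ici (0:ℝ)) := by
    apply monotoneOn_of_hasDerivWithinAt_nonneg (convex_Ici 0)
      (f' := fun s => NS s * NI s * MI s * (a * (1 - MS s) + 0 * MS s))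
    · exact fun s hs => (hdNI s hs).continuousWithinAt
    · intro s hs
      simp only [interior_Ici] at hs ⊢
      exact (hdNI s (mem_Ici.mpr (le_of_lt (mem_Ioi.mp hs)))).mono Ioi_subset_Ici_self
    · intro s hs
      rw [interior_Ici] at hs
      obtain ⟨hNSb, hNIb, hMSb, hMIb, _⟩ := hbnd s (mem_Ici.mpr (le_of_lt (mem_Ioi.mp hs)))
      have h1 : (0:ℝ) ≤ a * (1 - MS s) + 0 * MS s := by nlinarith [hMSb.2]
      have := mul_nonneg (mul_nonneg (mul_nonneg hNSb.1 hNIb.1) hMIb.1) h1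
      exact this
  intro t ht
  have key1 : MS t * NS t = MS0 * NS0 := by
    have := const_of_deriv_zero_Ici _ hg ht
    simpa [hMSinit, hNSinit] using this
  have key2 : (A - MI t) * NI t = (A - MI0) * (1 - NS0) := by
    have := const_of_deriv_zero_Ici _ hh ht
    simpa [hMIinit, hNIinit] using this
  obtain ⟨hNSb, hNIb, hMSb, hMIb, hsum⟩ := hbnd t ht
  have hNIpos : 0 < NI t := by
    have := hmono (self_mem_Ici) ht ht
    rw [hNIinit] at this
    linarith [hNS0.2]
  have hMSpos : 0 < MS t := by
    have h1 : 0 < MS0 * NS0 := mul_pos hMS0.1 hNS0.1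
    have h2 : MS t * NS t ≤ MS t := mul_le_of_le_one_right hMSb.1 hNSb.2
    linarith [key1 ▸ h1]
  refine ⟨hMSpos, ?_, ?_⟩
  · -- sign claim
    have hNS0' : 0 < 1 - NS0 := by linarith [hNS0.2]
    rcases lt_trichotomy (A - MI0) 0 with hcase | hcase | hcase
    · have hneg : A - MI t < 0 := by nlinarith
      rw [Real.sign_of_neg hneg, Real.sign_of_neg hcase]
    · have hz : A - MI t = 0 := by
        have : (A - MI t) * NI t = 0 := by rw [key2, hcase]; ring
        exact (mul_eq_zero.mp this).resolve_right (ne_of_gt hNIpos)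
      rw [hz, ← hcase]
    · have hpos : 0 < A - MI t := by nlinarith
      rw [Real.sign_of_pos hpos, Real.sign_of_pos hcase]
  · linear_combination (A - MI t) * key1 + MS t * key2 - (A - MI t) * MS t * hsum
end

section
/- Linear conserved quantity when q(0,1) = q(1,1) = q* > 0 (intermediate claim in the proof of Proposition 3.6): Assume a = b = q* with 0 < q* ≤ 1, and set C := A (1 - M_{S,0}) + B M_{S,0}. Then the solution of the macroscopic Dirac ODE system satisfies, for all t ≥ 0: N_I(t) · M_I(t) + C · N_S(t) = (1 - N_{S,0}) · M_{I,0} + C · N_{S,0}. -/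
open Set Filter

/-- Linear conserved quantity when `q(0,1) = q(1,1) = q* > 0` (intermediate claim in
the proof of Proposition 3.6), with `C = A(1 - M_{S,0}) + B M_{S,0}`. -/
theorem linear_conserved
    (a b A B NS0 MS0 MI0 : ℝ)
    (ha0 : 0 ≤ a) (ha1 : a ≤ 1) (hb0 : 0 ≤ b) (hb1 : b ≤ 1)
    (hA0 : 0 < A) (hA1 : A ≤ 1) (hB0 : 0 < B) (hB1 : B ≤ 1)
    (NS NI MS MI : ℝ → ℝ)
    (hNSinit : NS 0 = NS0) (hNS0 : NS0 ∈ Ioo (0:ℝ) 1)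
    (hNIinit : NI 0 = 1 - NS0)
    (hMSinit : MS 0 = MS0) (hMS0 : MS0 ∈ Ioo (0:ℝ) 1)
    (hMIinit : MI 0 = MI0) (hMI0 : MI0 ∈ Ioo (0:ℝ) 1)
    (hdNS : ∀ t ∈ Ici (0:ℝ), HasDerivWithinAt NS
      (-(NS t * NI t * MI t * (a * (1 - MS t) + b * MS t))) (Ici 0) t)
    (hdNI : ∀ t ∈ Ici (0:ℝ), HasDerivWithinAt NI
      (NS t * NI t * MI t * (a * (1 - MS t) + b * MS t)) (Ici 0) t)
    (hdMS : ∀ t ∈ Ici (0:ℝ), HasDerivWithinAt MS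
      (NI t * MI t * (a - b) * (1 - MS t) * MS t) (Ici 0) t)
    (hdMI : ∀ t ∈ Ici (0:ℝ), HasDerivWithinAt MI
      (NS t * MI t * (A * a * (1 - MS t) + B * b * MS t
        - MI t * (a * (1 - MS t) + b * MS t))) (Ici 0) t)
    (hbnd : ∀ t ∈ Ici (0:ℝ), NS t ∈ Icc (0:ℝ) 1 ∧ NI t ∈ Icc (0:ℝ) 1 ∧
      MS t ∈ Icc (0:ℝ) 1 ∧ MI t ∈ Icc (0:ℝ) 1 ∧ NS t + NI t = 1)
    (hab : a = b) (hapos : 0 < a)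
    : ∀ t ∈ Ici (0:ℝ),
      NI t * MI t + (A * (1 - MS0) + B * MS0) * NS t
        = (1 - NS0) * MI0 + (A * (1 - MS0) + B * MS0) * NS0 := by
  subst hab
  set C : ℝ := A * (1 - MS0) + B * MS0 with hC
  -- MS is constant
  have hMSconst : ∀ t ∈ Ici (0:ℝ), MS t = MS0 := by
    intro t ht
    have h := constant_of_has_deriv_right_zero (f := MS) (a := 0) (b := t)
      (fun x hx => ((hdMS x hx.1).continuousWithinAt).mono (fun y hy => hy.1))
      (fun x hx => by
        have := (hdMS x hx.1).mono (Ici_subset_Ici.2 hx.1)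
        simpa using this)
    rw [h t ⟨ht, le_rfl⟩, hMSinit]
  -- conserved quantity
  set F : ℝ → ℝ := fun t => NI t * MI t + C * NS t with hF
  have hdF : ∀ t ∈ Ici (0:ℝ), HasDerivWithinAt F 0 (Ici 0) t := by
    intro t ht
    have h := ((hdNI t ht).mul (hdMI t ht)).add ((hdNS t ht).const_mul C)
    refine h.congr_deriv ?_
    rw [hMSconst t ht, hC]
    ring
  intro t ht
  have h := constant_of_has_deriv_right_zero (f := F) (a := 0) (b := t)
    (fun x hx => ((hdF x hx.1).continuousWithinAt).mono (fun y hy => hy.1))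
    (fun x hx => (hdF x hx.1).mono (Ici_subset_Ici.2 hx.1))
  have := h t ⟨ht, le_rfl⟩
  simpa [hF, hNSinit, hNIinit, hMIinit] using this
end

section
/- Long-time behaviour of the reduced macroscopic model, epidemic case (Proposition D.1, part (i)): Assume 0 ≤ μ_S < 1 and 0 < μ_I ≤ 1. Then the solution of the reduced macroscopic ODE system satisfies N_S(t) → 0 and N_I(t) → 1 as t → ∞. -/
open Set Filter

/-- If `f` has derivative `f' ≥ ε` on `Ici 0`, then `f s + ε (t - s) ≤ f t`. -/
lemma grow_aux (f f' : ℝ → ℝ) (ε : ℝ)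
    (hd : ∀ t ∈ Ici (0:ℝ), HasDerivWithinAt f (f' t) (Ici 0) t)
    (hε : ∀ t ∈ Ici (0:ℝ), ε ≤ f' t) :
    ∀ s ∈ Ici (0:ℝ), ∀ t ∈ Ici (0:ℝ), s ≤ t → f s + ε * (t - s) ≤ f t := by
  intro s hs t ht hst
  have hmono : MonotoneOn (fun x => f x - ε * x) (Ici (0:ℝ)) := by
    apply monotoneOn_of_deriv_nonneg (convex_Ici 0)
    · exact fun x hx =>
        ((hd x hx).sub ((hasDerivWithinAt_id x (Ici 0)).const_mul ε)).continuousWithinAt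
    · intro x hx
      rw [interior_Ici] at hx
      have hxd : HasDerivAt (fun y => f y - ε * y) (f' x - ε * 1) x := by
        exact ((hd x (mem_Ici.mpr (le_of_lt (mem_Ioi.mp hx)))).sub
          ((hasDerivWithinAt_id x (Ici 0)).const_mul ε)).hasDerivAt (Ici_mem_nhds hx)
      exact hxd.differentiableAt.differentiableWithinAt
    · intro x hx
      rw [interior_Ici] at hx
      have hxd : HasDerivAt (fun y => f y - ε * y) (f' x - ε * 1) x := by
        exact ((hd x (mem_Ici.mpr (le_of_lt (mem_Ioi.mp hx)))).sub
          ((hasDerivWithinAt_id x (Ici 0)).const_mul ε)).hasDerivAt (Ici_mem_nhds hx)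
      rw [hxd.deriv]
      have := hε x (mem_Ici.mpr (le_of_lt (mem_Ioi.mp hx)))
      linarith
  have := hmono hs ht hst
  simp only at this
  linarith

/-- **Proposition D.1, part (i)**: long-time behaviour of the reduced macroscopic
model in the epidemic case `0 ≤ μ_S < 1`, `0 < μ_I ≤ 1`. -/
theorem reduced_longtime_epidemic
    (μS μI NS0 : ℝ)
    (hμS : μS ∈ Icc (0:ℝ) 1) (hμI : μI ∈ Icc (0:ℝ) 1)
    (NS NI : ℝ → ℝ)
    (hNS0 : NS0 ∈ Ioo (0:ℝ) 1) (hNSinit : NS 0 = NS0) (hNIinit : NI 0 = 1 - NS0)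
    (hdNS : ∀ t ∈ Ici (0:ℝ), HasDerivWithinAt NS
      (-(μI * NI t * (1 - μS) * NS t)) (Ici 0) t)
    (hdNI : ∀ t ∈ Ici (0:ℝ), HasDerivWithinAt NI
      ((1 - μS) * NS t * (μI * NI t)) (Ici 0) t)
    (hbnd : ∀ t ∈ Ici (0:ℝ), NS t ∈ Icc (0:ℝ) 1 ∧ NI t ∈ Icc (0:ℝ) 1 ∧ NS t + NI t = 1)
    (hμS1 : μS < 1) (hμIpos : 0 < μI)
    : Tendsto NS atTop (nhds 0) ∧ Tendsto NI atTop (nhds 1) := by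
  obtain ⟨hNS0pos, hNS0lt⟩ := hNS0
  -- NI is monotone on Ici 0
  have hmono : ∀ s ∈ Ici (0:ℝ), ∀ t ∈ Ici (0:ℝ), s ≤ t → NI s ≤ NI t := by
    intro s hs t ht hst
    have := grow_aux NI (fun t => (1 - μS) * NS t * (μI * NI t)) 0 hdNI
      (fun t ht => by
        have h1 := (hbnd t ht).1.1
        have h2 := (hbnd t ht).2.1.1
        have h3 : (0:ℝ) ≤ 1 - μS := by linarith
        exact mul_nonneg (mul_nonneg h3 h1) (mul_nonneg hμIpos.le h2)) s hs t ht hst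
    linarith
  -- auxiliary monotone extension
  set g : ℝ → ℝ := fun t => NI (max t 0) with hg
  have hgmono : Monotone g := fun a b hab =>
    hmono _ (mem_Ici.mpr (le_max_right _ _)) _ (mem_Ici.mpr (le_max_right _ _))
      (max_le_max hab le_rfl)
  have hgbdd : BddAbove (Set.range g) := by
    refine ⟨1, ?_⟩
    rintro x ⟨t, rfl⟩
    exact (hbnd _ (mem_Ici.mpr (le_max_right _ _))).2.1.2
  set L : ℝ := ⨆ t, g t with hL
  have hgL : Tendsto g atTop (nhds L) := tendsto_atTop_ciSup hgmono hgbdd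
  have hle : ∀ t ∈ Ici (0:ℝ), NI t ≤ L := by
    intro t ht
    have h : g t ≤ L := le_ciSup hgbdd t
    simpa [hg, max_eq_left (mem_Ici.mp ht)] using h
  have hL1 : L ≤ 1 := ciSup_le fun t => (hbnd _ (mem_Ici.mpr (le_max_right _ _))).2.1.2
  -- show L = 1 by contradiction
  have hLeq : L = 1 := by
    by_contra hne
    have hLlt : L < 1 := lt_of_le_of_ne hL1 hne
    set ε : ℝ := (1 - μS) * (1 - L) * (μI * (1 - NS0)) with hε
    have hεpos : 0 < ε := by
      apply mul_pos (mul_pos (by linarith) (by linarith)) (mul_pos hμIpos (by linarith))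
    have hder : ∀ t ∈ Ici (0:ℝ), ε ≤ (1 - μS) * NS t * (μI * NI t) := by
      intro t ht
      have hNSge : 1 - L ≤ NS t := by
        have := (hbnd t ht).2.2
        have := hle t ht
        linarith
      have hNIge : 1 - NS0 ≤ NI t := by
        have := hmono 0 (mem_Ici.mpr le_rfl) t ht (mem_Ici.mp ht)
        linarith [hNIinit]
      have h1 : (0:ℝ) < 1 - μS := by linarith
      have h2 : (0:ℝ) < 1 - L := by linarith
      have h3 : (0:ℝ) < 1 - NS0 := by linarith
      rw [hε]
      have h4 : μI * (1 - NS0) ≤ μI * NI t := by nlinarith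
      have h5 : (1 - μS) * (1 - L) ≤ (1 - μS) * NS t := by nlinarith
      have h6 : (0:ℝ) ≤ (1 - μS) * (1 - L) := by positivity
      have h7 : (0:ℝ) ≤ μI * NI t := by nlinarith
      nlinarith
    have hgrow := grow_aux NI (fun t => (1 - μS) * NS t * (μI * NI t)) ε hdNI hder
    have h2e : (0:ℝ) ≤ 2 / ε := by positivity
    have := hgrow 0 (mem_Ici.mpr le_rfl) (2 / ε) (mem_Ici.mpr h2e) h2e
    have hεt : ε * (2 / ε - 0) = 2 := by
      field_simp
      ring
    rw [hεt] at this
    have hub := (hbnd (2 / ε) (mem_Ici.mpr h2e)).2.1.2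
    have hlb : 0 ≤ NI 0 := (hbnd 0 (mem_Ici.mpr le_rfl)).2.1.1
    linarith
  -- conclude
  have hgNI : g =ᶠ[atTop] NI := by
    filter_upwards [eventually_ge_atTop (0:ℝ)] with t ht
    simp [hg, max_eq_left ht]
  have hNItend : Tendsto NI atTop (nhds 1) := by
    rw [← hLeq]
    exact hgL.congr' hgNI
  refine ⟨?_, hNItend⟩
  have : Tendsto (fun t => 1 - NI t) atTop (nhds 0) := by
    have := hNItend.const_sub 1
    simpa using this
  apply this.congr'
  filter_upwards [eventually_ge_atTop (0:ℝ)] with t ht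
  have := (hbnd t ht).2.2
  linarith
end
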